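/- arXiv:2203.06417 — 8 statements merged into one kernel-verified Lean document; each statement's English description precedes it below -/
import Mathlib

section
/- Let R ⊆ X_n = {1,…,n} be a nonempty set with |R| = p and max R − min R = q. Then the number of order-preserving partial injective contractions α of X_n with im α = R equals C(n−q+p−1, p). -/
/-- `f` is a partial injective transformation (injectivity on its domain). -/
def PInj {n : ℕ} (f : Fin n → Option (Fin n)) : Prop :=
  ∀ x y a, f x = some a → f y = some a → x = y

/-- `f` is a contraction: `|xα - yα| ≤ |x - y|` for all `x, y` in the domain. -/
def Contr {n : ℕ} (f : Fin n → Option (Fin n)) : Prop :=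
  ∀ x y a b, f x = some a → f y = some b →
    |(a.val : ℤ) - (b.val : ℤ)| ≤ |(x.val : ℤ) - (y.val : ℤ)|

/-- `f` is order-preserving on its domain. -/
def OrdPres {n : ℕ} (f : Fin n → Option (Fin n)) : Prop :=
  ∀ x y a b, f x = some a → f y = some b → x ≤ y → a ≤ b

/-- `f` is order-reversing on its domain. -/
def OrdRev {n : ℕ} (f : Fin n → Option (Fin n)) : Prop :=
  ∀ x y a b, f x = some a → f y = some b → x ≤ y → b ≤ a

/-- `f` is order-decreasing on its domain. -/
def OrdDecr {n : ℕ} (f : Fin n → Option (Fin n)) : Prop :=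
  ∀ x a, f x = some a → a ≤ x

/-- The image set of the partial map `f`. -/
def pim {n : ℕ} (f : Fin n → Option (Fin n)) : Finset (Fin n) :=
  Finset.univ.filter (fun b => ∃ x, f x = some b)

/-- The domain set of the partial map `f`. -/
def pdom {n : ℕ} (f : Fin n → Option (Fin n)) : Finset (Fin n) :=
  Finset.univ.filter (fun x => (f x).isSome)

/-- The height (rank) of the partial map `f`: the size of its image. -/
def pheight {n : ℕ} (f : Fin n → Option (Fin n)) : ℕ := (pim f).card

/-- The number of fixed points of the partial map `f`. -/
def pfix {n : ℕ} (f : Fin n → Option (Fin n)) : ℕ :=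
  (Finset.univ.filter (fun x => f x = some x)).card

lemma mem_pdom {n : ℕ} {f : Fin n → Option (Fin n)} {x : Fin n} :
    x ∈ pdom f ↔ (f x).isSome := by simp [pdom]

lemma mem_pim {n : ℕ} {f : Fin n → Option (Fin n)} {b : Fin n} :
    b ∈ pim f ↔ ∃ x, f x = some b := by simp [pim]

/-- the canonical order-preserving partial injection with domain `D` and image `R`. -/
def mkf {n p : ℕ} (R D : Finset (Fin n)) (hcard : R.card = p) (hD : D.card = p) :
    Fin n → Option (Fin n) :=
  fun x => if h : x ∈ D then some (R.orderEmbOfFin hcard ((D.orderIsoOfFin hD).symm ⟨x, h⟩))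
    else none

lemma orderEmb_symm {n p : ℕ} (D : Finset (Fin n)) (hD : D.card = p) (x : Fin n) (h : x ∈ D) :
    D.orderEmbOfFin hD ((D.orderIsoOfFin hD).symm ⟨x, h⟩) = x := by
  have h2 := (D.orderIsoOfFin hD).apply_symm_apply ⟨x, h⟩
  calc D.orderEmbOfFin hD ((D.orderIsoOfFin hD).symm ⟨x, h⟩)
      = ((D.orderIsoOfFin hD) ((D.orderIsoOfFin hD).symm ⟨x, h⟩) : Fin n) :=
        (D.coe_orderIsoOfFin_apply hD _).symm
    _ = x := by rw [h2]

lemma mkf_spec {n p : ℕ} {R D : Finset (Fin n)} (hcard : R.card = p) (hD : D.card = p)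
    (x a : Fin n) :
    mkf R D hcard hD x = some a ↔
      ∃ i : Fin p, D.orderEmbOfFin hD i = x ∧ R.orderEmbOfFin hcard i = a := by
  unfold mkf
  by_cases h : x ∈ D
  · rw [dif_pos h]
    constructor
    · intro h'
      injection h' with h'
      exact ⟨(D.orderIsoOfFin hD).symm ⟨x, h⟩, orderEmb_symm D hD x h, h'⟩
    · rintro ⟨i, hix, hia⟩
      have h2 : D.orderEmbOfFin hD ((D.orderIsoOfFin hD).symm ⟨x, h⟩) = x := orderEmb_symm D hD x h
      have h3 : i = (D.orderIsoOfFin hD).symm ⟨x, h⟩ :=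
        (D.orderEmbOfFin hD).injective (hix.trans h2.symm)
      rw [← hia, h3]
  · rw [dif_neg h]
    constructor
    · intro h'; cases h'
    · rintro ⟨i, hix, _⟩; exact absurd (hix ▸ D.orderEmbOfFin_mem hD i) h

lemma mkf_pinj {n p : ℕ} {R D : Finset (Fin n)} (hcard : R.card = p) (hD : D.card = p) :
    PInj (mkf R D hcard hD) := by
  intro x y a hx hy
  obtain ⟨i, hix, hia⟩ := (mkf_spec hcard hD x a).mp hx
  obtain ⟨j, hjy, hja⟩ := (mkf_spec hcard hD y a).mp hy
  have : i = j := (R.orderEmbOfFin hcard).injective (hia.trans hja.symm)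
  rw [← hix, ← hjy, this]

lemma mkf_ordpres {n p : ℕ} {R D : Finset (Fin n)} (hcard : R.card = p) (hD : D.card = p) :
    OrdPres (mkf R D hcard hD) := by
  intro x y a b hx hy hxy
  obtain ⟨i, hix, hia⟩ := (mkf_spec hcard hD x a).mp hx
  obtain ⟨j, hjy, hjb⟩ := (mkf_spec hcard hD y b).mp hy
  have hij : i ≤ j := (D.orderEmbOfFin hD).le_iff_le.mp (by rw [hix, hjy]; exact hxy)
  rw [← hia, ← hjb]
  exact (R.orderEmbOfFin hcard).monotone hij

lemma mkf_pim {n p : ℕ} {R D : Finset (Fin n)} (hcard : R.card = p) (hD : D.card = p) :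
    pim (mkf R D hcard hD) = R := by
  ext b
  rw [mem_pim]
  constructor
  · rintro ⟨x, hx⟩
    obtain ⟨i, _, hib⟩ := (mkf_spec hcard hD x b).mp hx
    exact hib ▸ R.orderEmbOfFin_mem hcard i
  · intro hb
    have : b ∈ Set.range (R.orderEmbOfFin hcard) := by
      rw [Finset.range_orderEmbOfFin]; exact hb
    obtain ⟨i, hi⟩ := this
    exact ⟨D.orderEmbOfFin hD i, (mkf_spec hcard hD _ b).mpr ⟨i, rfl, hi⟩⟩

lemma mkf_pdom {n p : ℕ} {R D : Finset (Fin n)} (hcard : R.card = p) (hD : D.card = p) :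
    pdom (mkf R D hcard hD) = D := by
  ext x
  rw [mem_pdom]
  unfold mkf
  by_cases h : x ∈ D <;> simp [h]

lemma mkf_contr {n p : ℕ} {R D : Finset (Fin n)} (hcard : R.card = p) (hD : D.card = p)
    (hGood : ∀ i j : Fin p, i ≤ j →
      ((R.orderEmbOfFin hcard j).val : ℤ) - (R.orderEmbOfFin hcard i).val ≤
      ((D.orderEmbOfFin hD j).val : ℤ) - (D.orderEmbOfFin hD i).val) :
    Contr (mkf R D hcard hD) := by
  have key : ∀ i j : Fin p, i ≤ j →
      |((R.orderEmbOfFin hcard i).val : ℤ) - (R.orderEmbOfFin hcard j).val| ≤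
      |((D.orderEmbOfFin hD i).val : ℤ) - (D.orderEmbOfFin hD j).val| := by
    intro i j hij
    have h1 := hGood i j hij
    have h2 : (R.orderEmbOfFin hcard i).val ≤ (R.orderEmbOfFin hcard j).val :=
      (R.orderEmbOfFin hcard).monotone hij
    have h3 : (D.orderEmbOfFin hD i).val ≤ (D.orderEmbOfFin hD j).val :=
      (D.orderEmbOfFin hD).monotone hij
    have e1 : |((R.orderEmbOfFin hcard i).val : ℤ) - (R.orderEmbOfFin hcard j).val| =
        ((R.orderEmbOfFin hcard j).val : ℤ) - (R.orderEmbOfFin hcard i).val := by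
      rw [abs_sub_comm, abs_of_nonneg (by omega)]
    have e2 : |((D.orderEmbOfFin hD i).val : ℤ) - (D.orderEmbOfFin hD j).val| =
        ((D.orderEmbOfFin hD j).val : ℤ) - (D.orderEmbOfFin hD i).val := by
      rw [abs_sub_comm, abs_of_nonneg (by omega)]
    rw [e1, e2]; omega
  intro x y a b hx hy
  obtain ⟨i, hix, hia⟩ := (mkf_spec hcard hD x a).mp hx
  obtain ⟨j, hjy, hjb⟩ := (mkf_spec hcard hD y b).mp hy
  subst hix hjy hia hjb
  rcases le_total i j with h | h
  · exact key i j h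
  · rw [abs_sub_comm ((R.orderEmbOfFin hcard i).val : ℤ),
      abs_sub_comm ((D.orderEmbOfFin hD i).val : ℤ)]
    exact key j i h


open Finset

lemma gain_aux {k n' : ℕ} {g : Fin k → Fin n'} (hg : StrictMono g) :
    ∀ (d : ℕ) (i : Fin k) (h : i.val + d < k), (g i).val + d ≤ (g ⟨i.val + d, h⟩).val := by
  intro d
  induction d with
  | zero => intro i h; simp
  | succ d ih =>
    intro i h
    have h' : i.val + d < k := by omega
    have h1 := ih i h'
    have h2 : g ⟨i.val + d, h'⟩ < g ⟨i.val + d + 1, by omega⟩ := by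
      apply hg; rw [Fin.lt_def]; simp
    rw [Fin.lt_def] at h2
    have he : (⟨i.val + (d + 1), h⟩ : Fin k) = ⟨i.val + d + 1, by omega⟩ := rfl
    rw [he]
    omega

lemma gain {k n' : ℕ} {g : Fin k → Fin n'} (hg : StrictMono g) (i j : Fin k) (hij : i ≤ j) :
    (g i).val + (j.val - i.val) ≤ (g j).val := by
  have hle : i.val ≤ j.val := hij
  have hjk := j.isLt
  have h : i.val + (j.val - i.val) < k := by omega
  have := gain_aux hg (j.val - i.val) i h
  have he : (⟨i.val + (j.val - i.val), h⟩ : Fin k) = j := Fin.ext (by simp; omega)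
  rwa [he] at this

lemma card_image_strictMono {m' p : ℕ} {u : Fin p → Fin m'} (hu : StrictMono u) :
    (Finset.image u Finset.univ).card = p := by
  rw [Finset.card_image_of_injective _ hu.injective, Finset.card_univ, Fintype.card_fin]

lemma orderEmbOfFin_image {m' p : ℕ} (u : Fin p → Fin m') (hu : StrictMono u)
    (h : (Finset.image u Finset.univ).card = p) :
    ⇑((Finset.image u Finset.univ).orderEmbOfFin h) = u :=
  (Finset.orderEmbOfFin_unique h (fun i => Finset.mem_image_of_mem _ (Finset.mem_univ i)) hu).symm

lemma image_orderEmbOfFin {α : Type*} [LinearOrder α] (D : Finset α) {p : ℕ} (hD : D.card = p) :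
    Finset.image (D.orderEmbOfFin hD) Finset.univ = D := by
  apply Finset.coe_injective
  rw [Finset.coe_image, Finset.coe_univ, Set.image_univ, Finset.range_orderEmbOfFin]

lemma orderEmbOfFin_congr {α : Type*} [LinearOrder α] {p : ℕ} (S1 S2 : Finset α)
    (h1 : S1.card = p) (h2 : S2.card = p) (h : S1 = S2) (i : Fin p) :
    S1.orderEmbOfFin h1 i = S2.orderEmbOfFin h2 i := by subst h; rfl

def GoodSet {n p : ℕ} (R : Finset (Fin n)) (hcard : R.card = p) (D : Finset (Fin n)) : Prop :=
  ∃ hD : D.card = p, ∀ i j : Fin p, i ≤ j →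
    ((R.orderEmbOfFin hcard j).val : ℤ) - (R.orderEmbOfFin hcard i).val ≤
    ((D.orderEmbOfFin hD j).val : ℤ) - (D.orderEmbOfFin hD i).val

lemma step2 {n p q : ℕ} (R : Finset (Fin n)) (hR : R.Nonempty) (hcard : R.card = p)
    (hq : (R.max' hR).val - (R.min' hR).val = q) :
    Nat.card {D : Finset (Fin n) // GoodSet R hcard D} =
      Nat.card {S : Finset (Fin (n - q + p - 1)) // S.card = p} := by

  have hp : 0 < p := hcard ▸ Finset.card_pos.mpr hR
  have hplast : p - 1 < p := by omega
  set m := n - q + p - 1 with hm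
  set r0 := (R.min' hR).val with hr0def
  have hrmono : StrictMono ⇑(R.orderEmbOfFin hcard) := (R.orderEmbOfFin hcard).strictMono
  have hr0 : (R.orderEmbOfFin hcard ⟨0, hp⟩).val = r0 :=
    congrArg Fin.val (Finset.orderEmbOfFin_zero hcard hp)
  have hminmax : r0 ≤ (R.max' hR).val := Fin.le_def.mp (R.min'_le _ (R.max'_mem hR))
  have hrlast : (R.orderEmbOfFin hcard ⟨p - 1, hplast⟩).val = r0 + q := by
    have h1 : R.orderEmbOfFin hcard ⟨p - 1, hplast⟩ = R.max' hR :=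
      Finset.orderEmbOfFin_last hcard hp
    have := congrArg Fin.val h1
    omega
  have hr_lb : ∀ i : Fin p, r0 ≤ (R.orderEmbOfFin hcard i).val :=
    fun i => Fin.le_def.mp (R.min'_le _ (R.orderEmbOfFin_mem hcard i))
  have hr_ub : ∀ i : Fin p, (R.orderEmbOfFin hcard i).val ≤ r0 + q := by
    intro i
    have := Fin.le_def.mp (R.le_max' _ (R.orderEmbOfFin_mem hcard i))
    omega
  have hn : q + 1 ≤ n := by
    have := (R.max' hR).isLt
    omega
  have le_last : ∀ i : Fin p, i ≤ ⟨p - 1, hplast⟩ := by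
    intro i
    rw [Fin.le_def]
    show i.val ≤ p - 1
    have := i.isLt
    omega
  have le_first : ∀ i : Fin p, (⟨0, hp⟩ : Fin p) ≤ i := by
    intro i
    rw [Fin.le_def]
    show 0 ≤ i.val
    omega
  -- bounds for the forward map
  have hlbD : ∀ (D : Finset (Fin n)) (hD : D.card = p),
      (∀ i j : Fin p, i ≤ j →
        ((R.orderEmbOfFin hcard j).val : ℤ) - (R.orderEmbOfFin hcard i).val ≤
        ((D.orderEmbOfFin hD j).val : ℤ) - (D.orderEmbOfFin hD i).val) →
      ∀ i : Fin p, (R.orderEmbOfFin hcard i).val ≤ (D.orderEmbOfFin hD i).val + r0 := by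
    intro D hD hcond i
    have h1 := hcond ⟨0, hp⟩ i (le_first i)
    omega
  have hubD : ∀ (D : Finset (Fin n)) (hD : D.card = p),
      (∀ i j : Fin p, i ≤ j →
        ((R.orderEmbOfFin hcard j).val : ℤ) - (R.orderEmbOfFin hcard i).val ≤
        ((D.orderEmbOfFin hD j).val : ℤ) - (D.orderEmbOfFin hD i).val) →
      ∀ i : Fin p,
        (D.orderEmbOfFin hD i).val + r0 + i.val - (R.orderEmbOfFin hcard i).val < m := by
    intro D hD hcond i
    have h1 := hcond i ⟨p - 1, hplast⟩ (le_last i)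
    have h3 := (D.orderEmbOfFin hD ⟨p - 1, hplast⟩).isLt
    have h4 := i.isLt
    have h5 := hr_lb i
    have h6 : (⟨p - 1, hplast⟩ : Fin p).val = p - 1 := rfl
    omega
  have humono : ∀ (D : Finset (Fin n)) (hD : D.card = p)
      (hcond : ∀ i j : Fin p, i ≤ j →
        ((R.orderEmbOfFin hcard j).val : ℤ) - (R.orderEmbOfFin hcard i).val ≤
        ((D.orderEmbOfFin hD j).val : ℤ) - (D.orderEmbOfFin hD i).val),
      StrictMono (fun i : Fin p =>
        (⟨(D.orderEmbOfFin hD i).val + r0 + i.val - (R.orderEmbOfFin hcard i).val,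
          hubD D hD hcond i⟩ : Fin m)) := by
    intro D hD hcond i j hij
    rw [Fin.lt_def]
    show (D.orderEmbOfFin hD i).val + r0 + i.val - (R.orderEmbOfFin hcard i).val <
      (D.orderEmbOfFin hD j).val + r0 + j.val - (R.orderEmbOfFin hcard j).val
    have h1 := hcond i j (le_of_lt hij)
    have h2 := hlbD D hD hcond i
    have h3 := hlbD D hD hcond j
    have h4 : i.val < j.val := hij
    omega
  apply Nat.card_eq_of_bijective (fun Dg =>
    (⟨Finset.image (fun i : Fin p =>
        (⟨(Dg.1.orderEmbOfFin Dg.2.choose i).val + r0 + i.val - (R.orderEmbOfFin hcard i).val,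
          hubD Dg.1 Dg.2.choose Dg.2.choose_spec i⟩ : Fin m)) Finset.univ,
      card_image_strictMono (humono Dg.1 Dg.2.choose Dg.2.choose_spec)⟩ :
      {S : Finset (Fin m) // S.card = p}))
  constructor
  · rintro ⟨D1, hG1⟩ ⟨D2, hG2⟩ h
    simp only [Subtype.mk.injEq] at h
    have hu1 := humono D1 hG1.choose hG1.choose_spec
    have hu2 := humono D2 hG2.choose hG2.choose_spec
    have e1 := orderEmbOfFin_image _ hu1 (card_image_strictMono hu1)
    have e2 := orderEmbOfFin_image _ hu2 (card_image_strictMono hu2)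
    have hpt : ∀ i : Fin p, (D1.orderEmbOfFin hG1.choose i).val = (D2.orderEmbOfFin hG2.choose i).val := by
      intro i
      have hcongr := orderEmbOfFin_congr _ _ (card_image_strictMono hu1)
        (card_image_strictMono hu2) h i
      rw [congrFun e1 i, congrFun e2 i] at hcongr
      have hval := congrArg Fin.val hcongr
      have g1 := hlbD D1 hG1.choose hG1.choose_spec i
      have g2 := hlbD D2 hG2.choose hG2.choose_spec i
      simp only [] at hval
      omega
    apply Subtype.ext
    show D1 = D2
    rw [← image_orderEmbOfFin D1 hG1.choose, ← image_orderEmbOfFin D2 hG2.choose]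
    congr 1
    funext i
    exact Fin.ext (hpt i)
  · rintro ⟨S, hS⟩
    have hu : StrictMono ⇑(S.orderEmbOfFin hS) := (S.orderEmbOfFin hS).strictMono
    have hd'lt : ∀ i : Fin p,
        (S.orderEmbOfFin hS i).val + (R.orderEmbOfFin hcard i).val - r0 - i.val < n := by
      intro i
      have h1 := gain hu i ⟨p - 1, hplast⟩ (le_last i)
      have h2 := (S.orderEmbOfFin hS ⟨p - 1, hplast⟩).isLt
      have h3 := hr_ub i
      have h4 := i.isLt
      have h6 : (⟨p - 1, hplast⟩ : Fin p).val = p - 1 := rfl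
      omega
    set d' : Fin p → Fin n := fun i =>
      ⟨(S.orderEmbOfFin hS i).val + (R.orderEmbOfFin hcard i).val - r0 - i.val, hd'lt i⟩
      with hd'def
    have hd'val : ∀ i : Fin p,
        (d' i).val = (S.orderEmbOfFin hS i).val + (R.orderEmbOfFin hcard i).val - r0 - i.val :=
      fun i => rfl
    have hguard : ∀ i : Fin p, r0 + i.val ≤ (S.orderEmbOfFin hS i).val + (R.orderEmbOfFin hcard i).val := by
      intro i
      have h1 := gain hu ⟨0, hp⟩ i (le_first i)
      have h2 := hr_lb i
      have h0 : (⟨0, hp⟩ : Fin p).val = 0 := rfl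
      omega
    have hd'mono : StrictMono d' := by
      intro i j hij
      rw [Fin.lt_def, hd'val i, hd'val j]
      have h1 := gain hu i j (le_of_lt hij)
      have h2 := gain hrmono i j (le_of_lt hij)
      have h3 := hguard i
      have h4 := hguard j
      have h5 : i.val < j.val := hij
      omega
    have hDcard : (Finset.image d' Finset.univ).card = p := card_image_strictMono hd'mono
    have hGoodD : GoodSet R hcard (Finset.image d' Finset.univ) := by
      refine ⟨hDcard, ?_⟩
      intro i j hij
      have e := orderEmbOfFin_image d' hd'mono hDcard
      rw [congrFun e i, congrFun e j, hd'val i, hd'val j]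
      have h1 := gain hu i j hij
      have h3 := hguard i
      have h4 := hguard j
      have h5 : i.val ≤ j.val := hij
      omega
    refine ⟨⟨Finset.image d' Finset.univ, hGoodD⟩, ?_⟩
    apply Subtype.ext
    show Finset.image _ Finset.univ = S
    have himg : ∀ F G : Fin p → Fin m, (∀ i, F i = G i) →
        Finset.image F Finset.univ = Finset.image G Finset.univ := by
      intro F G hFG
      rw [funext hFG]
    rw [himg _ ⇑(S.orderEmbOfFin hS) ?_]
    · apply Finset.coe_injective
      rw [Finset.coe_image, Finset.coe_univ, Set.image_univ, Finset.range_orderEmbOfFin]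
    · intro i
      apply Fin.ext
      show ((Finset.image d' Finset.univ).orderEmbOfFin hGoodD.choose i).val + r0 + i.val -
        (R.orderEmbOfFin hcard i).val = (S.orderEmbOfFin hS i).val
      have e := orderEmbOfFin_image d' hd'mono hGoodD.choose
      rw [congrFun e i, hd'val i]
      have h3 := hguard i
      omega

lemma pdom_card {n p : ℕ} {R : Finset (Fin n)} (hcard : R.card = p)
    {f : Fin n → Option (Fin n)} (h1 : PInj f) (h4 : pim f = R) : (pdom f).card = p := by
  rw [← hcard]
  apply Finset.card_bij (fun x hx => (f x).get (mem_pdom.mp hx))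
  · intro x hx
    rw [← h4, mem_pim]
    exact ⟨x, (Option.some_get (mem_pdom.mp hx)).symm⟩
  · intro x hx y hy hxy
    apply h1 x y ((f x).get (mem_pdom.mp hx))
    · exact (Option.some_get (mem_pdom.mp hx)).symm
    · rw [hxy]; exact (Option.some_get (mem_pdom.mp hy)).symm
  · intro b hb
    rw [← h4, mem_pim] at hb
    obtain ⟨x, hx⟩ := hb
    refine ⟨x, mem_pdom.mpr (by rw [hx]; rfl), ?_⟩
    simp [hx]

lemma apply_orderEmb {n p : ℕ} {R : Finset (Fin n)} (hcard : R.card = p)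
    {f : Fin n → Option (Fin n)} (h1 : PInj f) (h3 : OrdPres f) (h4 : pim f = R)
    {D : Finset (Fin n)} (hD : D.card = p) (hDeq : pdom f = D) :
    ∀ i : Fin p, f (D.orderEmbOfFin hD i) = some (R.orderEmbOfFin hcard i) := by
  subst hDeq
  have hmem : ∀ i : Fin p, ((f ((pdom f).orderEmbOfFin hD i))).isSome :=
    fun i => mem_pdom.mp ((pdom f).orderEmbOfFin_mem hD i)
  set F : Fin p → Fin n := fun i => (f ((pdom f).orderEmbOfFin hD i)).get (hmem i) with hF
  have hFval : ∀ i, f ((pdom f).orderEmbOfFin hD i) = some (F i) :=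
    fun i => (Option.some_get (hmem i)).symm
  have hFmono : StrictMono F := by
    intro i j hij
    have hd : (pdom f).orderEmbOfFin hD i < (pdom f).orderEmbOfFin hD j :=
      ((pdom f).orderEmbOfFin hD).strictMono hij
    have hle : F i ≤ F j := h3 _ _ _ _ (hFval i) (hFval j) (le_of_lt hd)
    refine lt_of_le_of_ne hle (fun he => ?_)
    have := h1 _ _ _ (hFval i) (by rw [hFval j, he])
    exact absurd this (ne_of_lt hd)
  have hFmem : ∀ i, F i ∈ R := by
    intro i
    rw [← h4, mem_pim]
    exact ⟨_, hFval i⟩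
  have : F = R.orderEmbOfFin hcard := Finset.orderEmbOfFin_unique hcard hFmem hFmono
  intro i
  rw [hFval i, congrFun this i]

lemma ext_of_pdom {n p : ℕ} {R : Finset (Fin n)} (hcard : R.card = p)
    {f g : Fin n → Option (Fin n)}
    (hf1 : PInj f) (hf3 : OrdPres f) (hf4 : pim f = R)
    (hg1 : PInj g) (hg3 : OrdPres g) (hg4 : pim g = R)
    (hpd : pdom f = pdom g) : f = g := by
  have hDf : (pdom f).card = p := pdom_card hcard hf1 hf4
  have hkf := apply_orderEmb hcard hf1 hf3 hf4 hDf rfl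
  have hkg := apply_orderEmb hcard hg1 hg3 hg4 hDf hpd.symm
  funext x
  by_cases hx : x ∈ pdom f
  · have : x ∈ Set.range ((pdom f).orderEmbOfFin hDf) := by
      rw [Finset.range_orderEmbOfFin]; exact hx
    obtain ⟨i, hi⟩ := this
    rw [← hi, hkf i, hkg i]
  · have hxf : f x = none := by
      by_contra h
      exact hx (mem_pdom.mpr (Option.ne_none_iff_isSome.mp h))
    have hxg : g x = none := by
      by_contra h
      rw [hpd] at hx
      exact hx (mem_pdom.mpr (Option.ne_none_iff_isSome.mp h))
    rw [hxf, hxg]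

lemma good_of {n p : ℕ} {R : Finset (Fin n)} (hcard : R.card = p)
    {f : Fin n → Option (Fin n)} (h1 : PInj f) (h2 : Contr f) (h3 : OrdPres f)
    (h4 : pim f = R) : GoodSet R hcard (pdom f) := by
  have hD : (pdom f).card = p := pdom_card hcard h1 h4
  refine ⟨hD, ?_⟩
  intro i j hij
  have hk := apply_orderEmb hcard h1 h3 h4 hD rfl
  have habs := h2 _ _ _ _ (hk i) (hk j)
  have hrm : (R.orderEmbOfFin hcard i).val ≤ (R.orderEmbOfFin hcard j).val :=
    (R.orderEmbOfFin hcard).monotone hij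
  have hdm : ((pdom f).orderEmbOfFin hD i).val ≤ ((pdom f).orderEmbOfFin hD j).val :=
    ((pdom f).orderEmbOfFin hD).monotone hij
  have e1 : |((R.orderEmbOfFin hcard i).val : ℤ) - (R.orderEmbOfFin hcard j).val| =
      ((R.orderEmbOfFin hcard j).val : ℤ) - (R.orderEmbOfFin hcard i).val := by
    rw [abs_sub_comm, abs_of_nonneg (by omega)]
  have e2 : |(((pdom f).orderEmbOfFin hD i).val : ℤ) - ((pdom f).orderEmbOfFin hD j).val| =
      (((pdom f).orderEmbOfFin hD j).val : ℤ) - ((pdom f).orderEmbOfFin hD i).val := by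
    rw [abs_sub_comm, abs_of_nonneg (by omega)]
  rw [e1, e2] at habs
  exact habs

lemma step1 {n p : ℕ} (R : Finset (Fin n)) (hcard : R.card = p) :
    Nat.card {f : Fin n → Option (Fin n) // PInj f ∧ Contr f ∧ OrdPres f ∧ pim f = R} =
      Nat.card {D : Finset (Fin n) // GoodSet R hcard D} := by
  apply Nat.card_eq_of_bijective (fun fs =>
    (⟨pdom fs.1, good_of hcard fs.2.1 fs.2.2.1 fs.2.2.2.1 fs.2.2.2.2⟩ :
      {D : Finset (Fin n) // GoodSet R hcard D}))
  constructor
  · rintro ⟨f, hf⟩ ⟨g, hg⟩ h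
    simp only [Subtype.mk.injEq] at h
    exact Subtype.ext
      (ext_of_pdom hcard hf.1 hf.2.2.1 hf.2.2.2 hg.1 hg.2.2.1 hg.2.2.2 h)
  · rintro ⟨D, hG⟩
    refine ⟨⟨mkf R D hcard hG.choose,
      mkf_pinj hcard hG.choose, mkf_contr hcard hG.choose hG.choose_spec,
      mkf_ordpres hcard hG.choose, mkf_pim hcard hG.choose⟩, ?_⟩
    exact Subtype.ext (mkf_pdom hcard hG.choose)

/-- The number of order-preserving partial injective contractions with a given
nonempty image `R` of size `p` and spread `q = max R - min R` is `C(n-q+p-1, p)`. -/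
theorem count_with_given_image (n p q : ℕ) (R : Finset (Fin n)) (hR : R.Nonempty)
    (hcard : R.card = p) (hq : (R.max' hR).val - (R.min' hR).val = q) :
    Nat.card {f : Fin n → Option (Fin n) //
        PInj f ∧ Contr f ∧ OrdPres f ∧ pim f = R} =
      (n - q + p - 1).choose p := by
  rw [step1 R hcard, step2 R hR hcard hq, Nat.card_eq_fintype_card,
    Fintype.card_finset_len, Fintype.card_fin]
end

section
/- Let R, S ⊆ X_n = {1,…,n} be nonempty sets with |R| = |S| and max R − min R = max S − min S. Then the number of order-preserving partial injective contractions α of X_n with im α = R equals the number of order-preserving partial injective contractions α of X_n with im α = S. -/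
namespace CountAux

variable {n : ℕ}

noncomputable def cc (R S : Finset (Fin n)) (hR : R.Nonempty) (hS : S.Nonempty)
    (e : ↥R ≃o ↥S) (a : ↥R) : ℤ :=
  (((e a).val).val : ℤ) - ((S.min' hS).val : ℤ) - ((a.val).val : ℤ) + ((R.min' hR).val : ℤ)

def Q (R S : Finset (Fin n)) (hR : R.Nonempty) (hS : S.Nonempty) (e : ↥R ≃o ↥S)
    (f : Fin n → Option (Fin n)) (y b : Fin n) : Prop :=
  ∃ x a, ∃ ha : a ∈ R, f x = some a ∧ b = (e ⟨a, ha⟩).val ∧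
    (y.val : ℤ) = (x.val : ℤ) + cc R S hR hS e ⟨a, ha⟩

open Classical in
noncomputable def Phi (R S : Finset (Fin n)) (hR : R.Nonempty) (hS : S.Nonempty)
    (e : ↥R ≃o ↥S) (f : Fin n → Option (Fin n)) : Fin n → Option (Fin n) :=
  fun y => if h : ∃ b, Q R S hR hS e f y b then some h.choose else none

-- f is strictly monotone on its domain
lemma f_strict {f : Fin n → Option (Fin n)} (hI : PInj f) (hO : OrdPres f)
    {x x' a a' : Fin n} (hx : f x = some a) (hx' : f x' = some a') (h : x < x') : a < a' := by
  have h1 : a ≤ a' := hO x x' a a' hx hx' h.le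
  refine lt_of_le_of_ne h1 (fun hy => ?_)
  subst hy
  exact absurd (hI x x' a hx hx') h.ne

lemma gap {R S : Finset (Fin n)} (hR : R.Nonempty) (hS : S.Nonempty) (e : ↥R ≃o ↥S)
    {f : Fin n → Option (Fin n)} (hC : Contr f) (hO : OrdPres f)
    {x x' a a' : Fin n} (ha : a ∈ R) (ha' : a' ∈ R)
    (hx : f x = some a) (hx' : f x' = some a') (h : x ≤ x') :
    (((e ⟨a', ha'⟩).val).val : ℤ) - ((e ⟨a, ha⟩).val).val ≤
      ((x'.val : ℤ) + cc R S hR hS e ⟨a', ha'⟩) - ((x.val : ℤ) + cc R S hR hS e ⟨a, ha⟩) := by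
  have hle : a ≤ a' := hO x x' a a' hx hx' h
  have hc := hC x x' a a' hx hx'
  have h1 : (a.val : ℤ) ≤ a'.val := by exact_mod_cast hle
  have h2 : (x.val : ℤ) ≤ x'.val := by exact_mod_cast h
  rw [abs_of_nonpos (by linarith), abs_of_nonpos (by linarith)] at hc
  unfold cc
  linarith

lemma strictm {R S : Finset (Fin n)} (hR : R.Nonempty) (hS : S.Nonempty) (e : ↥R ≃o ↥S)
    {f : Fin n → Option (Fin n)} (hI : PInj f) (hC : Contr f) (hO : OrdPres f)
    {x x' a a' : Fin n} (ha : a ∈ R) (ha' : a' ∈ R)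
    (hx : f x = some a) (hx' : f x' = some a') (h : x < x') :
    (x.val : ℤ) + cc R S hR hS e ⟨a, ha⟩ < (x'.val : ℤ) + cc R S hR hS e ⟨a', ha'⟩ := by
  have hg := gap hR hS e hC hO ha ha' hx hx' h.le
  have haa : a < a' := f_strict hI hO hx hx' h
  have he : e ⟨a, ha⟩ < e ⟨a', ha'⟩ := e.strictMono (Subtype.mk_lt_mk.mpr haa)
  have he2 : ((e ⟨a, ha⟩).val).val < ((e ⟨a', ha'⟩).val).val := he
  have he3 : (((e ⟨a, ha⟩).val).val : ℤ) < ((e ⟨a', ha'⟩).val).val := by exact_mod_cast he2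
  linarith

lemma mem_pim {f : Fin n → Option (Fin n)} {b : Fin n} :
    b ∈ pim f ↔ ∃ x, f x = some b := by
  unfold pim; simp

lemma bounds {R S : Finset (Fin n)} (hR : R.Nonempty) (hS : S.Nonempty) (e : ↥R ≃o ↥S)
    {f : Fin n → Option (Fin n)} (hI : PInj f) (hC : Contr f) (hO : OrdPres f)
    (him : pim f = R)
    (hsp : ((S.max' hS).val : ℤ) - ((S.min' hS).val : ℤ)
        ≤ ((R.max' hR).val : ℤ) - ((R.min' hR).val : ℤ))
    {x a : Fin n} (hx : f x = some a) (ha : a ∈ R) :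
    0 ≤ (x.val : ℤ) + cc R S hR hS e ⟨a, ha⟩ ∧
      (x.val : ℤ) + cc R S hR hS e ⟨a, ha⟩ < n := by
  obtain ⟨x0, hx0⟩ : ∃ x0, f x0 = some (R.min' hR) := by
    rw [← mem_pim, him]; exact R.min'_mem hR
  obtain ⟨x1, hx1⟩ : ∃ x1, f x1 = some (R.max' hR) := by
    rw [← mem_pim, him]; exact R.max'_mem hR
  have hamin : R.min' hR ≤ a := R.min'_le a ha
  have hamax : a ≤ R.max' hR := R.le_max' a ha
  have haminZ : ((R.min' hR).val : ℤ) ≤ a.val := by exact_mod_cast hamin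
  have hamaxZ : (a.val : ℤ) ≤ (R.max' hR).val := by exact_mod_cast hamax
  have hsmem : (e ⟨a, ha⟩).val ∈ S := (e ⟨a, ha⟩).2
  have hsmin : ((S.min' hS).val : ℤ) ≤ ((e ⟨a, ha⟩).val).val := by
    exact_mod_cast S.min'_le _ hsmem
  have hsmax : (((e ⟨a, ha⟩).val).val : ℤ) ≤ (S.max' hS).val := by
    exact_mod_cast S.le_max' _ hsmem
  -- lower bound: a - min R ≤ x
  have hlow : (a.val : ℤ) - (R.min' hR).val ≤ x.val := by
    rcases le_or_gt x0 x with h | h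
    · have hc := hC x0 x (R.min' hR) a hx0 hx
      have h2 : (x0.val : ℤ) ≤ x.val := by exact_mod_cast h
      rw [abs_of_nonpos (by linarith), abs_of_nonpos (by linarith)] at hc
      have : (0:ℤ) ≤ x0.val := by positivity
      linarith
    · have := f_strict hI hO hx hx0 h
      exact absurd hamin (not_le.mpr this)
  -- upper bound: x ≤ x1 - (max R - a)
  have hhigh : (x.val : ℤ) ≤ (x1.val : ℤ) - ((R.max' hR).val : ℤ) + a.val := by
    rcases le_or_gt x x1 with h | h
    · have hc := hC x x1 a (R.max' hR) hx hx1
      have h2 : (x.val : ℤ) ≤ x1.val := by exact_mod_cast h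
      rw [abs_of_nonpos (by linarith), abs_of_nonpos (by linarith)] at hc
      linarith
    · have := f_strict hI hO hx1 hx h
      exact absurd hamax (not_le.mpr this)
  have hx1n : (x1.val : ℤ) < n := by exact_mod_cast x1.isLt
  constructor
  · unfold cc; linarith
  · unfold cc; linarith

lemma uniq {R S : Finset (Fin n)} (hR : R.Nonempty) (hS : S.Nonempty) (e : ↥R ≃o ↥S)
    {f : Fin n → Option (Fin n)} (hI : PInj f) (hC : Contr f) (hO : OrdPres f)
    {y b b' : Fin n} (h1 : Q R S hR hS e f y b) (h2 : Q R S hR hS e f y b') : b = b' := by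
  obtain ⟨x, a, ha, hfx, hb, hy⟩ := h1
  obtain ⟨x', a', ha', hfx', hb', hy'⟩ := h2
  rcases lt_trichotomy x x' with h | h | h
  · exact absurd (hy ▸ hy' ▸ strictm hR hS e hI hC hO ha ha' hfx hfx' h) (lt_irrefl _)
  · subst h
    have : a = a' := by rw [hfx] at hfx'; exact Option.some.inj hfx'
    subst this
    rw [hb, hb']
  · exact absurd (hy ▸ hy' ▸ strictm hR hS e hI hC hO ha' ha hfx' hfx h) (lt_irrefl _)

lemma spec {R S : Finset (Fin n)} (hR : R.Nonempty) (hS : S.Nonempty) (e : ↥R ≃o ↥S)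
    {f : Fin n → Option (Fin n)} (hI : PInj f) (hC : Contr f) (hO : OrdPres f)
    {y b : Fin n} : Phi R S hR hS e f y = some b ↔ Q R S hR hS e f y b := by
  unfold Phi
  split_ifs with h
  · constructor
    · intro hb
      have := h.choose_spec
      rwa [Option.some.inj hb] at this
    · intro hq
      exact congrArg some (uniq hR hS e hI hC hO h.choose_spec hq)
  · constructor
    · intro hb; simp at hb
    · intro hq; exact absurd ⟨b, hq⟩ h

lemma good {R S : Finset (Fin n)} (hR : R.Nonempty) (hS : S.Nonempty) (e : ↥R ≃o ↥S)
    {f : Fin n → Option (Fin n)} (hI : PInj f) (hC : Contr f) (hO : OrdPres f)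
    (him : pim f = R)
    (hsp : ((S.max' hS).val : ℤ) - ((S.min' hS).val : ℤ)
        ≤ ((R.max' hR).val : ℤ) - ((R.min' hR).val : ℤ)) :
    PInj (Phi R S hR hS e f) ∧ Contr (Phi R S hR hS e f) ∧
      OrdPres (Phi R S hR hS e f) ∧ pim (Phi R S hR hS e f) = S := by
  have hspec : ∀ {y b : Fin n}, Phi R S hR hS e f y = some b ↔ Q R S hR hS e f y b :=
    fun {y b} => spec hR hS e hI hC hO
  refine ⟨?_, ?_, ?_, ?_⟩
  · -- PInj
    intro y y' b h1 h2
    obtain ⟨x, a, ha, hfx, hb, hy⟩ := hspec.mp h1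
    obtain ⟨x', a', ha', hfx', hb', hy'⟩ := hspec.mp h2
    have haa : a = a' := by
      have : (⟨a, ha⟩ : ↥R) = ⟨a', ha'⟩ := e.injective (Subtype.ext (hb ▸ hb' ▸ rfl))
      exact congrArg Subtype.val this
    subst haa
    have hxx : x = x' := hI x x' a hfx hfx'
    subst hxx
    have : (y.val : ℤ) = y'.val := by rw [hy, hy']
    exact Fin.ext (by exact_mod_cast this)
  · -- Contr
    intro y y' b b' h1 h2
    obtain ⟨x, a, ha, hfx, hb, hy⟩ := hspec.mp h1
    obtain ⟨x', a', ha', hfx', hb', hy'⟩ := hspec.mp h2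
    rcases le_total x x' with h | h
    · have hg := gap hR hS e hC hO ha ha' hfx hfx' h
      have hmono : ((e ⟨a, ha⟩).val).val ≤ ((e ⟨a', ha'⟩).val).val :=
        e.monotone (Subtype.mk_le_mk.mpr (hO x x' a a' hfx hfx' h))
      have hm : (((e ⟨a, ha⟩).val).val : ℤ) ≤ ((e ⟨a', ha'⟩).val).val := by exact_mod_cast hmono
      rw [hb, hb']
      rw [abs_of_nonpos (by linarith), abs_of_nonpos (by linarith)]
      linarith
    · have hg := gap hR hS e hC hO ha' ha hfx' hfx h
      have hmono : ((e ⟨a', ha'⟩).val).val ≤ ((e ⟨a, ha⟩).val).val :=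
        e.monotone (Subtype.mk_le_mk.mpr (hO x' x a' a hfx' hfx h))
      have hm : (((e ⟨a', ha'⟩).val).val : ℤ) ≤ ((e ⟨a, ha⟩).val).val := by exact_mod_cast hmono
      rw [hb, hb']
      rw [abs_of_nonneg (by linarith), abs_of_nonneg (by linarith)]
      linarith
  · -- OrdPres
    intro y y' b b' h1 h2 hyy
    obtain ⟨x, a, ha, hfx, hb, hy⟩ := hspec.mp h1
    obtain ⟨x', a', ha', hfx', hb', hy'⟩ := hspec.mp h2
    rcases le_or_gt x x' with h | h
    · have hmono : ((e ⟨a, ha⟩).val) ≤ ((e ⟨a', ha'⟩).val) :=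
        e.monotone (Subtype.mk_le_mk.mpr (hO x x' a a' hfx hfx' h))
      rw [hb, hb']; exact hmono
    · exfalso
      have := strictm hR hS e hI hC hO ha' ha hfx' hfx h
      have hyZ : (y.val : ℤ) ≤ y'.val := by exact_mod_cast hyy
      rw [← hy, ← hy'] at this
      linarith
  · -- pim = S
    ext b
    rw [mem_pim]
    constructor
    · rintro ⟨y, hy⟩
      obtain ⟨x, a, ha, hfx, hb, _⟩ := hspec.mp hy
      rw [hb]; exact (e ⟨a, ha⟩).2
    · intro hb
      set aa : ↥R := e.symm ⟨b, hb⟩ with haa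
      obtain ⟨x, hx⟩ : ∃ x, f x = some aa.val := by
        rw [← mem_pim, him]; exact aa.2
      obtain ⟨h0, h1⟩ := bounds hR hS e hI hC hO him hsp hx aa.2
      have hlt : ((x.val : ℤ) + cc R S hR hS e ⟨aa.val, aa.2⟩).toNat < n := by
        omega
      refine ⟨⟨((x.val : ℤ) + cc R S hR hS e ⟨aa.val, aa.2⟩).toNat, hlt⟩, hspec.mpr ?_⟩
      refine ⟨x, aa.val, aa.2, hx, ?_, ?_⟩
      · have : (⟨aa.val, aa.2⟩ : ↥R) = aa := rfl
        rw [this, haa, e.apply_symm_apply]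
      · simp [Int.toNat_of_nonneg h0]

lemma cc_symm {R S : Finset (Fin n)} (hR : R.Nonempty) (hS : S.Nonempty) (e : ↥R ≃o ↥S)
    (a : ↥R) :
    cc S R hS hR e.symm (e a) = - cc R S hR hS e a := by
  unfold cc
  rw [e.symm_apply_apply]
  ring

lemma roundtrip {R S : Finset (Fin n)} (hR : R.Nonempty) (hS : S.Nonempty) (e : ↥R ≃o ↥S)
    {f : Fin n → Option (Fin n)} (hI : PInj f) (hC : Contr f) (hO : OrdPres f)
    (him : pim f = R)
    (hsp : ((S.max' hS).val : ℤ) - ((S.min' hS).val : ℤ)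
        ≤ ((R.max' hR).val : ℤ) - ((R.min' hR).val : ℤ)) :
    Phi S R hS hR e.symm (Phi R S hR hS e f) = f := by
  obtain ⟨hI', hC', hO', him'⟩ := good hR hS e hI hC hO him hsp
  have hspec : ∀ {y b : Fin n}, Phi R S hR hS e f y = some b ↔ Q R S hR hS e f y b :=
    fun {y b} => spec hR hS e hI hC hO
  have hspec' : ∀ {y b : Fin n},
      Phi S R hS hR e.symm (Phi R S hR hS e f) y = some b ↔
        Q S R hS hR e.symm (Phi R S hR hS e f) y b :=
    fun {y b} => spec hS hR e.symm hI' hC' hO'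
  funext x
  cases hfx : f x with
  | none =>
    cases hgx : Phi S R hS hR e.symm (Phi R S hR hS e f) x with
    | none => rfl
    | some b =>
      exfalso
      obtain ⟨y, s, hs, hgy, hb, hx2⟩ := hspec'.mp hgx
      obtain ⟨x0, a0, ha0, hfx0, hsval, hy0⟩ := hspec.mp hgy
      have hsub : (⟨s, hs⟩ : ↥S) = e ⟨a0, ha0⟩ := Subtype.ext hsval
      have hx0x : x = x0 := by
        have : (x.val : ℤ) = x0.val := by
          rw [hx2, hy0, hsub, cc_symm]; ring
        exact Fin.ext (by exact_mod_cast this)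
      rw [hx0x, hfx0] at hfx
      simp at hfx
  | some a =>
    have ha : a ∈ R := by rw [← him, mem_pim]; exact ⟨x, hfx⟩
    obtain ⟨h0, h1⟩ := bounds hR hS e hI hC hO him hsp hfx ha
    set y : Fin n := ⟨((x.val : ℤ) + cc R S hR hS e ⟨a, ha⟩).toNat, by omega⟩ with hy
    have hyval : (y.val : ℤ) = (x.val : ℤ) + cc R S hR hS e ⟨a, ha⟩ := by
      simp [hy, Int.toNat_of_nonneg h0]
    have hgy : Phi R S hR hS e f y = some (e ⟨a, ha⟩).val :=
      hspec.mpr ⟨x, a, ha, hfx, rfl, hyval⟩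
    refine hspec'.mpr ⟨y, (e ⟨a, ha⟩).val, (e ⟨a, ha⟩).2, hgy, ?_, ?_⟩
    · have hsub : (⟨(e ⟨a, ha⟩).val, (e ⟨a, ha⟩).2⟩ : ↥S) = e ⟨a, ha⟩ := rfl
      rw [hsub, e.symm_apply_apply]
    · have hsub : (⟨(e ⟨a, ha⟩).val, (e ⟨a, ha⟩).2⟩ : ↥S) = e ⟨a, ha⟩ := rfl
      rw [hsub, cc_symm, hyval]; ring

end CountAux

/-- Two nonempty image sets with the same cardinality and the same spread
(`max - min`) admit the same number of order-preserving partial injective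
contractions having them as image. -/
theorem count_depends_only_on_card_and_spread (n : ℕ) (R S : Finset (Fin n))
    (hR : R.Nonempty) (hS : S.Nonempty) (hcard : R.card = S.card)
    (hspread : (R.max' hR).val - (R.min' hR).val
      = (S.max' hS).val - (S.min' hS).val) :
    Nat.card {f : Fin n → Option (Fin n) //
        PInj f ∧ Contr f ∧ OrdPres f ∧ pim f = R} =
    Nat.card {f : Fin n → Option (Fin n) //
        PInj f ∧ Contr f ∧ OrdPres f ∧ pim f = S} := by
  classical
  have hRmm : ((R.min' hR).val : ℕ) ≤ (R.max' hR).val :=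
    R.min'_le _ (R.max'_mem hR)
  have hSmm : ((S.min' hS).val : ℕ) ≤ (S.max' hS).val :=
    S.min'_le _ (S.max'_mem hS)
  have hsp1 : ((S.max' hS).val : ℤ) - ((S.min' hS).val : ℤ)
      ≤ ((R.max' hR).val : ℤ) - ((R.min' hR).val : ℤ) := by omega
  have hsp2 : ((R.max' hR).val : ℤ) - ((R.min' hR).val : ℤ)
      ≤ ((S.max' hS).val : ℤ) - ((S.min' hS).val : ℤ) := by omega
  set e : ↥R ≃o ↥S :=
    (R.orderIsoOfFin rfl).symm.trans (S.orderIsoOfFin hcard.symm) with he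
  refine Nat.card_congr ⟨
    fun f => ⟨CountAux.Phi R S hR hS e f.1,
      CountAux.good hR hS e f.2.1 f.2.2.1 f.2.2.2.1 f.2.2.2.2 hsp1⟩,
    fun g => ⟨CountAux.Phi S R hS hR e.symm g.1,
      CountAux.good hS hR e.symm g.2.1 g.2.2.1 g.2.2.2.1 g.2.2.2.2 hsp2⟩,
    fun f => Subtype.ext
      (CountAux.roundtrip hR hS e f.2.1 f.2.2.1 f.2.2.2.1 f.2.2.2.2 hsp1),
    fun g => Subtype.ext (by
      have := CountAux.roundtrip hS hR e.symm g.2.1 g.2.2.1 g.2.2.2.1 g.2.2.2.2 hsp2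
      rwa [OrderIso.symm_symm] at this)⟩
end

section
/- Let α ∈ OCI_n, i.e., α is an order-preserving partial injective contraction of X_n = {1,…,n}. Then the set of fixed points of α is convex with respect to dom α: if a, b ∈ dom α satisfy aα = a and bα = b, and x ∈ dom α satisfies a ≤ x ≤ b, then xα = x. -/
/-- For an order-preserving partial injective contraction, the set of fixed points
is convex with respect to the domain. -/
theorem fixed_points_convex (n : ℕ) (f : Fin n → Option (Fin n))
    (hI : PInj f) (hC : Contr f) (hP : OrdPres f)
    (a b x y : Fin n) (ha : f a = some a) (hb : f b = some b)
    (hx : f x = some y) (hax : a ≤ x) (hxb : x ≤ b) :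
    f x = some x := by
  have hay : a ≤ y := hP a x a y ha hx hax
  have hyb : y ≤ b := hP x b y b hx hb hxb
  have h1 := hC x a y a hx ha
  have h2 := hC b x b y hb hx
  have hxy : x = y := by
    have hay' : (a:ℕ) ≤ (y:ℕ) := hay
    have hyb' : (y:ℕ) ≤ (b:ℕ) := hyb
    have hax' : (a:ℕ) ≤ (x:ℕ) := hax
    have hxb' : (x:ℕ) ≤ (b:ℕ) := hxb
    have h1' : (y:ℤ) - (a:ℤ) ≤ (x:ℤ) - (a:ℤ) := by
      rwa [abs_of_nonneg (by push_cast; omega), abs_of_nonneg (by push_cast; omega)] at h1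
    have h2' : (b:ℤ) - (y:ℤ) ≤ (b:ℤ) - (x:ℤ) := by
      rwa [abs_of_nonneg (by push_cast; omega), abs_of_nonneg (by push_cast; omega)] at h2
    have : (x:ℕ) = (y:ℕ) := by push_cast at h1' h2'; omega
    exact Fin.ext this
  rw [hx, hxy]
end

section
/- For every natural number n, the Fibonacci number F_{2n} satisfies F_{2n} = ∑_{p=0}^{n} C(n+p−1, 2p−1), where the p = 0 term is interpreted as 0 (by the convention that C(a,b) = 0 for negative b). -/
open Finset

lemma key (n : ℕ) :
    Nat.fib (2 * n) = ∑ p ∈ Finset.Icc 1 n, (n + p - 1).choose (2 * p - 1) ∧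
    Nat.fib (2 * n + 1) = ∑ p ∈ Finset.range (n + 1), (n + p).choose (2 * p) := by
  induction n with
  | zero => simp
  | succ n ih =>
    obtain ⟨hA, hB⟩ := ih
    have hA' : Nat.fib (2 * (n + 1)) =
        ∑ p ∈ Finset.Icc 1 (n + 1), (n + 1 + p - 1).choose (2 * p - 1) := by
      have step : ∀ p ∈ Finset.Icc 1 (n + 1),
          (n + 1 + p - 1).choose (2 * p - 1)
            = (n + p - 1).choose (2 * p - 1 - 1) + (n + p - 1).choose (2 * p - 1) := by
        intro p hp
        simp only [mem_Icc] at hp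
        obtain ⟨hp1, _⟩ := hp
        obtain ⟨q, rfl⟩ := Nat.exists_eq_add_of_le hp1
        have h1 : n + 1 + (1 + q) - 1 = (n + (1 + q) - 1) + 1 := by omega
        have h2 : 2 * (1 + q) - 1 = (2 * (1 + q) - 1 - 1) + 1 := by omega
        rw [h1, h2, Nat.choose_succ_succ]
        simp
      rw [Finset.sum_congr rfl step, Finset.sum_add_distrib]
      have e1 : ∑ p ∈ Finset.Icc 1 (n + 1), (n + p - 1).choose (2 * p - 1 - 1)
          = ∑ p ∈ Finset.range (n + 1), (n + p).choose (2 * p) := by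
        rw [← Finset.Ico_add_one_right_eq_Icc, Finset.sum_Ico_eq_sum_range]
        apply Finset.sum_congr (by congr 1)
        intro q _
        congr 1 <;> omega
      have e2 : ∑ p ∈ Finset.Icc 1 (n + 1), (n + p - 1).choose (2 * p - 1)
          = ∑ p ∈ Finset.Icc 1 n, (n + p - 1).choose (2 * p - 1) := by
        rw [Finset.sum_Icc_succ_top (by omega)]
        have : (n + (n + 1) - 1).choose (2 * (n + 1) - 1) = 0 :=
          Nat.choose_eq_zero_of_lt (by omega)
        rw [this, add_zero]
      rw [e1, e2, ← hA, ← hB]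
      have h : 2 * (n + 1) = 2 * n + 2 := by ring
      rw [h, Nat.fib_add_two]
      omega
    refine ⟨hA', ?_⟩
    have hB' : ∑ p ∈ Finset.range (n + 1 + 1), (n + 1 + p).choose (2 * p)
        = Nat.fib (2 * (n + 1)) + Nat.fib (2 * n + 1) := by
      rw [Finset.sum_range_succ']
      simp only [mul_zero, Nat.choose_zero_right, add_zero]
      have step : ∀ p ∈ Finset.range (n + 1),
          (n + 1 + (p + 1)).choose (2 * (p + 1))
            = (n + 1 + p).choose (2 * p + 1) + (n + 1 + p).choose (2 * p + 2) := by
        intro p _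
        have h1 : n + 1 + (p + 1) = (n + 1 + p) + 1 := by ring
        have h2 : 2 * (p + 1) = (2 * p + 1) + 1 := by ring
        rw [h1, h2, Nat.choose_succ_succ]
      rw [Finset.sum_congr rfl step, Finset.sum_add_distrib]
      have e1 : ∑ p ∈ Finset.range (n + 1), (n + 1 + p).choose (2 * p + 1)
          = Nat.fib (2 * (n + 1)) := by
        rw [hA', ← Finset.Ico_add_one_right_eq_Icc, Finset.sum_Ico_eq_sum_range]
        apply (Finset.sum_congr (by congr 1) ?_).symm
        intro q _
        congr 1 <;> omega
      have e2 : (∑ p ∈ Finset.range (n + 1), (n + 1 + p).choose (2 * p + 2)) + 1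
          = Nat.fib (2 * n + 1) := by
        rw [hB, Finset.sum_range_succ]
        have hz : (n + 1 + n).choose (2 * n + 2) = 0 :=
          Nat.choose_eq_zero_of_lt (by omega)
        rw [hz, add_zero]
        rw [Finset.sum_range_succ' (fun p => (n + p).choose (2 * p))]
        simp only [mul_zero, Nat.choose_zero_right]
        congr 1
        apply Finset.sum_congr rfl
        intro q _
        congr 1 <;> omega
      omega
    rw [hB']
    have h1 : 2 * (n + 1) + 1 = (2 * n + 1) + 2 := by ring
    have h2 : 2 * (n + 1) = 2 * n + 2 := by ring
    rw [h1, h2, Nat.fib_add_two]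
    have h3 : Nat.fib (2 * n + 1 + 1) = Nat.fib (2 * n + 2) := by norm_num
    omega

/-- `F_{2n} = ∑_{p=1}^{n} C(n+p-1, 2p-1)` (the `p = 0` term being `0`). -/
theorem fib_even_sum (n : ℕ) :
    Nat.fib (2 * n) = ∑ p ∈ Finset.Icc 1 n, (n + p - 1).choose (2 * p - 1) := by
  exact (key n).1
end

section
/- Let h_n = |OCI_n| be the number of order-preserving partial injective contractions of X_n = {1,…,n}. Then, as an identity of integers, 5·h_n = (3n−1)·F_{2n} − (n−5)·F_{2n+1}, where F_k denotes the k-th Fibonacci number. -/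
namespace OCIProof

open Finset

def step (p q : ℕ × ℕ) : Prop := q.1 < p.1 ∧ q.2 < p.2 ∧ q.1 + p.2 ≤ p.1 + q.2

instance : DecidableRel step := fun p q => by unfold step; infer_instance

instance : IsTrans (ℕ × ℕ) step :=
  ⟨fun a b c h1 h2 => by
    obtain ⟨h1a, h1b, h1c⟩ := h1; obtain ⟨h2a, h2b, h2c⟩ := h2
    exact ⟨by omega, by omega, by omega⟩⟩

def box (x y : ℕ) : Finset (ℕ × ℕ) :=
  (Finset.range x ×ˢ Finset.range y).filter fun q => q.1 + y ≤ x + q.2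

lemma mem_box {x y} {q : ℕ × ℕ} : q ∈ box x y ↔ step (x, y) q := by
  simp only [box, step, Finset.mem_filter, Finset.mem_product, Finset.mem_range]
  tauto

def LB : ℕ → ℕ → Finset (List (ℕ × ℕ))
  | x, y =>
    insert []
      ((box x y).attach.biUnion fun q => (LB q.1.1 q.1.2).image (List.cons q.1))
  termination_by x y => x
  decreasing_by exact (mem_box.mp q.2).1

lemma mem_LB {l : List (ℕ × ℕ)} : ∀ {x y}, l ∈ LB x y ↔ List.Chain step (x, y) l := by
  induction l with
  | nil => intro x y; rw [LB]; simp; exact List.isChain_singleton _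
  | cons q t ih =>
    intro x y
    rw [LB]
    simp only [Finset.mem_insert, Finset.mem_biUnion, Finset.mem_attach, true_and,
      Finset.mem_image, List.chain_cons, Subtype.exists]
    constructor
    · rintro (h | ⟨r, hr, t', ht', heq⟩)
      · simp at h
      · obtain ⟨rfl, rfl⟩ : r = q ∧ t' = t := by
          constructor <;> [exact (List.cons.injEq _ _ _ _ ▸ heq).1; exact (List.cons.injEq _ _ _ _ ▸ heq).2]
        exact List.isChain_cons_cons.mpr ⟨mem_box.mp hr, ih.mp ht'⟩
    · intro h; obtain ⟨hs, hc⟩ := List.isChain_cons_cons.mp h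
      exact Or.inr ⟨q, mem_box.mpr hs, t, ih.mpr hc, rfl⟩

def Nc (x y : ℕ) : ℕ := (LB x y).card

lemma Nc_rec (x y : ℕ) : Nc x y = 1 + ∑ q ∈ box x y, Nc q.1 q.2 := by
  unfold Nc
  rw [LB]
  have hnm : ([] : List (ℕ×ℕ)) ∉ (box x y).attach.biUnion
      (fun q => (LB q.1.1 q.1.2).image (List.cons q.1)) := by
    simp only [Finset.mem_biUnion, Finset.mem_image, not_exists]
    rintro q ⟨_, t, _, h⟩
    exact List.cons_ne_nil _ _ h
  rw [Finset.card_insert_of_notMem hnm, Finset.card_biUnion, add_comm]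
  · congr 1
    rw [← Finset.sum_attach (box x y) (fun q => (LB q.1 q.2).card)]
    refine Finset.sum_congr rfl fun q _ => ?_
    exact Finset.card_image_of_injective _ (fun a b h => (List.cons.injEq _ _ _ _ ▸ h).2)
  · intro p _ r _ hpr
    simp only [Finset.disjoint_left, Finset.mem_image]
    rintro l ⟨t1, _, rfl⟩ ⟨t2, _, heq⟩
    exact hpr (Subtype.ext (List.cons.injEq _ _ _ _ ▸ heq).1.symm)

def TB (n : ℕ) : Finset (List (ℕ × ℕ)) :=
  insert [] ((Finset.range n ×ˢ Finset.range n).biUnion fun q => (LB q.1 q.2).image (List.cons q))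

lemma mem_TB {n : ℕ} {l : List (ℕ × ℕ)} :
    l ∈ TB n ↔ List.Pairwise step l ∧ ∀ p ∈ l, p.1 < n ∧ p.2 < n := by
  unfold TB
  cases l with
  | nil => simp
  | cons q t =>
    have hiff : q :: t ∈ insert ([] : List (ℕ×ℕ))
        ((Finset.range n ×ˢ Finset.range n).biUnion fun r => (LB r.1 r.2).image (List.cons r)) ↔
        (q.1 < n ∧ q.2 < n) ∧ t ∈ LB q.1 q.2 := by
      simp only [Finset.mem_insert, Finset.mem_biUnion, Finset.mem_image, Finset.mem_product,
        Finset.mem_range]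
      constructor
      · rintro (h | ⟨r, hr, t', ht', heq⟩)
        · exact absurd h (List.cons_ne_nil _ _)
        · obtain ⟨rfl, rfl⟩ : r = q ∧ t' = t :=
            ⟨(List.cons.injEq _ _ _ _ ▸ heq).1, (List.cons.injEq _ _ _ _ ▸ heq).2⟩
          exact ⟨hr, ht'⟩
      · rintro ⟨hq, ht⟩
        exact Or.inr ⟨q, hq, t, ht, rfl⟩
    rw [hiff]
    constructor
    · rintro ⟨hq, ht⟩
      have hpw : List.Pairwise step (q :: t) := List.isChain_iff_pairwise.mp (mem_LB.mp ht)
      refine ⟨hpw, ?_⟩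
      intro p hp
      rcases List.mem_cons.mp hp with rfl | hp
      · exact hq
      · have := (List.pairwise_cons.mp hpw).1 p hp
        exact ⟨lt_trans this.1 hq.1, lt_trans this.2.1 hq.2⟩
    · rintro ⟨hpw, hbd⟩
      exact ⟨hbd q (List.mem_cons_self),
        mem_LB.mpr (List.isChain_iff_pairwise.mpr hpw)⟩

lemma card_TB (n : ℕ) :
    (TB n).card = 1 + ∑ q ∈ Finset.range n ×ˢ Finset.range n, Nc q.1 q.2 := by
  unfold TB
  have hnm : ([] : List (ℕ×ℕ)) ∉ (Finset.range n ×ˢ Finset.range n).biUnion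
      (fun q => (LB q.1 q.2).image (List.cons q)) := by
    simp only [Finset.mem_biUnion, Finset.mem_image, not_exists]
    rintro q ⟨_, t, _, h⟩
    exact List.cons_ne_nil _ _ h
  rw [Finset.card_insert_of_notMem hnm, Finset.card_biUnion, add_comm]
  · congr 1
    exact Finset.sum_congr rfl fun q _ =>
      Finset.card_image_of_injective _ (fun a b h => (List.cons.injEq _ _ _ _ ▸ h).2)
  · intro p _ r _ hpr
    simp only [Finset.disjoint_left, Finset.mem_image]
    rintro l ⟨t1, _, rfl⟩ ⟨t2, _, heq⟩
    exact hpr ((List.cons.injEq _ _ _ _ ▸ heq).1.symm)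

end OCIProof

namespace OCIProof

section Arith
open Finset

lemma Nc_const : ∀ x : ℕ, ∀ {y : ℕ}, x ≤ y → Nc x y = Nc x x := by
  intro x
  induction x using Nat.strong_induction_on with
  | _ x ih =>
    intro y hxy
    have key : ∀ y' : ℕ, x ≤ y' →
        ∑ q ∈ box x y', Nc q.1 q.2 = ∑ a ∈ Finset.range x, (x - a) * Nc a a := by
      intro y' hy'
      rw [box, Finset.sum_filter, Finset.sum_product]
      refine Finset.sum_congr rfl fun a ha => ?_
      rw [← Finset.sum_filter]
      have ha' : a < x := Finset.mem_range.mp ha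
      have hcongr : ∀ b ∈ (Finset.range y').filter (fun b => a + y' ≤ x + b),
          Nc a b = Nc a a := by
        intro b hb
        obtain ⟨hb1, hb2⟩ := Finset.mem_filter.mp hb
        rw [Finset.mem_range] at hb1
        exact ih a ha' (by omega)
      rw [Finset.sum_congr rfl hcongr, Finset.sum_const, smul_eq_mul]
      congr 1
      have hico : (Finset.range y').filter (fun b => a + y' ≤ x + b) =
          Finset.Ico (a + y' - x) y' := by
        ext b
        simp only [Finset.mem_filter, Finset.mem_range, Finset.mem_Ico]
        omega
      rw [hico, Nat.card_Ico]
      omega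
    rw [Nc_rec, Nc_rec x x, key y hxy, key x le_rfl]

lemma Nc_step (x y : ℕ) :
    Nc (x+1) (y+1) = 2 * Nc x y + ∑ a ∈ Finset.range x, Nc a y := by
  have hset : box (x+1) (y+1) =
      insert (x, y) (box x y ∪ (Finset.range x).image fun a => (a, y)) := by
    ext q
    obtain ⟨q1, q2⟩ := q
    simp only [mem_box, step, Finset.mem_insert, Finset.mem_union, Finset.mem_image,
      Finset.mem_range, Prod.mk.injEq]
    constructor
    · rintro ⟨h1, h2, h3⟩
      by_cases hq2 : q2 = y
      · subst hq2
        by_cases hq1 : q1 = x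
        · exact Or.inl ⟨hq1, rfl⟩
        · exact Or.inr (Or.inr ⟨q1, by omega, rfl, rfl⟩)
      · exact Or.inr (Or.inl ⟨by omega, by omega, by omega⟩)
    · rintro (⟨rfl, rfl⟩ | ⟨h1, h2, h3⟩ | ⟨a, ha, rfl, rfl⟩)
      · exact ⟨by omega, by omega, by omega⟩
      · exact ⟨by omega, by omega, by omega⟩
      · exact ⟨by omega, by omega, by omega⟩
  have hnm : (x, y) ∉ box x y ∪ (Finset.range x).image fun a => (a, y) := by
    simp only [Finset.mem_union, Finset.mem_image, Finset.mem_range, mem_box, step,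
      Prod.mk.injEq, not_or]
    constructor
    · rintro ⟨h1, -, -⟩; omega
    · rintro ⟨a, ha, rfl, -⟩; omega
  have hdisj : Disjoint (box x y) ((Finset.range x).image fun a => (a, y)) := by
    rw [Finset.disjoint_left]
    intro q hq hq2
    obtain ⟨a, ha, rfl⟩ := Finset.mem_image.mp hq2
    have := (mem_box.mp hq).2.1
    simp at this
  rw [Nc_rec, hset, Finset.sum_insert hnm, Finset.sum_union hdisj,
    Finset.sum_image (fun a _ b _ h => (Prod.mk.injEq _ _ _ _ ▸ h).1)]
  simp only [Prod.fst, Prod.snd]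
  have hrec := Nc_rec x y
  omega

lemma Nc_zero (x : ℕ) : Nc x 0 = 1 := by
  rw [Nc_rec]
  have : box x 0 = ∅ := by
    ext q; simp [mem_box, step]
  rw [this]
  simp

lemma sum_fib_odd (m : ℕ) :
    ∑ a ∈ Finset.range m, Nat.fib (2*a+1) = Nat.fib (2*m) := by
  induction m with
  | zero => simp
  | succ m ih =>
    rw [Finset.sum_range_succ, ih, show 2*(m+1) = (2*m)+2 by ring, Nat.fib_add_two]

lemma Nc_diag (x : ℕ) : Nc x x = Nat.fib (2*x+1) := by
  induction x using Nat.strong_induction_on with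
  | _ x ih =>
    match x with
    | 0 =>
      have : box 0 0 = ∅ := by ext q; simp [mem_box, step]
      rw [Nc_rec, this]
      simp
    | x + 1 =>
      rw [Nc_step x x]
      have hsum : ∑ a ∈ Finset.range x, Nc a x = Nat.fib (2*x) := by
        rw [← sum_fib_odd]
        refine Finset.sum_congr rfl fun a ha => ?_
        have ha' := Finset.mem_range.mp ha
        rw [Nc_const a (le_of_lt ha'), ih a (by omega)]
      rw [hsum, ih x (by omega), show 2*(x+1)+1 = (2*x+1)+2 by ring, Nat.fib_add_two,
        show 2*x+1+1 = (2*x)+2 by ring, Nat.fib_add_two]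
      omega

end Arith

section ArithZ
open Finset

def Sz (x : ℕ) : ℤ := ∑ y ∈ Finset.range (x+1), (Nc x y : ℤ)

lemma row_sum (a m : ℕ) (ham : a < m) :
    ∑ y ∈ Finset.range m, (Nc a y : ℤ) = Sz a + ((m : ℤ) - 1 - a) * Nat.fib (2*a+1) := by
  rw [Finset.range_eq_Ico, ← Finset.sum_Ico_consecutive _ (Nat.zero_le (a+1)) (by omega : a+1 ≤ m)]
  have h1 : ∑ y ∈ Finset.Ico 0 (a+1), (Nc a y : ℤ) = Sz a := by
    rw [← Finset.range_eq_Ico]; rfl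
  have h2 : ∑ y ∈ Finset.Ico (a+1) m, (Nc a y : ℤ) =
      ((m : ℤ) - 1 - a) * Nat.fib (2*a+1) := by
    have hc : ∀ y ∈ Finset.Ico (a+1) m, (Nc a y : ℤ) = (Nat.fib (2*a+1) : ℤ) := by
      intro y hy
      obtain ⟨hy1, hy2⟩ := Finset.mem_Ico.mp hy
      rw [Nc_const a (by omega), Nc_diag]
    rw [Finset.sum_congr rfl hc, Finset.sum_const, Nat.card_Ico, nsmul_eq_mul]
    have : ((m - (a+1) : ℕ) : ℤ) = (m : ℤ) - 1 - a := by
      push_cast [Nat.cast_sub (by omega : a+1 ≤ m)]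
      ring
    rw [this]
  rw [h1, h2]

lemma B1 (x : ℕ) : Sz (x+1) =
    1 + 2 * Sz x + ∑ a ∈ Finset.range x, (Sz a + ((x : ℤ) - a) * Nat.fib (2*a+1)) := by
  have hstep : ∀ y ∈ Finset.range (x+1), (Nc (x+1) (y+1) : ℤ) =
      2 * (Nc x y : ℤ) + ∑ a ∈ Finset.range x, (Nc a y : ℤ) := by
    intro y _
    rw [Nc_step]
    push_cast
    ring
  have hrows : ∀ a ∈ Finset.range x, ∑ y ∈ Finset.range (x+1), (Nc a y : ℤ) =
      Sz a + ((x : ℤ) - a) * Nat.fib (2*a+1) := by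
    intro a ha
    have ha' := Finset.mem_range.mp ha
    rw [row_sum a (x+1) (by omega)]
    push_cast
    ring
  have key : ∑ y ∈ Finset.range (x+1), (Nc (x+1) (y+1) : ℤ)
      = 2 * Sz x + ∑ a ∈ Finset.range x, (Sz a + ((x : ℤ) - a) * Nat.fib (2*a+1)) :=
    calc ∑ y ∈ Finset.range (x+1), (Nc (x+1) (y+1) : ℤ)
        = ∑ y ∈ Finset.range (x+1), (2 * (Nc x y : ℤ) + ∑ a ∈ Finset.range x, (Nc a y : ℤ)) :=
          Finset.sum_congr rfl hstep
      _ = 2 * Sz x + ∑ y ∈ Finset.range (x+1), ∑ a ∈ Finset.range x, (Nc a y : ℤ) := by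
          rw [Finset.sum_add_distrib, ← Finset.mul_sum]; rfl
      _ = 2 * Sz x + ∑ a ∈ Finset.range x, ∑ y ∈ Finset.range (x+1), (Nc a y : ℤ) := by
          rw [Finset.sum_comm]
      _ = 2 * Sz x + ∑ a ∈ Finset.range x, (Sz a + ((x : ℤ) - a) * Nat.fib (2*a+1)) := by
          rw [Finset.sum_congr rfl hrows]
  have h0 : (Nc (x+1) 0 : ℤ) = 1 := by rw [Nc_zero]; norm_num
  show ∑ y ∈ Finset.range (x+1+1), (Nc (x+1) y : ℤ) = _
  rw [Finset.sum_range_succ', key, h0]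
  ring

lemma fib_c2 (x : ℕ) : (Nat.fib (2*x+2) : ℤ) = Nat.fib (2*x) + Nat.fib (2*x+1) := by
  rw [show 2*x+2 = (2*x)+2 by ring, Nat.fib_add_two]
  push_cast
  ring

lemma fib_c3 (x : ℕ) : (Nat.fib (2*x+3) : ℤ) = Nat.fib (2*x) + 2 * Nat.fib (2*x+1) := by
  rw [show 2*x+3 = (2*x+1)+2 by ring, Nat.fib_add_two]
  push_cast
  linear_combination fib_c2 x

lemma fib_c4 (x : ℕ) : (Nat.fib (2*x+4) : ℤ) = 2 * Nat.fib (2*x) + 3 * Nat.fib (2*x+1) := by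
  rw [show 2*x+4 = (2*x+2)+2 by ring, Nat.fib_add_two]
  push_cast
  linear_combination fib_c2 x + fib_c3 x

lemma fib_c5 (x : ℕ) : (Nat.fib (2*x+5) : ℤ) = 3 * Nat.fib (2*x) + 5 * Nat.fib (2*x+1) := by
  rw [show 2*x+5 = (2*x+3)+2 by ring, Nat.fib_add_two]
  push_cast
  linear_combination fib_c3 x + fib_c4 x

lemma B2 (x : ℕ) : Sz (x+2) = 3 * Sz (x+1) - Sz x + (Nat.fib (2*x+2) : ℤ) := by
  have b1 := B1 x
  have b2 := B1 (x+1)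
  rw [Finset.sum_range_succ] at b2
  have hsplit : ∑ a ∈ Finset.range x, (Sz a + (((x+1 : ℕ) : ℤ) - a) * Nat.fib (2*a+1)) =
      ∑ a ∈ Finset.range x, (Sz a + ((x : ℤ) - a) * Nat.fib (2*a+1))
        + ∑ a ∈ Finset.range x, (Nat.fib (2*a+1) : ℤ) := by
    rw [← Finset.sum_add_distrib]
    refine Finset.sum_congr rfl fun a _ => ?_
    push_cast
    ring
  rw [hsplit] at b2
  have hf : ∑ a ∈ Finset.range x, (Nat.fib (2*a+1) : ℤ) = (Nat.fib (2*x) : ℤ) := by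
    exact_mod_cast congrArg (Nat.cast : ℕ → ℤ) (sum_fib_odd x)
  rw [hf] at b2
  push_cast at b2
  rw [fib_c2 x]
  linarith [b1, b2]

lemma B3 (x : ℕ) : 5 * Sz x = (2 - (x:ℤ)) * Nat.fib (2*x) + (2*(x:ℤ) + 5) * Nat.fib (2*x+1) := by
  induction x using Nat.twoStepInduction with
  | zero =>
    have h0 : Sz 0 = 1 := by
      unfold Sz
      rw [Finset.sum_range_one, Nc_zero]
      norm_num
    rw [h0]
    norm_num
  | one =>
    have h1 : Sz 1 = 3 := by
      unfold Sz
      rw [Finset.sum_range_succ, Finset.sum_range_one, Nc_zero, Nc_diag]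
      norm_num
    rw [h1]
    norm_num [Nat.fib]
  | more x ih1 ih2 =>
    have hc2 := fib_c2 x
    have hc3 := fib_c3 x
    rw [show 2*(x+1) = 2*x+2 by ring, show 2*x+2+1 = 2*x+3 by ring, hc2, hc3] at ih2
    push_cast at ih2
    rw [B2 x, show 2*(x+2) = 2*x+4 by ring, show 2*x+4+1 = 2*x+5 by ring,
      fib_c4 x, fib_c5 x, hc2]
    push_cast
    linear_combination 3*ih2 - ih1

lemma sumE (n : ℕ) :
    ∑ x ∈ Finset.range n, ((2 - (x:ℤ)) * Nat.fib (2*x) - 3*(x:ℤ)*Nat.fib (2*x+1))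
      = (-2*(n:ℤ) - 1) * Nat.fib (2*n) - ((n:ℤ) - 5) * Nat.fib (2*n+1) - 5 := by
  induction n with
  | zero => norm_num
  | succ n ih =>
    rw [Finset.sum_range_succ, ih, show 2*(n+1) = 2*n+2 by ring, show 2*n+2+1 = 2*n+3 by ring,
      fib_c2 n, fib_c3 n]
    push_cast
    ring

end ArithZ

section Bij
variable {n : ℕ}

/-- encode a partial map as the list of its graph pairs, largest first -/
def toL (f : Fin n → Option (Fin n)) : List (ℕ × ℕ) :=
  (List.finRange n).reverse.filterMap fun x => (f x).map fun a => (x.1, a.1)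

lemma mem_toL {f : Fin n → Option (Fin n)} {p : ℕ × ℕ} :
    p ∈ toL f ↔ ∃ x a, f x = some a ∧ p = (x.1, a.1) := by
  simp only [toL, List.mem_filterMap, List.mem_reverse, List.mem_finRange, true_and,
    Option.map_eq_some_iff]
  constructor
  · rintro ⟨x, a, hfa, rfl⟩
    exact ⟨x, a, hfa, rfl⟩
  · rintro ⟨x, a, hfa, rfl⟩
    exact ⟨x, a, hfa, rfl⟩

lemma pairwise_toL {f : Fin n → Option (Fin n)}
    (hf : PInj f ∧ Contr f ∧ OrdPres f) : List.Pairwise step (toL f) := by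
  unfold toL
  refine List.Pairwise.filterMap _ (R := fun x y : Fin n => y < x) ?_ ?_
  · rintro x y hyx p hp q hq
    rw [Option.map_eq_some_iff] at hp hq
    obtain ⟨a, hfa, rfl⟩ := hp
    obtain ⟨b, hfb, rfl⟩ := hq
    have hle : b ≤ a := hf.2.2 y x b a hfb hfa (le_of_lt hyx)
    have hne : b ≠ a := by
      intro h
      exact absurd (hf.1 y x a (h ▸ hfb) hfa) (ne_of_lt hyx)
    have hblt : b.1 < a.1 := lt_of_le_of_ne (by exact_mod_cast hle) (fun h => hne (Fin.ext h))
    have hcon := hf.2.1 x y a b hfa hfb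
    rw [abs_of_nonneg (by push_cast; omega), abs_of_nonneg (by push_cast; omega)] at hcon
    refine ⟨hyx, hblt, ?_⟩
    push_cast at hcon
    omega
  · rw [List.pairwise_reverse]
    exact List.pairwise_lt_finRange n

lemma toL_mem_TB {f : Fin n → Option (Fin n)}
    (hf : PInj f ∧ Contr f ∧ OrdPres f) : toL f ∈ TB n := by
  refine mem_TB.mpr ⟨pairwise_toL hf, ?_⟩
  intro p hp
  obtain ⟨x, a, _, rfl⟩ := mem_toL.mp hp
  exact ⟨x.isLt, a.isLt⟩

def ofL (l : List (ℕ × ℕ)) : Fin n → Option (Fin n) := fun x =>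
  (l.find? fun p => p.1 == x.1).bind fun p => if h : p.2 < n then some ⟨p.2, h⟩ else none

lemma pairwise_cases {α : Type*} {R : α → α → Prop} {l : List α}
    (h : List.Pairwise R l) {p q : α} (hp : p ∈ l) (hq : q ∈ l) :
    p = q ∨ R p q ∨ R q p := by
  induction l with
  | nil => simp at hp
  | cons a t ih =>
    obtain ⟨ha, hpw⟩ := List.pairwise_cons.mp h
    rcases List.mem_cons.mp hp with hp1 | hp1 <;> rcases List.mem_cons.mp hq with hq1 | hq1
    · exact Or.inl (hp1.trans hq1.symm)
    · exact Or.inr (Or.inl (hp1 ▸ ha q hq1))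
    · exact Or.inr (Or.inr (hq1 ▸ ha p hp1))
    · exact ih hpw hp1 hq1

lemma fst_unique {l : List (ℕ × ℕ)} (h : List.Pairwise step l) {p q : ℕ × ℕ}
    (hp : p ∈ l) (hq : q ∈ l) (h1 : p.1 = q.1) : p = q := by
  rcases pairwise_cases h hp hq with rfl | hs | hs
  · rfl
  · exact absurd h1 (by have := hs.1; omega)
  · exact absurd h1 (by have := hs.1; omega)

lemma ofL_eq_some {l : List (ℕ × ℕ)} (hpw : List.Pairwise step l) {x a : Fin n} :
    ofL l x = some a ↔ (x.1, a.1) ∈ l := by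
  constructor
  · intro h
    unfold ofL at h
    cases hfind : l.find? fun p => p.1 == x.1 with
    | none => rw [hfind] at h; exact absurd h (by simp)
    | some p =>
      rw [hfind] at h
      rw [Option.bind_some] at h
      split at h
      · have hpx : p.1 = x.1 := by simpa using List.find?_some hfind
        have hpa : p.2 = a.1 := by
          have := Option.some.inj h
          exact congrArg Fin.val this.symm ▸ rfl
        have hmem := List.mem_of_find?_eq_some hfind
        have : p = (x.1, a.1) := Prod.ext hpx hpa
        exact this ▸ hmem
      · exact absurd h (by simp)
  · intro hmem
    have hsome : (l.find? fun p => p.1 == x.1).isSome :=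
      List.find?_isSome.mpr ⟨(x.1, a.1), hmem, by simp⟩
    obtain ⟨p, hp⟩ := Option.isSome_iff_exists.mp hsome
    have hpx : p.1 = x.1 := by simpa using List.find?_some hp
    have hpmem := List.mem_of_find?_eq_some hp
    have hpe : p = (x.1, a.1) := fst_unique hpw hpmem hmem hpx
    unfold ofL
    rw [hp, hpe]
    rw [Option.bind_some]
    rw [dif_pos a.isLt]

lemma ofL_props {l : List (ℕ × ℕ)} (hl : l ∈ TB n) :
    PInj (ofL l : Fin n → Option (Fin n)) ∧ Contr (ofL l : Fin n → Option (Fin n)) ∧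
      OrdPres (ofL l : Fin n → Option (Fin n)) := by
  obtain ⟨hpw, hbd⟩ := mem_TB.mp hl
  refine ⟨?_, ?_, ?_⟩
  · intro x y a hx hy
    have hxm := (ofL_eq_some hpw).mp hx
    have hym := (ofL_eq_some hpw).mp hy
    rcases pairwise_cases hpw hxm hym with he | hs | hs
    · exact Fin.ext (congrArg Prod.fst he)
    · exact absurd hs.2.1 (by omega)
    · exact absurd hs.2.1 (by omega)
  · intro x y a b hx hy
    have hxm := (ofL_eq_some hpw).mp hx
    have hym := (ofL_eq_some hpw).mp hy
    rcases pairwise_cases hpw hxm hym with he | hs | hs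
    · have h1 : x.1 = y.1 := congrArg Prod.fst he
      have h2 : a.1 = b.1 := congrArg Prod.snd he
      rw [h1, h2]; simp
    · obtain ⟨s1, s2, s3⟩ := hs
      simp only at s1 s2 s3
      rw [abs_of_nonneg (by push_cast; omega), abs_of_nonneg (by push_cast; omega)]
      push_cast; omega
    · obtain ⟨s1, s2, s3⟩ := hs
      simp only at s1 s2 s3
      rw [abs_of_nonpos (by push_cast; omega), abs_of_nonpos (by push_cast; omega)]
      push_cast; omega
  · intro x y a b hx hy hxy
    have hxm := (ofL_eq_some hpw).mp hx
    have hym := (ofL_eq_some hpw).mp hy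
    rcases pairwise_cases hpw hxm hym with he | hs | hs
    · have h2 : a.1 = b.1 := congrArg Prod.snd he
      exact le_of_eq (Fin.ext h2)
    · have := hs.1; simp only at this
      exact absurd hxy (by rw [Fin.le_iff_val_le_val]; omega)
    · have := hs.2.1; simp only at this
      rw [Fin.le_iff_val_le_val]; omega

lemma ofL_toL {f : Fin n → Option (Fin n)} (hf : PInj f ∧ Contr f ∧ OrdPres f) :
    (ofL (toL f) : Fin n → Option (Fin n)) = f := by
  funext x
  cases hfx : f x with
  | none =>
    unfold ofL
    have : (toL f).find? (fun p => p.1 == x.1) = none := by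
      rw [List.find?_eq_none]
      intro p hp
      obtain ⟨x', a', hfa', rfl⟩ := mem_toL.mp hp
      simp only [beq_iff_eq]
      intro hxx
      have : x' = x := Fin.ext hxx
      rw [this, hfx] at hfa'
      cases hfa'
    rw [this, Option.bind_none]
  | some a =>
    exact (ofL_eq_some (pairwise_toL hf)).mpr (mem_toL.mpr ⟨x, a, hfx, rfl⟩)

instance : IsAntisymm (ℕ × ℕ) (fun p q : ℕ × ℕ => q.1 < p.1) :=
  ⟨fun _ _ h1 h2 => absurd h1 (by omega)⟩

lemma toL_ofL {l : List (ℕ × ℕ)} (hl : l ∈ TB n) : toL (ofL l : Fin n → Option (Fin n)) = l := by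
  obtain ⟨hpw, hbd⟩ := mem_TB.mp hl
  have hmemiff : ∀ p : ℕ × ℕ, p ∈ toL (ofL l : Fin n → Option (Fin n)) ↔ p ∈ l := by
    intro p
    rw [mem_toL]
    constructor
    · rintro ⟨x, a, hfa, rfl⟩
      exact (ofL_eq_some hpw).mp hfa
    · intro hp
      obtain ⟨h1, h2⟩ := hbd p hp
      refine ⟨⟨p.1, h1⟩, ⟨p.2, h2⟩, (ofL_eq_some hpw).mpr ?_, rfl⟩
      exact hp
  have hs1 : List.Pairwise (fun p q : ℕ × ℕ => q.1 < p.1) (toL (ofL l : Fin n → Option (Fin n))) :=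
    (pairwise_toL (ofL_props hl)).imp fun h => h.1
  have hs2 : List.Pairwise (fun p q : ℕ × ℕ => q.1 < p.1) l := hpw.imp fun h => h.1
  have hn1 : (toL (ofL l : Fin n → Option (Fin n))).Nodup :=
    hs1.imp fun h => by intro he; rw [he] at h; omega
  have hn2 : l.Nodup := hs2.imp fun h => by intro he; rw [he] at h; omega
  refine List.Perm.eq_of_pairwise (fun _ _ _ _ h1 h2 => absurd h1 (by omega)) hs1 hs2 ?_
  refine List.perm_of_nodup_nodup_toFinset_eq hn1 hn2 ?_
  ext p
  simp only [List.mem_toFinset]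
  exact hmemiff p

lemma main_card (n : ℕ) :
    Nat.card {f : Fin n → Option (Fin n) // PInj f ∧ Contr f ∧ OrdPres f} = (TB n).card := by
  have e : {f : Fin n → Option (Fin n) // PInj f ∧ Contr f ∧ OrdPres f} ≃ {l // l ∈ TB n} :=
    { toFun := fun f => ⟨toL f.1, toL_mem_TB f.2⟩
      invFun := fun l => ⟨ofL l.1, ofL_props l.2⟩
      left_inv := fun f => Subtype.ext (ofL_toL f.2)
      right_inv := fun l => Subtype.ext (toL_ofL l.2) }
  rw [Nat.card_congr e, Nat.card_eq_fintype_card, Fintype.card_coe]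

end Bij

theorem final_count (n : ℕ) :
    (5 : ℤ) * (Nat.card {f : Fin n → Option (Fin n) //
        PInj f ∧ Contr f ∧ OrdPres f} : ℤ) =
      (3 * (n : ℤ) - 1) * Nat.fib (2 * n) - ((n : ℤ) - 5) * Nat.fib (2 * n + 1) := by
  have hcard : (Nat.card {f : Fin n → Option (Fin n) //
      PInj f ∧ Contr f ∧ OrdPres f} : ℤ) =
      1 + ∑ x ∈ Finset.range n, ∑ y ∈ Finset.range n, (Nc x y : ℤ) := by
    rw [main_card, card_TB]
    push_cast [Finset.sum_product]
    ring
  rw [hcard]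
  have hrow : ∀ x ∈ Finset.range n, ∑ y ∈ Finset.range n, (Nc x y : ℤ)
      = Sz x + ((n:ℤ) - 1 - x) * Nat.fib (2*x+1) :=
    fun x hx => row_sum x n (Finset.mem_range.mp hx)
  rw [Finset.sum_congr rfl hrow]
  have expand : ∀ x ∈ Finset.range n,
      5 * (Sz x + ((n:ℤ) - 1 - x) * Nat.fib (2*x+1)) =
      ((2 - (x:ℤ)) * Nat.fib (2*x) - 3*(x:ℤ)*Nat.fib (2*x+1))
        + 5*(n:ℤ)*Nat.fib (2*x+1) := fun x _ => by
    linear_combination B3 x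
  have hf : ∑ x ∈ Finset.range n, (Nat.fib (2*x+1) : ℤ) = (Nat.fib (2*n) : ℤ) :=
    by exact_mod_cast congrArg (Nat.cast : ℕ → ℤ) (sum_fib_odd n)
  rw [mul_add, Finset.mul_sum, Finset.sum_congr rfl expand, Finset.sum_add_distrib, sumE n,
    ← Finset.mul_sum, hf]
  ring


end OCIProof


/-- The order of `OCI_n` satisfies `5·|OCI_n| = (3n-1)·F_{2n} - (n-5)·F_{2n+1}`. -/
theorem OCI_order (n : ℕ) :
    (5 : ℤ) * (Nat.card {f : Fin n → Option (Fin n) //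
        PInj f ∧ Contr f ∧ OrdPres f} : ℤ) =
      (3 * (n : ℤ) - 1) * Nat.fib (2 * n) - ((n : ℤ) - 5) * Nat.fib (2 * n + 1) := by
  exact OCIProof.final_count n
end

section
/- Let h_n = |OCI_n| be the number of order-preserving partial injective contractions of X_n = {1,…,n}. Then h_0 = 1, h_1 = 2, h_2 = 6, h_3 = 18, and for all n ≥ 4, h_n + 11·h_{n−2} + h_{n−4} = 6·h_{n−1} + 6·h_{n−3} (i.e., h_n = 6h_{n−1} − 11h_{n−2} + 6h_{n−3} − h_{n−4}). -/
namespace OCIwork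

abbrev Pr := ℕ × ℕ

def Step (p q : Pr) : Prop := p.2 < q.2 ∧ q.2 + p.1 ≤ p.2 + q.1

lemma Step.fst_lt {p q : Pr} (h : Step p q) : p.1 < q.1 := by
  obtain ⟨h1, h2⟩ := h; omega

instance : IsTrans Pr Step := ⟨fun p q r hpq hqr => by
  obtain ⟨a, b⟩ := hpq; obtain ⟨c, d⟩ := hqr; exact ⟨a.trans c, by omega⟩⟩

def EndAt (d e : ℕ) : Finset (List Pr) :=
  insert [(d, e)] ((Finset.range e).attach.biUnion fun e' =>
    ((Finset.range (d + 1)).filter fun d' => e + d' ≤ (e' : ℕ) + d).biUnion fun d' =>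
      (EndAt d' e').image (fun l => l ++ [(d, e)]))
termination_by e
decreasing_by exact Finset.mem_range.mp e'.2

lemma mem_endAt : ∀ (e d : ℕ) (l : List Pr),
    l ∈ EndAt d e ↔ (List.Chain' Step l ∧ l.getLast? = some (d, e)) := by
  intro e
  induction e using Nat.strong_induction_on with
  | _ e IH =>
    intro d l
    rw [EndAt]
    simp only [Finset.mem_insert, Finset.mem_biUnion, Finset.mem_attach, Finset.mem_filter,
      Finset.mem_range, Finset.mem_image, true_and]
    constructor
    · rintro (rfl | ⟨e', d', ⟨hd', hcond⟩, l', hl', rfl⟩)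
      · exact ⟨List.isChain_singleton _, rfl⟩
      · have he' : (e' : ℕ) < e := Finset.mem_range.mp e'.2
        obtain ⟨hc, hlast⟩ := (IH e' he' d' l').mp hl'
        refine ⟨?_, List.getLast?_concat⟩
        rw [List.Chain', List.isChain_append]
        refine ⟨hc, List.isChain_singleton _, ?_⟩
        intro x hx y hy
        rw [hlast, Option.mem_some_iff] at hx
        simp only [List.head?_cons, Option.mem_some_iff] at hy
        subst hx; subst hy
        exact ⟨he', hcond⟩
    · rintro ⟨hc, hlast⟩
      have happ := List.dropLast_append_getLast? _ hlast
      rcases hd : l.dropLast with _ | ⟨p₀, t⟩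
      · left
        rw [hd] at happ; simpa using happ.symm
      · right
        have hdne : l.dropLast ≠ [] := by rw [hd]; simp
        obtain ⟨q, hq⟩ : ∃ q, l.dropLast.getLast? = some q :=
          Option.isSome_iff_exists.mp (List.getLast?_isSome.mpr hdne)
        rw [← happ, List.Chain', List.isChain_append] at hc
        obtain ⟨hc1, -, hstep⟩ := hc
        have hstepq : Step q (d, e) := hstep q hq (d, e) rfl
        have hq2 : q.2 < e := hstepq.1
        refine ⟨⟨q.2, Finset.mem_range.mpr hq2⟩, q.1, ⟨?_, ?_⟩, l.dropLast, ?_, happ⟩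
        · have := hstepq.fst_lt; simpa using Nat.lt_succ_of_lt this
        · exact hstepq.2
        · exact (IH q.2 hq2 q.1 l.dropLast).mpr ⟨hc1, by rw [hq]⟩

lemma ne_nil_of_mem_endAt {d e : ℕ} {l : List Pr} (h : l ∈ EndAt d e) : l ≠ [] := by
  obtain ⟨-, h2⟩ := (mem_endAt e d l).mp h
  intro hn; rw [hn] at h2; simp at h2

lemma getLast?_of_mem_endAt {d e : ℕ} {l : List Pr} (h : l ∈ EndAt d e) :
    l.getLast? = some (d, e) := ((mem_endAt e d l).mp h).2

def M (d e : ℕ) : ℕ := (EndAt d e).card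

lemma M_rec (d e : ℕ) : M d e = 1 + ∑ e' ∈ Finset.range e,
    ∑ d' ∈ (Finset.range (d + 1)).filter (fun d' => e + d' ≤ e' + d), M d' e' := by
  rw [show M d e = (EndAt d e).card from rfl, EndAt]
  rw [Finset.card_insert_of_notMem, add_comm]
  · congr 1
    rw [Finset.card_biUnion]
    · rw [← Finset.sum_attach (Finset.range e)
        (fun e' => ∑ d' ∈ (Finset.range (d + 1)).filter (fun d' => e + d' ≤ e' + d), M d' e')]
      refine Finset.sum_congr rfl fun e' _ => ?_
      show _ = ∑ d' ∈ (Finset.range (d + 1)).filter (fun d' => e + d' ≤ (e' : ℕ) + d), M d' (e' : ℕ)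
      rw [Finset.card_biUnion]
      · refine Finset.sum_congr rfl fun d' _ => ?_
        exact Finset.card_image_of_injective _ fun l₁ l₂ h => List.append_cancel_right h
      · intro d₁ h₁ d₂ h₂ hne
        simp only [Finset.disjoint_left]
        intro a ha1 ha2
        simp only [Finset.mem_image] at ha1 ha2
        obtain ⟨l₁, hl₁, rfl⟩ := ha1
        obtain ⟨l₂, hl₂, heq⟩ := ha2
        have : l₂ = l₁ := List.append_cancel_right heq
        subst this
        have g1 := getLast?_of_mem_endAt hl₁
        have g2 := getLast?_of_mem_endAt hl₂
        rw [g1] at g2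
        exact hne (by injection g2 with g2'; exact congrArg Prod.fst g2')
    · intro e₁ _ e₂ _ hne
      simp only [Finset.disjoint_left]
      intro a ha1 ha2
      simp only [Finset.mem_biUnion, Finset.mem_image] at ha1 ha2
      obtain ⟨d₁, -, l₁, hl₁, rfl⟩ := ha1
      obtain ⟨d₂, -, l₂, hl₂, heq⟩ := ha2
      have : l₂ = l₁ := List.append_cancel_right heq
      subst this
      have g1 := getLast?_of_mem_endAt hl₁
      have g2 := getLast?_of_mem_endAt hl₂
      rw [g1] at g2
      apply hne
      apply Subtype.ext
      injection g2 with g2'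
      exact congrArg Prod.snd g2'
  · intro hmem
    simp only [Finset.mem_biUnion, Finset.mem_image] at hmem
    obtain ⟨e', -, d', -, l', hl', heq⟩ := hmem
    have := ne_nil_of_mem_endAt hl'
    rcases l' with _ | ⟨p, t⟩
    · exact this rfl
    · simp at heq

lemma pairwise_cases {α : Type*} {R : α → α → Prop} {l : List α} (h : List.Pairwise R l) :
    ∀ p ∈ l, ∀ q ∈ l, p = q ∨ R p q ∨ R q p := by
  induction h with
  | nil => simp
  | cons hr _ ih =>
    intro p hp q hq
    rcases List.mem_cons.mp hp with rfl | hp'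
    · rcases List.mem_cons.mp hq with rfl | hq'
      · exact Or.inl rfl
      · exact Or.inr (Or.inl (hr q hq'))
    · rcases List.mem_cons.mp hq with rfl | hq'
      · exact Or.inr (Or.inr (hr p hp'))
      · exact ih p hp' q hq'

lemma mem_le_getLast {l : List Pr} {q : Pr} (hc : List.Chain' Step l)
    (hlast : l.getLast? = some q) : ∀ p ∈ l, p.1 ≤ q.1 ∧ p.2 ≤ q.2 := by
  intro p hp
  have hpw := List.isChain_iff_pairwise.mp hc
  have hq : q ∈ l := List.mem_of_getLast? hlast
  rcases pairwise_cases hpw p hp q hq with rfl | hs | hs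
  · exact ⟨le_refl _, le_refl _⟩
  · exact ⟨le_of_lt hs.fst_lt, le_of_lt hs.1⟩
  · -- Step q p : impossible since q is the last; derive contradiction
    exfalso
    have happ := List.dropLast_append_getLast? _ hlast
    rcases List.mem_append.mp (happ ▸ hp) with hp' | hp'
    · rw [← happ, List.pairwise_append] at hpw
      have h1 := (hpw.2.2 p hp' q (by simp)).fst_lt
      have h2 := hs.fst_lt
      omega
    · simp only [List.mem_singleton] at hp'
      subst hp'
      exact absurd hs.1 (lt_irrefl _)
  
def Lset (n : ℕ) : Finset (List Pr) :=
  insert [] ((Finset.range n ×ˢ Finset.range n).biUnion fun p => EndAt p.1 p.2)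

lemma mem_Lset {n : ℕ} {l : List Pr} :
    l ∈ Lset n ↔ List.Chain' Step l ∧ ∀ p ∈ l, p.1 < n ∧ p.2 < n := by
  unfold Lset
  simp only [Finset.mem_insert, Finset.mem_biUnion, Finset.mem_product, Finset.mem_range]
  constructor
  · rintro (rfl | ⟨⟨d, e⟩, ⟨hd, he⟩, hl⟩)
    · exact ⟨List.isChain_nil, by simp⟩
    · obtain ⟨hc, hlast⟩ := (mem_endAt e d l).mp hl
      refine ⟨hc, fun p hp => ?_⟩
      have := mem_le_getLast hc hlast p hp
      exact ⟨by omega, by omega⟩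
  · rintro ⟨hc, hb⟩
    rcases hl : l with _ | ⟨p₀, t⟩
    · exact Or.inl rfl
    · right
      rw [← hl]
      have hne : l ≠ [] := by rw [hl]; simp
      set q := l.getLast hne with hq
      have hlast : l.getLast? = some q := List.getLast?_eq_getLast hne
      have hqmem : q ∈ l := List.mem_of_getLast? hlast
      refine ⟨q, ⟨(hb q hqmem).1, (hb q hqmem).2⟩, ?_⟩
      exact (mem_endAt q.2 q.1 l).mpr ⟨hc, by rw [hlast]⟩

lemma card_Lset (n : ℕ) :
    (Lset n).card = 1 + ∑ p ∈ Finset.range n ×ˢ Finset.range n, M p.1 p.2 := by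
  unfold Lset
  rw [Finset.card_insert_of_notMem, add_comm]
  · congr 1
    have hdisj : ∀ p₁ ∈ Finset.range n ×ˢ Finset.range n, ∀ p₂ ∈ Finset.range n ×ˢ Finset.range n,
        p₁ ≠ p₂ → Disjoint (EndAt p₁.1 p₁.2) (EndAt p₂.1 p₂.2) := by
      intro p₁ _ p₂ _ hne
      simp only [Finset.disjoint_left]
      intro a ha1 ha2
      have g1 := getLast?_of_mem_endAt ha1
      have g2 := getLast?_of_mem_endAt ha2
      rw [g1] at g2
      injection g2 with g2'
      exact hne (by rw [Prod.ext_iff] at g2' ⊢; exact ⟨g2'.1, g2'.2⟩)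
    rw [Finset.card_biUnion hdisj]
    rfl
  · intro hmem
    simp only [Finset.mem_biUnion] at hmem
    obtain ⟨p, -, hl⟩ := hmem
    exact ne_nil_of_mem_endAt hl rfl

lemma abs_helper {a b x y : ℕ} (h1 : a < b) (h2 : x < y) (h3 : b + x ≤ a + y) :
    |(a : ℤ) - b| ≤ |(x : ℤ) - y| := by
  rw [abs_sub_comm (a : ℤ), abs_sub_comm (x : ℤ),
    abs_of_nonneg (by push_cast; omega : (0:ℤ) ≤ (b : ℤ) - a),
    abs_of_nonneg (by push_cast; omega : (0:ℤ) ≤ (y : ℤ) - x)]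
  omega

lemma abs_helper2 {a b x y : ℕ} (h1 : a < b) (h2 : x < y)
    (h : |(a : ℤ) - b| ≤ |(x : ℤ) - y|) : b + x ≤ a + y := by
  rw [abs_sub_comm (a : ℤ), abs_sub_comm (x : ℤ),
    abs_of_nonneg (by push_cast; omega : (0:ℤ) ≤ (b : ℤ) - a),
    abs_of_nonneg (by push_cast; omega : (0:ℤ) ≤ (y : ℤ) - x)] at h
  omega

def toF (n : ℕ) (l : List Pr) : Fin n → Option (Fin n) := fun x =>
  (l.find? (fun p => p.1 == (x : ℕ))).bind fun p =>
    if h : p.2 < n then some ⟨p.2, h⟩ else none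

lemma toF_eq_some_iff {n : ℕ} {l : List Pr} (hc : List.Chain' Step l)
    (hb : ∀ p ∈ l, p.2 < n) {x a : Fin n} :
    toF n l x = some a ↔ ((x : ℕ), (a : ℕ)) ∈ l := by
  constructor
  · intro h
    unfold toF at h
    rcases hf : l.find? (fun p => p.1 == (x : ℕ)) with _ | p
    · rw [hf] at h; simp at h
    · rw [hf] at h
      simp only [Option.bind_some] at h
      have hmem := List.mem_of_find?_eq_some hf
      have hp1 : p.1 = (x : ℕ) := by simpa using List.find?_some hf
      rw [dif_pos (hb p hmem)] at h
      injection h with h'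
      have h2 : p.2 = (a : ℕ) := by rw [← h']
      have : p = ((x : ℕ), (a : ℕ)) := Prod.ext hp1 h2
      rw [← this]; exact hmem
  · intro hmem
    have hfs : (l.find? (fun p => p.1 == (x : ℕ))).isSome :=
      List.find?_isSome.mpr ⟨_, hmem, by simp⟩
    obtain ⟨p, hf⟩ := Option.isSome_iff_exists.mp hfs
    have hpmem := List.mem_of_find?_eq_some hf
    have hp1 : p.1 = (x : ℕ) := by simpa using List.find?_some hf
    have hpw := List.isChain_iff_pairwise.mp hc
    have hpe : p = ((x : ℕ), (a : ℕ)) := by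
      rcases pairwise_cases hpw p hpmem _ hmem with h | h | h
      · exact h
      · exact absurd h.fst_lt (by simp [hp1])
      · exact absurd h.fst_lt (by simp [hp1])
    unfold toF
    rw [hf, hpe]
    simp only [Option.bind_some]
    rw [dif_pos (by exact a.isLt)]

lemma toF_good {n : ℕ} {l : List Pr} (hl : l ∈ Lset n) :
    PInj (toF n l) ∧ Contr (toF n l) ∧ OrdPres (toF n l) := by
  obtain ⟨hc, hb⟩ := mem_Lset.mp hl
  have hchar : ∀ (x a : Fin n), toF n l x = some a ↔ ((x : ℕ), (a : ℕ)) ∈ l :=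
    fun x a => toF_eq_some_iff hc (fun p hp => (hb p hp).2)
  have hpw := List.isChain_iff_pairwise.mp hc
  refine ⟨?_, ?_, ?_⟩
  · intro x y a hx hy
    have mx := (hchar x a).mp hx
    have my := (hchar y a).mp hy
    rcases pairwise_cases hpw _ mx _ my with h | h | h
    · exact Fin.ext (congrArg Prod.fst h)
    · exact absurd h.1 (by simp)
    · exact absurd h.1 (by simp)
  · intro x y a b hx hy
    have mx := (hchar x a).mp hx
    have my := (hchar y b).mp hy
    rcases pairwise_cases hpw _ mx _ my with h | h | h
    · injection h with h1 h2
      rw [h1, h2]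
      simp
    · exact abs_helper h.1 h.fst_lt h.2
    · rw [abs_sub_comm ((a : ℕ) : ℤ), abs_sub_comm ((x : ℕ) : ℤ)]
      exact abs_helper h.1 h.fst_lt h.2
  · intro x y a b hx hy hxy
    have mx := (hchar x a).mp hx
    have my := (hchar y b).mp hy
    rcases pairwise_cases hpw _ mx _ my with h | h | h
    · exact le_of_eq (Fin.ext (congrArg Prod.snd h))
    · exact le_of_lt h.1
    · have := h.fst_lt
      have hxy' : (x : ℕ) ≤ (y : ℕ) := hxy
      simp only at this
      omega

def listOf {n : ℕ} (f : Fin n → Option (Fin n)) : List Pr :=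
  (List.finRange n).filterMap fun x => (f x).map fun a : Fin n => ((x : ℕ), (a : ℕ))

lemma mem_listOf {n : ℕ} {f : Fin n → Option (Fin n)} {p : Pr} :
    p ∈ listOf f ↔ ∃ x a, f x = some a ∧ ((x : ℕ), (a : ℕ)) = p := by
  constructor
  · intro hp
    obtain ⟨x, -, hx⟩ := List.mem_filterMap.mp hp
    obtain ⟨a, ha, hpa⟩ := Option.map_eq_some_iff.mp hx
    exact ⟨x, a, ha, hpa⟩
  · rintro ⟨x, a, ha, rfl⟩
    exact List.mem_filterMap.mpr ⟨x, List.mem_finRange x, by rw [ha]; rfl⟩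

lemma pairwise_fst_listOf {n : ℕ} (f : Fin n → Option (Fin n)) :
    List.Pairwise (fun p q : Pr => p.1 < q.1) (listOf f) := by
  rw [listOf, List.pairwise_filterMap]
  refine (List.pairwise_lt_finRange n).imp ?_
  intro x y hxy b hb b' hb'
  obtain ⟨a, -, hba⟩ := Option.map_eq_some_iff.mp hb
  obtain ⟨a', -, hba'⟩ := Option.map_eq_some_iff.mp hb'
  subst hba; subst hba'
  exact hxy

lemma listOf_mem_Lset {n : ℕ} {f : Fin n → Option (Fin n)}
    (hi : PInj f) (hco : Contr f) (ho : OrdPres f) : listOf f ∈ Lset n := by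
  rw [mem_Lset]
  constructor
  · apply List.Pairwise.isChain
    rw [listOf, List.pairwise_filterMap]
    refine (List.pairwise_lt_finRange n).imp ?_
    intro x y hxy b hb b' hb'
    obtain ⟨a, ha, hba⟩ := Option.map_eq_some_iff.mp hb
    obtain ⟨a', ha', hba'⟩ := Option.map_eq_some_iff.mp hb'
    subst hba; subst hba'
    have hle : a ≤ a' := ho x y a a' ha ha' (le_of_lt hxy)
    have hne : a ≠ a' := fun h => absurd (hi x y a' (h ▸ ha) ha') (ne_of_lt hxy)
    have hlt : (a : ℕ) < (a' : ℕ) := lt_of_le_of_ne hle (fun h => hne (Fin.ext h))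
    refine ⟨hlt, ?_⟩
    exact abs_helper2 hlt hxy (hco x y a a' ha ha')
  · intro p hp
    obtain ⟨x, a, -, rfl⟩ := mem_listOf.mp hp
    exact ⟨x.isLt, a.isLt⟩

lemma toF_listOf {n : ℕ} {f : Fin n → Option (Fin n)}
    (hi : PInj f) (hco : Contr f) (ho : OrdPres f) : toF n (listOf f) = f := by
  obtain ⟨hc, hb⟩ := mem_Lset.mp (listOf_mem_Lset hi hco ho)
  have hchar : ∀ (x a : Fin n), toF n (listOf f) x = some a ↔ ((x : ℕ), (a : ℕ)) ∈ listOf f :=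
    fun x a => toF_eq_some_iff hc (fun p hp => (hb p hp).2)
  funext x
  rcases hfx : f x with _ | a
  · rcases htf : toF n (listOf f) x with _ | a'
    · rfl
    · exfalso
      obtain ⟨x', a', ha', hpe⟩ := mem_listOf.mp ((hchar x a').mp htf)
      have hx' : x' = x := Fin.ext (congrArg Prod.fst hpe)
      rw [hx', hfx] at ha'
      cases ha'
  · exact (hchar x a).mpr (mem_listOf.mpr ⟨x, a, hfx, rfl⟩)

lemma sorted_mem_unique {l₁ l₂ : List Pr}
    (h₁ : List.Pairwise (fun p q : Pr => p.1 < q.1) l₁)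
    (h₂ : List.Pairwise (fun p q : Pr => p.1 < q.1) l₂)
    (hmem : ∀ p, p ∈ l₁ ↔ p ∈ l₂) : l₁ = l₂ := by
  haveI : IsAntisymm Pr (fun p q => p.1 < q.1) := ⟨fun a b u v => by omega⟩
  have nd₁ : l₁.Nodup := h₁.imp (fun h => by intro he; rw [he] at h; exact lt_irrefl _ h)
  have nd₂ : l₂.Nodup := h₂.imp (fun h => by intro he; rw [he] at h; exact lt_irrefl _ h)
  have hperm : List.Perm l₁ l₂ :=
    (nd₁.subperm (fun p hp => (hmem p).mp hp)).antisymm (nd₂.subperm fun p hp => (hmem p).mpr hp)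
  exact List.Perm.eq_of_pairwise (fun a b _ _ u v => by omega) h₁ h₂ hperm

lemma listOf_toF {n : ℕ} {l : List Pr} (hl : l ∈ Lset n) : listOf (toF n l) = l := by
  obtain ⟨hc, hb⟩ := mem_Lset.mp hl
  have hchar : ∀ (x a : Fin n), toF n l x = some a ↔ ((x : ℕ), (a : ℕ)) ∈ l :=
    fun x a => toF_eq_some_iff hc (fun p hp => (hb p hp).2)
  refine sorted_mem_unique (pairwise_fst_listOf _)
    ((List.isChain_iff_pairwise.mp hc).imp (fun h => h.fst_lt)) ?_
  intro p
  rw [mem_listOf]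
  constructor
  · rintro ⟨x, a, hxa, rfl⟩
    exact (hchar x a).mp hxa
  · intro hp
    refine ⟨⟨p.1, (hb p hp).1⟩, ⟨p.2, (hb p hp).2⟩, ?_, rfl⟩
    exact (hchar _ _).mpr (by simpa using hp)

lemma card_good (n : ℕ) :
    Nat.card {f : Fin n → Option (Fin n) // PInj f ∧ Contr f ∧ OrdPres f} = (Lset n).card := by
  rw [← Nat.card_eq_finsetCard]
  exact Nat.card_congr
    (Equiv.symm ⟨fun l => ⟨toF n l.1, toF_good l.2⟩,
      fun f => ⟨listOf f.1, listOf_mem_Lset f.2.1 f.2.2.1 f.2.2.2⟩,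
      fun l => Subtype.ext (listOf_toF l.2),
      fun f => Subtype.ext (toF_listOf f.2.1 f.2.2.1 f.2.2.2)⟩)

def U (e m : ℕ) : ℕ := ∑ d' ∈ Finset.range m, M d' e

lemma M_eq (d e : ℕ) : M d e = 1 + ∑ e' ∈ Finset.range e, U e' (e' + d + 1 - e) := by
  rw [M_rec]
  congr 1
  refine Finset.sum_congr rfl fun e' he' => ?_
  have he' := Finset.mem_range.mp he'
  unfold U
  apply Finset.sum_congr
  · ext d'
    simp only [Finset.mem_filter, Finset.mem_range]
    omega
  · intros; rfl

lemma M_zero_left (e : ℕ) : M 0 e = 1 := by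
  have h : ∀ e' ∈ Finset.range e, U e' (e' + 0 + 1 - e) = 0 := by
    intro e' he'
    have := Finset.mem_range.mp he'
    have h0 : e' + 0 + 1 - e = 0 := by omega
    rw [h0]
    rfl
  rw [M_eq, Finset.sum_eq_zero h]
  rfl

lemma M_zero_right (d : ℕ) : M d 0 = 1 := by rw [M_eq]; simp

lemma M_one (e : ℕ) : M 1 (e + 1) = 2 := by
  rw [M_eq, Finset.sum_range_succ]
  have h1 : ∀ e' ∈ Finset.range e, U e' (e' + 1 + 1 - (e + 1)) = 0 := by
    intro e' he'
    have := Finset.mem_range.mp he'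
    have h0 : e' + 1 + 1 - (e + 1) = 0 := by omega
    rw [h0]
    rfl
  rw [Finset.sum_eq_zero h1]
  have h2 : e + 1 + 1 - (e + 1) = 1 := by omega
  rw [h2]
  have hU : U e 1 = 1 := by unfold U; rw [Finset.sum_range_one, M_zero_left]
  omega

lemma M_pascal (a b : ℕ) :
    M (a + 2) (b + 1) + M a b = 2 * M (a + 1) b + M (a + 1) (b + 1) := by
  have s1 : ∑ e' ∈ Finset.range b, U e' (e' + (a + 2) + 1 - (b + 1))
      = ∑ e' ∈ Finset.range b, U e' (e' + a + 2 - b) :=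
    Finset.sum_congr rfl fun e' _ => by congr 1 <;> omega
  have s3 : ∑ e' ∈ Finset.range b, U e' (e' + (a + 1) + 1 - b)
      = ∑ e' ∈ Finset.range b, U e' (e' + a + 2 - b) :=
    Finset.sum_congr rfl fun e' _ => by congr 1 <;> omega
  have s4 : ∑ e' ∈ Finset.range b, U e' (e' + (a + 1) + 1 - (b + 1))
      = ∑ e' ∈ Finset.range b, U e' (e' + a + 1 - b) :=
    Finset.sum_congr rfl fun e' _ => by congr 1 <;> omega
  have e1 : M (a + 2) (b + 1)
      = 1 + (∑ e' ∈ Finset.range b, U e' (e' + a + 2 - b) + U b (a + 2)) := by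
    rw [M_eq, Finset.sum_range_succ, s1, show b + (a + 2) + 1 - (b + 1) = a + 2 from by omega]
  have e2 : M a b = 1 + ∑ e' ∈ Finset.range b, U e' (e' + a + 1 - b) := M_eq a b
  have e3 : M (a + 1) b = 1 + ∑ e' ∈ Finset.range b, U e' (e' + a + 2 - b) := by
    rw [M_eq, s3]
  have e4 : M (a + 1) (b + 1)
      = 1 + (∑ e' ∈ Finset.range b, U e' (e' + a + 1 - b) + U b (a + 1)) := by
    rw [M_eq, Finset.sum_range_succ, s4, show b + (a + 1) + 1 - (b + 1) = a + 1 from by omega]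
  have e5 : U b (a + 2) = U b (a + 1) + M (a + 1) b := by
    unfold U
    rw [Finset.sum_range_succ]
  omega

lemma M_stab : ∀ d e, d ≤ e → M d e = M d d := by
  intro d
  induction d using Nat.strong_induction_on with
  | _ d IH =>
    rcases d with _ | d'
    · intro e _
      rw [M_zero_left, M_zero_left]
    rcases d' with _ | a
    · intro e he
      have he' : 1 ≤ e := he
      rcases Nat.exists_eq_add_of_le he' with ⟨k, rfl⟩
      show M 1 (1 + k) = M 1 1
      rcases k with _ | k
      · rfl
      · have h1 : M 1 (1 + (k + 1)) = 2 := by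
          rw [show 1 + (k + 1) = (1 + k) + 1 from by omega, M_one]
        have h2 : M 1 1 = 2 := M_one 0
        omega
    · intro e he
      have he' : a + 2 ≤ e := he
      rcases Nat.exists_eq_add_of_le he' with ⟨k, rfl⟩
      show M (a + 2) (a + 2 + k) = M (a + 2) (a + 2)
      rcases k with _ | k
      · rfl
      · have hb : a + 2 + (k + 1) = (a + 2 + k) + 1 := by omega
        rw [hb]
        have hp1 := M_pascal a (a + 2 + k)
        have s1 : M (a + 1) (a + 2 + k) = M (a + 1) (a + 1) := IH (a + 1) (by omega) _ (by omega)
        have s2 : M (a + 1) (a + 2 + k + 1) = M (a + 1) (a + 1) := IH (a + 1) (by omega) _ (by omega)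
        have s3 : M a (a + 2 + k) = M a a := IH a (by omega) _ (by omega)
        have hp2 := M_pascal a (a + 1)
        rw [show a + 1 + 1 = a + 2 from rfl] at hp2
        have s4 : M a (a + 1) = M a a := IH a (by omega) _ (by omega)
        have s5 : M (a + 1) (a + 2) = M (a + 1) (a + 1) := IH (a + 1) (by omega) _ (by omega)
        omega

lemma M_diag_rec (d : ℕ) : M (d + 2) (d + 2) + M d d = 3 * M (d + 1) (d + 1) := by
  have hp := M_pascal d (d + 1)
  rw [show d + 1 + 1 = d + 2 from rfl] at hp
  have s4 : M d (d + 1) = M d d := M_stab d (d + 1) (by omega)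
  have s5 : M (d + 1) (d + 2) = M (d + 1) (d + 1) := M_stab (d + 1) (d + 2) (by omega)
  omega

def R (d : ℕ) : ℕ := ∑ e ∈ Finset.range d, M d e

lemma R_rec (d : ℕ) : R (d + 2) + R d + M d d = 3 * R (d + 1) + M (d + 1) (d + 1) := by
  have key : ∑ e ∈ Finset.range (d + 1), (M (d + 2) (e + 1) + M d e)
      = ∑ e ∈ Finset.range (d + 1), (2 * M (d + 1) e + M (d + 1) (e + 1)) :=
    Finset.sum_congr rfl fun e _ => M_pascal d e
  rw [Finset.sum_add_distrib, Finset.sum_add_distrib] at key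
  have p1 : R (d + 2) = (∑ e ∈ Finset.range (d + 1), M (d + 2) (e + 1)) + 1 := by
    unfold R
    rw [Finset.sum_range_succ', M_zero_right]
  have p2 : ∑ e ∈ Finset.range (d + 1), M d e = R d + M d d := Finset.sum_range_succ _ d
  have p3 : ∑ e ∈ Finset.range (d + 1), 2 * M (d + 1) e = 2 * R (d + 1) := by
    rw [← Finset.mul_sum]
    rfl
  have p4 : (∑ e ∈ Finset.range (d + 1), M (d + 1) (e + 1)) + 1 = R (d + 1) + M (d + 1) (d + 1) := by
    have h5 := Finset.sum_range_succ' (fun e => M (d + 1) e) (d + 1)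
    rw [Finset.sum_range_succ, M_zero_right] at h5
    have : (∑ e ∈ Finset.range (d + 1), M (d + 1) e) = R (d + 1) := rfl
    omega
  omega

def Eaux (m : ℕ) : ℕ := ∑ x ∈ Finset.range m, M x x

def G (m : ℕ) : ℕ := ∑ d ∈ Finset.range m, ∑ e ∈ Finset.range m, M d e

lemma G_step (m : ℕ) : G (m + 1) = G m + R m + Eaux m + M m m := by
  unfold G
  rw [Finset.sum_range_succ]
  have h1 : ∀ d ∈ Finset.range m, ∑ e ∈ Finset.range (m + 1), M d e
      = (∑ e ∈ Finset.range m, M d e) + M d m := fun d _ => Finset.sum_range_succ _ _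
  rw [Finset.sum_congr rfl h1, Finset.sum_add_distrib]
  have h2 : ∑ e ∈ Finset.range (m + 1), M m e = R m + M m m := Finset.sum_range_succ _ _
  have h3 : ∑ d ∈ Finset.range m, M d m = Eaux m := by
    unfold Eaux
    exact Finset.sum_congr rfl fun d hd => M_stab d m (le_of_lt (Finset.mem_range.mp hd))
  have h4 : (∑ d ∈ Finset.range m, ∑ e ∈ Finset.range m, M d e) = G m := rfl
  have h5 : (∑ e ∈ Finset.range m, M m e) = R m := rfl
  omega

lemma Eaux_step (m : ℕ) : Eaux (m + 1) = Eaux m + M m m := Finset.sum_range_succ _ _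

lemma Erec2 : ∀ m, Eaux (m + 2) + Eaux m = 3 * Eaux (m + 1) := by
  intro m
  induction m with
  | zero =>
    have e1 : Eaux 1 = Eaux 0 + M 0 0 := Eaux_step 0
    have e2 : Eaux 2 = Eaux 1 + M 1 1 := Eaux_step 1
    have d0 : M 0 0 = 1 := M_zero_right 0
    have d1 : M 1 1 = 2 := M_one 0
    have h0 : Eaux 0 = 0 := rfl
    show Eaux 2 + Eaux 0 = 3 * Eaux 1
    omega
  | succ m IH =>
    show Eaux (m + 3) + Eaux (m + 1) = 3 * Eaux (m + 2)
    have s3 : Eaux (m + 3) = Eaux (m + 2) + M (m + 2) (m + 2) := Eaux_step (m + 2)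
    have s1 : Eaux (m + 1) = Eaux m + M m m := Eaux_step m
    have s2 : Eaux (m + 2) = Eaux (m + 1) + M (m + 1) (m + 1) := Eaux_step (m + 1)
    have hd := M_diag_rec m
    omega

lemma G_vals : G 0 = 0 ∧ G 1 = 1 ∧ G 2 = 5 ∧ G 3 = 17 ∧ G 4 = 52 := by
  have r0 : R 0 = 0 := rfl
  have r1 : R 1 = 1 := by
    unfold R
    rw [Finset.sum_range_one, M_zero_right]
  have d0 : M 0 0 = 1 := M_zero_right 0
  have d1 : M 1 1 = 2 := M_one 0
  have e0 : Eaux 0 = 0 := rfl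
  have ea1 : Eaux 1 = Eaux 0 + M 0 0 := Eaux_step 0
  have ea2 : Eaux 2 = Eaux 1 + M 1 1 := Eaux_step 1
  have ea3 : Eaux 3 = Eaux 2 + M 2 2 := Eaux_step 2
  have dr0 : M 2 2 + M 0 0 = 3 * M 1 1 := M_diag_rec 0
  have dr1 : M 3 3 + M 1 1 = 3 * M 2 2 := M_diag_rec 1
  have rr0 : R 2 + R 0 + M 0 0 = 3 * R 1 + M 1 1 := R_rec 0
  have rr1 : R 3 + R 1 + M 1 1 = 3 * R 2 + M 2 2 := R_rec 1
  have g0 : G 0 = 0 := rfl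
  have g1 : G 1 = G 0 + R 0 + Eaux 0 + M 0 0 := G_step 0
  have g2 : G 2 = G 1 + R 1 + Eaux 1 + M 1 1 := G_step 1
  have g3 : G 3 = G 2 + R 2 + Eaux 2 + M 2 2 := G_step 2
  have g4 : G 4 = G 3 + R 3 + Eaux 3 + M 3 3 := G_step 3
  refine ⟨?_, ?_, ?_, ?_, ?_⟩ <;> omega

lemma Gquart : ∀ m, G (m + 4) + 11 * G (m + 2) + G m + 1 = 6 * G (m + 3) + 6 * G (m + 1) := by
  intro m
  induction m with
  | zero =>
    show G 4 + 11 * G 2 + G 0 + 1 = 6 * G 3 + 6 * G 1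
    obtain ⟨h0, h1, h2, h3, h4⟩ := G_vals
    omega
  | succ m IH =>
    show G (m + 5) + 11 * G (m + 3) + G (m + 1) + 1 = 6 * G (m + 4) + 6 * G (m + 2)
    have g1 : G (m + 1) = G m + R m + Eaux m + M m m := G_step m
    have g2 : G (m + 2) = G (m + 1) + R (m + 1) + Eaux (m + 1) + M (m + 1) (m + 1) := G_step (m + 1)
    have g3 : G (m + 3) = G (m + 2) + R (m + 2) + Eaux (m + 2) + M (m + 2) (m + 2) := G_step (m + 2)
    have g4 : G (m + 4) = G (m + 3) + R (m + 3) + Eaux (m + 3) + M (m + 3) (m + 3) := G_step (m + 3)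
    have g5 : G (m + 5) = G (m + 4) + R (m + 4) + Eaux (m + 4) + M (m + 4) (m + 4) := G_step (m + 4)
    have rr0 : R (m + 2) + R m + M m m = 3 * R (m + 1) + M (m + 1) (m + 1) := R_rec m
    have rr1 : R (m + 3) + R (m + 1) + M (m + 1) (m + 1) = 3 * R (m + 2) + M (m + 2) (m + 2) :=
      R_rec (m + 1)
    have rr2 : R (m + 4) + R (m + 2) + M (m + 2) (m + 2) = 3 * R (m + 3) + M (m + 3) (m + 3) :=
      R_rec (m + 2)
    have dd0 : M (m + 2) (m + 2) + M m m = 3 * M (m + 1) (m + 1) := M_diag_rec m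
    have dd1 : M (m + 3) (m + 3) + M (m + 1) (m + 1) = 3 * M (m + 2) (m + 2) := M_diag_rec (m + 1)
    have dd2 : M (m + 4) (m + 4) + M (m + 2) (m + 2) = 3 * M (m + 3) (m + 3) := M_diag_rec (m + 2)
    have ee0 : Eaux (m + 2) + Eaux m = 3 * Eaux (m + 1) := Erec2 m
    have ee1 : Eaux (m + 3) + Eaux (m + 1) = 3 * Eaux (m + 2) := Erec2 (m + 1)
    have ee2 : Eaux (m + 4) + Eaux (m + 2) = 3 * Eaux (m + 3) := Erec2 (m + 2)
    omega

end OCIwork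

/-- The sequence `h_n = |OCI_n|` has initial values `1, 2, 6, 18` and satisfies
`h_n = 6h_{n-1} - 11h_{n-2} + 6h_{n-3} - h_{n-4}` for `n ≥ 4`. -/
theorem OCI_order_recurrence (h : ℕ → ℕ)
    (hdef : ∀ k, h k = Nat.card {f : Fin k → Option (Fin k) //
        PInj f ∧ Contr f ∧ OrdPres f}) :
    h 0 = 1 ∧ h 1 = 2 ∧ h 2 = 6 ∧ h 3 = 18 ∧
    ∀ n, 4 ≤ n →
      h n + 11 * h (n - 2) + h (n - 4) = 6 * h (n - 1) + 6 * h (n - 3) := by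
  have hG : ∀ k, h k = 1 + OCIwork.G k := by
    intro k
    rw [hdef k, OCIwork.card_good, OCIwork.card_Lset]
    congr 1
    rw [Finset.sum_product]
    rfl
  obtain ⟨g0, g1, g2, g3, g4⟩ := OCIwork.G_vals
  refine ⟨by rw [hG 0, g0], by rw [hG 1, g1], by rw [hG 2, g2], by rw [hG 3, g3], ?_⟩
  intro n hn
  obtain ⟨m, rfl⟩ : ∃ m, n = m + 4 := ⟨n - 4, by omega⟩
  rw [show m + 4 - 2 = m + 2 from rfl, show m + 4 - 4 = m from rfl,
    show m + 4 - 1 = m + 3 from rfl, show m + 4 - 3 = m + 1 from rfl]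
  simp only [hG]
  have := OCIwork.Gquart m
  omega
end

section
/- Fix n ≥ 1, p ≥ 2, and k⁻, k⁺, l⁺ ∈ X_n. The number of α ∈ ODCI_n with min(im α) = k⁻, max(im α) = k⁺, max(dom α) = l⁺ and height h(α) = p equals C(l⁺ − k⁺ + p − 1, p − 1)·C(k⁺ − k⁻ − 1, p − 2). -/
/-- Integer binomial coefficient, `0` whenever `b < 0` or `b > a`. -/
def ichoose (a b : ℤ) : ℕ :=
  if 0 ≤ b ∧ b ≤ a then a.toNat.choose b.toNat else 0


lemma card_tuple_sum (q m : ℕ) :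
    Nat.card {c : Fin q → ℕ // ∑ i, c i = m} = (q + m - 1).choose m := by
  have key : ∀ s : Multiset (Fin q), ∑ i, s.count i = Multiset.card s := by
    intro s
    rw [← Multiset.toFinset_sum_count_eq]
    exact (Finset.sum_subset (Finset.subset_univ _)
      (by simp [Multiset.count_eq_zero])).symm
  have e1 : {c : Fin q → ℕ // ∑ i, c i = m} ≃ Sym (Fin q) m := by
    refine Equiv.symm ?_
    refine Equiv.subtypeEquiv (Multiset.toFinsupp.toEquiv.trans Finsupp.equivFunOnFinite) ?_
    intro s
    have : ∀ i, (Finsupp.equivFunOnFinite (Multiset.toFinsupp.toEquiv s)) i = s.count i := by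
      intro i; rfl
    simp only [Equiv.trans_apply, this, key s]
  rw [Nat.card_congr e1, Nat.card_eq_fintype_card, Sym.card_sym_eq_choose]
  simp

lemma card_tuple_sum_le (q L : ℕ) :
    Nat.card {c : Fin q → ℕ // ∑ i, c i ≤ L} = (L + q).choose q := by
  have e1 : {c : Fin q → ℕ // ∑ i, c i ≤ L} ≃ {c : Fin (q+1) → ℕ // ∑ i, c i = L} := by
    refine ⟨fun c => ⟨Fin.cons (L - ∑ i, c.1 i) c.1, ?_⟩,
           fun c => ⟨fun i => c.1 i.succ, ?_⟩, ?_, ?_⟩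
    · rw [Fin.sum_cons]
      have := c.2
      omega
    · show ∑ i : Fin q, c.1 i.succ ≤ L
      have := c.2
      rw [Fin.sum_univ_succ] at this
      omega
    · intro c; ext i; simp
    · intro c
      ext i
      have hs := c.2
      rw [Fin.sum_univ_succ] at hs
      refine Fin.cases ?_ ?_ i
      · show (L - ∑ i : Fin q, c.1 i.succ) = c.1 0
        omega
      · intro j
        show c.1 j.succ = c.1 j.succ
        rfl
  rw [Nat.card_congr e1, card_tuple_sum]
  have h : q + 1 + L - 1 = L + q := by omega
  rw [h, Nat.choose_symm_add]

lemma card_tuple_pos_sum (q m : ℕ) (hq : 1 ≤ q) (hm : q ≤ m) :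
    Nat.card {e : Fin q → ℕ // (∀ i, 1 ≤ e i) ∧ ∑ i, e i = m} = (m - 1).choose (q - 1) := by
  have e1 : {e : Fin q → ℕ // (∀ i, 1 ≤ e i) ∧ ∑ i, e i = m}
      ≃ {c : Fin q → ℕ // ∑ i, c i = m - q} := by
    refine ⟨fun e => ⟨fun i => e.1 i - 1, ?_⟩, fun c => ⟨fun i => c.1 i + 1, ?_, ?_⟩, ?_, ?_⟩
    · show ∑ i : Fin q, (e.1 i - 1) = m - q
      obtain ⟨h1, h2⟩ := e.2
      have : ∑ i : Fin q, (e.1 i - 1) + ∑ _i : Fin q, 1 = ∑ i, e.1 i := by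
        rw [← Finset.sum_add_distrib]
        exact Finset.sum_congr rfl fun i _ => by have := h1 i; omega
      simp only [Finset.sum_const, Finset.card_univ, Fintype.card_fin, smul_eq_mul,
        mul_one] at this
      omega
    · intro i; show 1 ≤ c.1 i + 1; omega
    · show ∑ i : Fin q, (c.1 i + 1) = m
      have := c.2
      rw [Finset.sum_add_distrib] at *
      simp only [Finset.sum_const, Finset.card_univ, Fintype.card_fin, smul_eq_mul,
        mul_one]
      omega
    · intro e; ext i
      show (e.1 i - 1) + 1 = e.1 i
      have := e.2.1 i; omega
    · intro c; ext i
      show (c.1 i + 1) - 1 = c.1 i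
      omega
  rw [Nat.card_congr e1, card_tuple_sum]
  have h1 : q + (m - q) - 1 = m - 1 := by omega
  rw [h1, ← Nat.choose_symm (show m - q ≤ m - 1 by omega)]
  congr 1
  omega

section PhiDefs

/-- extension of `e` to ℕ by zero -/
def en (q : ℕ) (e : Fin q → ℕ) : ℕ → ℕ := fun t => if h : t < q then e ⟨t, h⟩ else 0

/-- extension of the first `q` entries of `c` to ℕ by zero -/
def cnf (q : ℕ) (c : Fin (q+1) → ℕ) : ℕ → ℕ :=
  fun t => if h : t < q then c ⟨t, Nat.lt_succ_of_lt h⟩ else 0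

/-- partial sums giving the image values -/
def yvf (q a : ℕ) (e : Fin q → ℕ) : ℕ → ℕ := fun i => a + ∑ t ∈ Finset.range i, en q e t

/-- partial sums giving the domain values -/
def xvf (q a : ℕ) (e : Fin q → ℕ) (c : Fin (q+1) → ℕ) : ℕ → ℕ :=
  fun i => a + c (Fin.last q) + ∑ t ∈ Finset.range i, (en q e t + cnf q c t)

/-- optional first index satisfying `p` -/
def ofind {m : ℕ} (p : Fin m → Prop) [DecidablePred p] : Option (Fin m) :=
  if h : ∃ k, p k then some (Fin.find p h) else none

lemma ofind_spec {m : ℕ} {p : Fin m → Prop} [DecidablePred p] {i : Fin m}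
    (h : ofind p = some i) : p i := by
  unfold ofind at h
  split_ifs at h with h'
  · cases h; exact Fin.find_spec h'

lemma isSome_ofind_iff {m : ℕ} {p : Fin m → Prop} [DecidablePred p] :
    (ofind p).isSome ↔ ∃ i, p i := by
  unfold ofind; split_ifs with h' <;> simp [h']

lemma ofind_eq_none_iff {m : ℕ} {p : Fin m → Prop} [DecidablePred p] :
    ofind p = none ↔ ∀ i, ¬ p i := by
  unfold ofind; split_ifs with h' <;> simp_all

/-- the partial map built from gap data -/
def Phi (n q a : ℕ) (e : Fin q → ℕ) (c : Fin (q+1) → ℕ) : Fin n → Option (Fin n) :=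
  fun z => (ofind (fun i : Fin (q+1) => xvf q a e c i.val = z.val)).bind
    (fun i => if h : yvf q a e i.val < n then some ⟨_, h⟩ else none)

variable {n q a : ℕ} {e : Fin q → ℕ} {c : Fin (q+1) → ℕ}

lemma yvf_mono : Monotone (yvf q a e) := by
  intro i j hij
  exact Nat.add_le_add_left (Finset.sum_le_sum_of_subset (Finset.range_subset_range.2 hij)) a

lemma xvf_mono : Monotone (xvf q a e c) := by
  intro i j hij
  exact Nat.add_le_add_left (Finset.sum_le_sum_of_subset (Finset.range_subset_range.2 hij)) _

lemma sum_range_en : ∑ t ∈ Finset.range q, en q e t = ∑ i, e i := by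
  rw [Finset.sum_range]
  exact Finset.sum_congr rfl fun i _ => by simp [en, i.isLt]

lemma sum_range_encnf : ∑ t ∈ Finset.range q, (en q e t + cnf q c t)
    = (∑ i, e i) + ∑ i : Fin q, c i.castSucc := by
  rw [Finset.sum_add_distrib, sum_range_en, Finset.sum_range]
  congr 1
  refine Finset.sum_congr rfl fun i _ => ?_
  simp only [cnf, i.isLt, dif_pos]
  congr 1

lemma yvf_zero : yvf q a e 0 = a := by simp [yvf]

lemma yvf_q : yvf q a e q = a + ∑ i, e i := by rw [yvf, sum_range_en]

lemma xvf_zero : xvf q a e c 0 = a + c (Fin.last q) := by simp [xvf]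

lemma xvf_q : xvf q a e c q = a + (∑ i, e i) + ∑ i, c i := by
  rw [xvf, sum_range_encnf, Fin.sum_univ_castSucc (f := c)]
  ring

lemma yvf_strict (he1 : ∀ i, 1 ≤ e i) {i j : ℕ} (hij : i < j) (hj : j ≤ q) :
    yvf q a e i < yvf q a e j := by
  have h1 : Finset.range i ⊂ Finset.range j := by
    simp [Finset.ssubset_def, Finset.range_subset_range]; omega
  refine Nat.add_lt_add_left ?_ a
  refine Finset.sum_lt_sum_of_subset h1.subset (i := i) (by simp [hij]) (by simp) ?_
    (fun k _ _ => Nat.zero_le _)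
  have : i < q := lt_of_lt_of_le hij hj
  simp [en, this]
  exact he1 _

lemma xvf_strict (he1 : ∀ i, 1 ≤ e i) {i j : ℕ} (hij : i < j) (hj : j ≤ q) :
    xvf q a e c i < xvf q a e c j := by
  have h1 : Finset.range i ⊂ Finset.range j := by
    simp [Finset.ssubset_def, Finset.range_subset_range]; omega
  refine Nat.add_lt_add_left ?_ _
  refine Finset.sum_lt_sum_of_subset h1.subset (i := i) (by simp [hij]) (by simp) ?_
    (fun k _ _ => Nat.zero_le _)
  have hiq : i < q := lt_of_lt_of_le hij hj
  have : 1 ≤ en q e i := by simp [en, hiq]; exact he1 _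
  omega

lemma yvf_le_xvf (i : ℕ) : yvf q a e i ≤ xvf q a e c i := by
  refine Nat.add_le_add (Nat.le_add_right _ _) (Finset.sum_le_sum fun t _ => Nat.le_add_right _ _)

/-- the contraction inequality -/
lemma yvf_xvf_contr {i j : ℕ} (hij : i ≤ j) :
    yvf q a e j + xvf q a e c i ≤ yvf q a e i + xvf q a e c j := by
  simp only [yvf, xvf]
  have h1 : ∑ t ∈ Finset.range j, en q e t
      = ∑ t ∈ Finset.range i, en q e t + ∑ t ∈ Finset.Ico i j, en q e t := by
    simp only [Finset.range_eq_Ico]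
    exact (Finset.sum_Ico_consecutive (en q e) (Nat.zero_le i) hij).symm
  have h2 : ∑ t ∈ Finset.range j, (en q e t + cnf q c t)
      = ∑ t ∈ Finset.range i, (en q e t + cnf q c t)
        + ∑ t ∈ Finset.Ico i j, (en q e t + cnf q c t) := by
    simp only [Finset.range_eq_Ico]
    exact (Finset.sum_Ico_consecutive (fun t => en q e t + cnf q c t) (Nat.zero_le i) hij).symm
  have h3 : ∑ t ∈ Finset.Ico i j, en q e t ≤ ∑ t ∈ Finset.Ico i j, (en q e t + cnf q c t) :=
    Finset.sum_le_sum fun t _ => Nat.le_add_right _ _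
  omega

lemma xvf_inj (he1 : ∀ i, 1 ≤ e i) {i j : Fin (q+1)}
    (h : xvf q a e c i.val = xvf q a e c j.val) : i = j := by
  rcases lt_trichotomy i j with h' | h' | h'
  · exact absurd h (Nat.ne_of_lt (xvf_strict he1 h' (Nat.lt_succ_iff.1 j.isLt)))
  · exact h'
  · exact absurd h.symm (Nat.ne_of_lt (xvf_strict he1 h' (Nat.lt_succ_iff.1 i.isLt)))

lemma phi_some_iff (he1 : ∀ i, 1 ≤ e i)
    (hbound : ∀ i : Fin (q+1), yvf q a e i.val < n) (z w : Fin n) :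
    Phi n q a e c z = some w
      ↔ ∃ i : Fin (q+1), xvf q a e c i.val = z.val ∧ yvf q a e i.val = w.val := by
  constructor
  · intro h
    rw [Phi, Option.bind_eq_some_iff] at h
    obtain ⟨i, hfind, hi⟩ := h
    rw [dif_pos (hbound i)] at hi
    obtain rfl : (⟨yvf q a e i.val, hbound i⟩ : Fin n) = w := by
      simpa using hi
    exact ⟨i, ofind_spec hfind, rfl⟩
  · rintro ⟨i, hx, hy⟩
    have hsome : (ofind (fun i : Fin (q+1) => xvf q a e c i.val = z.val)).isSome :=
      isSome_ofind_iff.2 ⟨i, hx⟩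
    obtain ⟨j, hj⟩ := Option.isSome_iff_exists.1 hsome
    have hpj : xvf q a e c j.val = z.val := ofind_spec hj
    have : j = i := xvf_inj he1 (hpj.trans hx.symm)
    subst this
    rw [Phi, hj, Option.bind_some, dif_pos (hbound j)]
    exact congrArg some (Fin.ext (by simpa using hy))

lemma phi_none_iff (hbound : ∀ i : Fin (q+1), yvf q a e i.val < n) (z : Fin n) :
    Phi n q a e c z = none ↔ ∀ i : Fin (q+1), xvf q a e c i.val ≠ z.val := by
  constructor
  · intro h i hi
    have hsome : (ofind (fun i : Fin (q+1) => xvf q a e c i.val = z.val)).isSome :=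
      isSome_ofind_iff.2 ⟨i, hi⟩
    obtain ⟨j, hj⟩ := Option.isSome_iff_exists.1 hsome
    rw [Phi, hj, Option.bind_some, dif_pos (hbound j)] at h
    exact Option.some_ne_none _ h
  · intro h
    have : ofind (fun i : Fin (q+1) => xvf q a e c i.val = z.val) = none := by
      rw [ofind_eq_none_iff]
      exact h
    rw [Phi, this, Option.bind_none]

end PhiDefs

section PhiMem

lemma abs_helper {y1 y2 x1 x2 : ℕ} (hy : y1 ≤ y2) (hx : x1 ≤ x2) (h : y2 + x1 ≤ y1 + x2) :
    |(y1:ℤ) - y2| ≤ |(x1:ℤ) - x2| := by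
  have e1 : |(y1:ℤ) - y2| = (y2:ℤ) - y1 := by rw [abs_sub_comm]; exact abs_of_nonneg (by omega)
  have e2 : |(x1:ℤ) - x2| = (x2:ℤ) - x1 := by rw [abs_sub_comm]; exact abs_of_nonneg (by omega)
  omega

variable {n q : ℕ} {e : Fin q → ℕ} {c : Fin (q+1) → ℕ}

lemma yvf_inj {a : ℕ} (he1 : ∀ i, 1 ≤ e i) {i j : Fin (q+1)}
    (h : yvf q a e i.val = yvf q a e j.val) : i = j := by
  rcases lt_trichotomy i j with h' | h' | h'
  · exact absurd h (Nat.ne_of_lt (yvf_strict he1 h' (Nat.lt_succ_iff.1 j.isLt)))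
  · exact h'
  · exact absurd h.symm (Nat.ne_of_lt (yvf_strict he1 h' (Nat.lt_succ_iff.1 i.isLt)))

lemma mem_pim_iff {f : Fin n → Option (Fin n)} {w : Fin n} :
    w ∈ pim f ↔ ∃ x, f x = some w := by simp [pim]

lemma mem_pdom_iff {f : Fin n → Option (Fin n)} {x : Fin n} :
    x ∈ pdom f ↔ ∃ w, f x = some w := by simp [pdom, Option.isSome_iff_exists]

lemma phi_mem (kminus kplus lplus : Fin n)
    (he1 : ∀ i, 1 ≤ e i)
    (hb : kminus.val + ∑ i, e i = kplus.val)
    (hl : kplus.val + ∑ i, c i = lplus.val) :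
    PInj (Phi n q kminus.val e c) ∧ Contr (Phi n q kminus.val e c) ∧
    OrdPres (Phi n q kminus.val e c) ∧ OrdDecr (Phi n q kminus.val e c) ∧
    (pim (Phi n q kminus.val e c)).min = (kminus : WithTop (Fin n)) ∧
    (pim (Phi n q kminus.val e c)).max = (kplus : WithBot (Fin n)) ∧
    (pdom (Phi n q kminus.val e c)).max = (lplus : WithBot (Fin n)) ∧
    pheight (Phi n q kminus.val e c) = q + 1 := by
  set a := kminus.val with ha
  have hyq : yvf q a e q = kplus.val := by rw [yvf_q, hb]
  have hxq : xvf q a e c q = lplus.val := by rw [xvf_q, hb, hl]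
  have hyle : ∀ i : Fin (q+1), yvf q a e i.val ≤ kplus.val := fun i => by
    rw [← hyq]; exact yvf_mono (Nat.lt_succ_iff.1 i.isLt)
  have hxle : ∀ i : Fin (q+1), xvf q a e c i.val ≤ lplus.val := fun i => by
    rw [← hxq]; exact xvf_mono (Nat.lt_succ_iff.1 i.isLt)
  have hbd : ∀ i : Fin (q+1), yvf q a e i.val < n := fun i =>
    lt_of_le_of_lt (hyle i) kplus.isLt
  have hxbd : ∀ i : Fin (q+1), xvf q a e c i.val < n := fun i =>
    lt_of_le_of_lt (hxle i) lplus.isLt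
  have char := fun z w => phi_some_iff (c := c) (a := a) he1 hbd z w
  set F := Phi n q a e c with hF
  -- membership of the canonical points
  have hmem : ∀ i : Fin (q+1), F ⟨xvf q a e c i.val, hxbd i⟩ = some ⟨yvf q a e i.val, hbd i⟩ :=
    fun i => (char _ _).2 ⟨i, rfl, rfl⟩
  have hpinj : PInj F := by
    intro x y w hx hy
    obtain ⟨i, hxi, hyi⟩ := (char x w).1 hx
    obtain ⟨j, hxj, hyj⟩ := (char y w).1 hy
    have : i = j := yvf_inj he1 (hyi.trans hyj.symm)
    subst this
    exact Fin.ext (hxi.symm.trans hxj)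
  have hcontr : Contr F := by
    intro x y w1 w2 hx hy
    obtain ⟨i, hxi, hyi⟩ := (char x w1).1 hx
    obtain ⟨j, hxj, hyj⟩ := (char y w2).1 hy
    rw [← hxi, ← hyi, ← hxj, ← hyj]
    rcases le_total i.val j.val with hij | hij
    · exact abs_helper (yvf_mono hij) (xvf_mono hij) (yvf_xvf_contr hij)
    · rw [abs_sub_comm ((yvf q a e i.val : ℤ)), abs_sub_comm ((xvf q a e c i.val : ℤ))]
      exact abs_helper (yvf_mono hij) (xvf_mono hij) (yvf_xvf_contr hij)
  have hpres : OrdPres F := by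
    intro x y w1 w2 hx hy hxy
    obtain ⟨i, hxi, hyi⟩ := (char x w1).1 hx
    obtain ⟨j, hxj, hyj⟩ := (char y w2).1 hy
    have hij : i.val ≤ j.val := by
      by_contra hc
      push_neg at hc
      have := xvf_strict (a := a) (c := c) he1 hc (Nat.lt_succ_iff.1 i.isLt)
      have hxy' : x.val ≤ y.val := hxy
      omega
    have := yvf_mono (a := a) (e := e) hij
    rw [Fin.le_def]
    omega
  have hdecr : OrdDecr F := by
    intro x w hx
    obtain ⟨i, hxi, hyi⟩ := (char x w).1 hx
    have := yvf_le_xvf (q := q) (a := a) (e := e) (c := c) i.val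
    rw [Fin.le_def]
    omega
  refine ⟨hpinj, hcontr, hpres, hdecr, ?_, ?_, ?_, ?_⟩
  · -- min of pim
    have hkm : kminus ∈ pim F := mem_pim_iff.2 ⟨_, by
      have := hmem 0
      simpa [yvf_zero] using this⟩
    have hle : ∀ w ∈ pim F, kminus ≤ w := by
      intro w hw
      obtain ⟨x, hx⟩ := mem_pim_iff.1 hw
      obtain ⟨i, _, hyi⟩ := (char x w).1 hx
      have h0 : yvf q a e 0 ≤ yvf q a e i.val := yvf_mono (Nat.zero_le _)
      rw [yvf_zero] at h0
      rw [Fin.le_def]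
      omega
    exact le_antisymm (Finset.min_le hkm) (Finset.le_min fun w hw => WithTop.coe_le_coe.2 (hle w hw))
  · -- max of pim
    have hkp : kplus ∈ pim F := mem_pim_iff.2 ⟨_, by
      have := hmem (Fin.last q)
      simpa [Fin.val_last, hyq] using this⟩
    have hle : ∀ w ∈ pim F, w ≤ kplus := by
      intro w hw
      obtain ⟨x, hx⟩ := mem_pim_iff.1 hw
      obtain ⟨i, _, hyi⟩ := (char x w).1 hx
      have := hyle i
      rw [Fin.le_def]
      omega
    exact le_antisymm (Finset.max_le fun w hw => WithBot.coe_le_coe.2 (hle w hw)) (Finset.le_max hkp)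
  · -- max of pdom
    have hlp : lplus ∈ pdom F := mem_pdom_iff.2 ⟨_, by
      have := hmem (Fin.last q)
      simpa [Fin.val_last, hxq] using this⟩
    have hle : ∀ z ∈ pdom F, z ≤ lplus := by
      intro z hz
      obtain ⟨w, hw⟩ := mem_pdom_iff.1 hz
      obtain ⟨i, hxi, _⟩ := (char z w).1 hw
      have := hxle i
      rw [Fin.le_def]
      omega
    exact le_antisymm (Finset.max_le fun w hw => WithBot.coe_le_coe.2 (hle w hw)) (Finset.le_max hlp)
  · -- height
    have himg : pim F = Finset.image (fun i : Fin (q+1) => (⟨yvf q a e i.val, hbd i⟩ : Fin n))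
        Finset.univ := by
      ext w
      rw [mem_pim_iff, Finset.mem_image]
      constructor
      · rintro ⟨x, hx⟩
        obtain ⟨i, _, hyi⟩ := (char x w).1 hx
        exact ⟨i, Finset.mem_univ _, Fin.ext hyi⟩
      · rintro ⟨i, _, rfl⟩
        exact ⟨_, hmem i⟩
    rw [pheight, himg, Finset.card_image_of_injective _ ?_, Finset.card_univ, Fintype.card_fin]
    intro i j hij
    exact yvf_inj he1 (by simpa using congrArg Fin.val hij)

end PhiMem

section Struct

lemma tele (q : ℕ) (u : Fin (q+1) → ℕ) (hu : Monotone u) (g : ℕ → ℕ)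
    (hg : ∀ t (h : t < q), g t = u ⟨t+1, Nat.succ_lt_succ h⟩ - u ⟨t, Nat.lt_succ_of_lt h⟩) :
    ∀ j (hj : j ≤ q), ∑ t ∈ Finset.range j, g t = u ⟨j, Nat.lt_succ_of_le hj⟩ - u 0 := by
  intro j
  induction j with
  | zero => intro _; simp [show (⟨0, Nat.succ_pos q⟩ : Fin (q+1)) = 0 from rfl]
  | succ j ih =>
    intro hj
    have hjq : j < q := hj
    rw [Finset.sum_range_succ, ih (Nat.le_of_lt hjq), hg j hjq]
    have h1 : u 0 ≤ u ⟨j, Nat.lt_succ_of_lt hjq⟩ := hu (Fin.mk_le_mk.2 (Nat.zero_le _))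
    have h2 : u ⟨j, Nat.lt_succ_of_lt hjq⟩ ≤ u ⟨j+1, Nat.succ_lt_succ hjq⟩ :=
      hu (Fin.mk_le_mk.2 (Nat.le_succ _))
    omega

lemma sum_fin_eq_sum_range' (q : ℕ) (F : Fin q → ℕ) :
    ∑ i, F i = ∑ t ∈ Finset.range q, (if h : t < q then F ⟨t, h⟩ else 0) := by
  rw [Finset.sum_range]
  exact Finset.sum_congr rfl fun i _ => by simp [i.isLt]

lemma abs_helper2 {y1 y2 x1 x2 : ℕ} (hy : y1 ≤ y2) (hx : x1 ≤ x2)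
    (h : |(y1:ℤ) - y2| ≤ |(x1:ℤ) - x2|) : y2 + x1 ≤ y1 + x2 := by
  have e1 : |(y1:ℤ) - y2| = (y2:ℤ) - y1 := by rw [abs_sub_comm]; exact abs_of_nonneg (by omega)
  have e2 : |(x1:ℤ) - x2| = (x2:ℤ) - x1 := by rw [abs_sub_comm]; exact abs_of_nonneg (by omega)
  omega

lemma strictMono_last_ge {q n : ℕ} {v : Fin (q+1) → Fin n} (hv : StrictMono v) :
    (v 0).val + q ≤ (v (Fin.last q)).val := by
  have : ∀ j (hj : j ≤ q), (v 0).val + j ≤ (v ⟨j, Nat.lt_succ_of_le hj⟩).val := by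
    intro j
    induction j with
    | zero => intro _; simp [show (⟨0, Nat.succ_pos q⟩ : Fin (q+1)) = 0 from rfl]
    | succ j ih =>
      intro hj
      have h1 := ih (by omega)
      have h2 : v ⟨j, by omega⟩ < v ⟨j+1, by omega⟩ := hv (Fin.mk_lt_mk.2 (Nat.lt_succ_self j))
      have := Fin.lt_def.1 h2
      omega
  exact this q le_rfl

lemma mono_image_eq {k n : ℕ} {u v : Fin k → Fin n} (hu : StrictMono u) (hv : StrictMono v)
    (h : Finset.image u Finset.univ = Finset.image v Finset.univ) : u = v := by
  classical
  have hcard : (Finset.image u Finset.univ).card = k := by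
    rw [Finset.card_image_of_injective _ hu.injective, Finset.card_univ, Fintype.card_fin]
  have hcard' : (Finset.image u Finset.univ).card = k := hcard
  have h1 : u = (Finset.image u Finset.univ).orderEmbOfFin hcard :=
    Finset.orderEmbOfFin_unique hcard (fun i => Finset.mem_image_of_mem _ (Finset.mem_univ i)) hu
  have h2 : v = (Finset.image u Finset.univ).orderEmbOfFin hcard := by
    refine Finset.orderEmbOfFin_unique hcard (fun i => ?_) hv
    rw [h]
    exact Finset.mem_image_of_mem _ (Finset.mem_univ i)
  rw [h1, h2]

lemma mem_pim_iff' {n : ℕ} {f : Fin n → Option (Fin n)} {w : Fin n} :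
    w ∈ pim f ↔ ∃ x, f x = some w := by simp [pim]

lemma struct {n q : ℕ} {f : Fin n → Option (Fin n)} {kminus kplus lplus : Fin n}
    (h1 : PInj f) (h3 : OrdPres f) (h4 : OrdDecr f)
    (hmin : (pim f).min = (kminus : WithTop (Fin n)))
    (hmax : (pim f).max = (kplus : WithBot (Fin n)))
    (hdmax : (pdom f).max = (lplus : WithBot (Fin n)))
    (hh : pheight f = q + 1) :
    ∃ ox oy : Fin (q+1) → Fin n, StrictMono ox ∧ StrictMono oy ∧
      (∀ i, f (ox i) = some (oy i)) ∧
      oy 0 = kminus ∧ oy (Fin.last q) = kplus ∧ ox (Fin.last q) = lplus ∧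
      pdom f = Finset.image ox Finset.univ := by
  classical
  have hic : (pim f).card = q + 1 := hh
  have himg : pim f = (pdom f).image (fun x => (f x).getD kminus) := by
    ext w
    rw [mem_pim_iff, Finset.mem_image]
    constructor
    · rintro ⟨x, hx⟩
      exact ⟨x, mem_pdom_iff.2 ⟨w, hx⟩, by rw [hx]; rfl⟩
    · rintro ⟨x, hx, hgd⟩
      obtain ⟨w', hw'⟩ := mem_pdom_iff.1 hx
      rw [hw'] at hgd
      exact ⟨x, by rw [hw']; exact congrArg some hgd⟩
  have hinj : Set.InjOn (fun x => (f x).getD kminus) (pdom f) := by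
    intro x hx y hy hxy
    obtain ⟨wx, hwx⟩ := mem_pdom_iff.1 (by simpa using hx)
    obtain ⟨wy, hwy⟩ := mem_pdom_iff.1 (by simpa using hy)
    simp only [hwx, hwy, Option.getD_some] at hxy
    subst hxy
    exact h1 x y wx hwx hwy
  have hdc : (pdom f).card = q + 1 := by
    rw [← hic, himg, Finset.card_image_of_injOn hinj]
  set ox : Fin (q+1) → Fin n := fun i => (pdom f).orderEmbOfFin hdc i with hox
  have hoxmem : ∀ i, ox i ∈ pdom f := fun i => Finset.orderEmbOfFin_mem _ hdc i
  have hoxmono : StrictMono ox := ((pdom f).orderEmbOfFin hdc).strictMono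
  have hsome : ∀ i, (f (ox i)).isSome := fun i => by
    obtain ⟨w, hw⟩ := mem_pdom_iff.1 (hoxmem i)
    rw [hw]; rfl
  set u : Fin (q+1) → Fin n := fun i => (f (ox i)).get (hsome i) with hu
  have hkey : ∀ i, f (ox i) = some (u i) := fun i => (Option.some_get (hsome i)).symm
  have humem : ∀ i, u i ∈ pim f := fun i => mem_pim_iff.2 ⟨ox i, hkey i⟩
  have humono : StrictMono u := by
    intro i j hij
    have hle : u i ≤ u j := h3 _ _ _ _ (hkey i) (hkey j) (le_of_lt (hoxmono hij))
    rcases lt_or_eq_of_le hle with h | h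
    · exact h
    · exfalso
      have heq : ox i = ox j := h1 _ _ _ (hkey i) (by rw [hkey j, h])
      exact (ne_of_lt (hoxmono hij)) heq
  have huy : u = fun i => (pim f).orderEmbOfFin hic i :=
    Finset.orderEmbOfFin_unique hic humem humono
  set oy : Fin (q+1) → Fin n := fun i => (pim f).orderEmbOfFin hic i with hoy
  have hoymono : StrictMono oy := ((pim f).orderEmbOfFin hic).strictMono
  have hoymem : ∀ i, oy i ∈ pim f := fun i => Finset.orderEmbOfFin_mem _ hic i
  have hkey' : ∀ i, f (ox i) = some (oy i) := by
    intro i; rw [hkey i, huy]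
  have hpdomimg : pdom f = Finset.image ox Finset.univ := by
    ext z
    rw [Finset.mem_image]
    constructor
    · intro hz
      have : z ∈ Set.range ((pdom f).orderEmbOfFin hdc) := by
        rw [Finset.range_orderEmbOfFin]
        exact hz
      obtain ⟨i, hi⟩ := this
      exact ⟨i, Finset.mem_univ _, hi⟩
    · rintro ⟨i, _, rfl⟩
      exact hoxmem i
  have hpimrange : ∀ w ∈ pim f, ∃ i, oy i = w := by
    intro w hw
    have : w ∈ Set.range ((pim f).orderEmbOfFin hic) := by
      rw [Finset.range_orderEmbOfFin]
      exact hw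
    obtain ⟨i, hi⟩ := this
    exact ⟨i, hi⟩
  have hoy0 : oy 0 = kminus := by
    have hkm : kminus ∈ pim f := Finset.mem_of_min hmin
    obtain ⟨i, hi⟩ := hpimrange kminus hkm
    have h1' : kminus ≤ oy 0 := by
      have := Finset.min_le (hoymem 0)
      rw [hmin] at this
      exact_mod_cast this
    have h2' : oy 0 ≤ kminus := hi ▸ hoymono.monotone (Fin.zero_le i)
    exact le_antisymm h2' h1'
  have hoylast : oy (Fin.last q) = kplus := by
    have hkp : kplus ∈ pim f := Finset.mem_of_max hmax
    obtain ⟨i, hi⟩ := hpimrange kplus hkp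
    have h1' : oy (Fin.last q) ≤ kplus := by
      have := Finset.le_max (hoymem (Fin.last q))
      rw [hmax] at this
      exact_mod_cast this
    have h2' : kplus ≤ oy (Fin.last q) := hi ▸ hoymono.monotone (Fin.le_last i)
    exact le_antisymm h1' h2'
  have hoxlast : ox (Fin.last q) = lplus := by
    have hlp : lplus ∈ pdom f := Finset.mem_of_max hdmax
    have : lplus ∈ Finset.image ox Finset.univ := hpdomimg ▸ hlp
    obtain ⟨i, _, hi⟩ := Finset.mem_image.1 this
    have h1' : ox (Fin.last q) ≤ lplus := by
      have := Finset.le_max (hoxmem (Fin.last q))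
      rw [hdmax] at this
      exact_mod_cast this
    have h2' : lplus ≤ ox (Fin.last q) := hi ▸ hoxmono.monotone (Fin.le_last i)
    exact le_antisymm h1' h2'
  exact ⟨ox, oy, hoxmono, hoymono, hkey', hoy0, hoylast, hoxlast, hpdomimg⟩

end Struct

section MainCard

variable {n q : ℕ}

lemma yvf_succ {a t : ℕ} {e : Fin q → ℕ} : yvf q a e (t+1) = yvf q a e t + en q e t := by
  rw [yvf, yvf, Finset.sum_range_succ]; omega

lemma xvf_succ {a t : ℕ} {e : Fin q → ℕ} {c : Fin (q+1) → ℕ} :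
    xvf q a e c (t+1) = xvf q a e c t + (en q e t + cnf q c t) := by
  rw [xvf, xvf, Finset.sum_range_succ]; omega

lemma pdom_phi {a : ℕ} {e : Fin q → ℕ} {c : Fin (q+1) → ℕ} (he1 : ∀ i, 1 ≤ e i)
    (hbd : ∀ i : Fin (q+1), yvf q a e i.val < n)
    (hxbd : ∀ i : Fin (q+1), xvf q a e c i.val < n) :
    pdom (Phi n q a e c)
      = Finset.image (fun i : Fin (q+1) => (⟨xvf q a e c i.val, hxbd i⟩ : Fin n))
          Finset.univ := by
  ext z
  rw [mem_pdom_iff, Finset.mem_image]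
  constructor
  · rintro ⟨w, hw⟩
    obtain ⟨i, hxi, _⟩ := (phi_some_iff he1 hbd z w).1 hw
    exact ⟨i, Finset.mem_univ _, Fin.ext hxi⟩
  · rintro ⟨i, _, rfl⟩
    exact ⟨⟨yvf q a e i.val, hbd i⟩,
      (phi_some_iff he1 hbd ⟨xvf q a e c i.val, hxbd i⟩ ⟨yvf q a e i.val, hbd i⟩).2
        ⟨i, rfl, rfl⟩⟩

lemma pim_phi {a : ℕ} {e : Fin q → ℕ} {c : Fin (q+1) → ℕ} (he1 : ∀ i, 1 ≤ e i)
    (hbd : ∀ i : Fin (q+1), yvf q a e i.val < n)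
    (hxbd : ∀ i : Fin (q+1), xvf q a e c i.val < n) :
    pim (Phi n q a e c)
      = Finset.image (fun i : Fin (q+1) => (⟨yvf q a e i.val, hbd i⟩ : Fin n))
          Finset.univ := by
  ext w
  rw [mem_pim_iff, Finset.mem_image]
  constructor
  · rintro ⟨z, hz⟩
    obtain ⟨i, _, hyi⟩ := (phi_some_iff he1 hbd z w).1 hz
    exact ⟨i, Finset.mem_univ _, Fin.ext hyi⟩
  · rintro ⟨i, _, rfl⟩
    exact ⟨⟨xvf q a e c i.val, hxbd i⟩,
      (phi_some_iff he1 hbd ⟨xvf q a e c i.val, hxbd i⟩ ⟨yvf q a e i.val, hbd i⟩).2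
        ⟨i, rfl, rfl⟩⟩

lemma main_card (kminus kplus lplus : Fin n) (hq : 1 ≤ q)
    (hab : kminus.val + q ≤ kplus.val) (hbl : kplus.val ≤ lplus.val) :
    Nat.card {f : Fin n → Option (Fin n) // PInj f ∧ Contr f ∧ OrdPres f ∧ OrdDecr f ∧
        (pim f).min = (kminus : WithTop (Fin n)) ∧
        (pim f).max = (kplus : WithBot (Fin n)) ∧
        (pdom f).max = (lplus : WithBot (Fin n)) ∧
        pheight f = q + 1}
    = Nat.card ({c : Fin (q+1) → ℕ // ∑ i, c i = lplus.val - kplus.val}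
      × {e : Fin q → ℕ // (∀ i, 1 ≤ e i) ∧ ∑ i, e i = kplus.val - kminus.val}) := by
  classical
  symm
  have hsums : ∀ (c : {c : Fin (q+1) → ℕ // ∑ i, c i = lplus.val - kplus.val})
      (e : {e : Fin q → ℕ // (∀ i, 1 ≤ e i) ∧ ∑ i, e i = kplus.val - kminus.val}),
      kminus.val + ∑ i, e.1 i = kplus.val ∧ kplus.val + ∑ i, c.1 i = lplus.val := by
    intro c e
    have h1 := c.2
    have h2 := e.2.2
    omega
  refine Nat.card_eq_of_bijective
    (fun ce => ⟨Phi n q kminus.val ce.2.1 ce.1.1,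
      phi_mem kminus kplus lplus ce.2.2.1 (hsums ce.1 ce.2).1 (hsums ce.1 ce.2).2⟩)
    ⟨?_, ?_⟩
  · -- injectivity
    rintro ⟨⟨c, hc⟩, ⟨e, he⟩⟩ ⟨⟨c', hc'⟩, ⟨e', he'⟩⟩ hEq
    simp only [Subtype.mk.injEq] at hEq
    set a := kminus.val with ha
    have hb : a + ∑ i, e i = kplus.val := by have := he.2; omega
    have hb' : a + ∑ i, e' i = kplus.val := by have := he'.2; omega
    have hl : kplus.val + ∑ i, c i = lplus.val := by have := hc; omega
    have hl' : kplus.val + ∑ i, c' i = lplus.val := by have := hc'; omega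
    have hyq : yvf q a e q = kplus.val := by rw [yvf_q, hb]
    have hyq' : yvf q a e' q = kplus.val := by rw [yvf_q, hb']
    have hxq : xvf q a e c q = lplus.val := by rw [xvf_q, hb, hl]
    have hxq' : xvf q a e' c' q = lplus.val := by rw [xvf_q, hb', hl']
    have hbd : ∀ i : Fin (q+1), yvf q a e i.val < n := fun i => by
      have h1 : yvf q a e i.val ≤ yvf q a e q := yvf_mono (Nat.lt_succ_iff.1 i.isLt)
      have := kplus.isLt; omega
    have hbd' : ∀ i : Fin (q+1), yvf q a e' i.val < n := fun i => by
      have h1 : yvf q a e' i.val ≤ yvf q a e' q := yvf_mono (Nat.lt_succ_iff.1 i.isLt)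
      have := kplus.isLt; omega
    have hxbd : ∀ i : Fin (q+1), xvf q a e c i.val < n := fun i => by
      have h1 : xvf q a e c i.val ≤ xvf q a e c q := xvf_mono (Nat.lt_succ_iff.1 i.isLt)
      have := lplus.isLt; omega
    have hxbd' : ∀ i : Fin (q+1), xvf q a e' c' i.val < n := fun i => by
      have h1 : xvf q a e' c' i.val ≤ xvf q a e' c' q := xvf_mono (Nat.lt_succ_iff.1 i.isLt)
      have := lplus.isLt; omega
    -- equality of domain enumerations
    have hdomEq := congrArg pdom hEq
    rw [pdom_phi he.1 hbd hxbd, pdom_phi he'.1 hbd' hxbd'] at hdomEq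
    have hgx : (fun i : Fin (q+1) => (⟨xvf q a e c i.val, hxbd i⟩ : Fin n))
        = fun i : Fin (q+1) => (⟨xvf q a e' c' i.val, hxbd' i⟩ : Fin n) := by
      refine mono_image_eq ?_ ?_ hdomEq
      · intro i j hij
        rw [Fin.lt_def]
        exact xvf_strict he.1 hij (Nat.lt_succ_iff.1 j.isLt)
      · intro i j hij
        rw [Fin.lt_def]
        exact xvf_strict he'.1 hij (Nat.lt_succ_iff.1 j.isLt)
    have hxv : ∀ i : Fin (q+1), xvf q a e c i.val = xvf q a e' c' i.val := fun i =>
      congrArg Fin.val (congrFun hgx i)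
    have himEq := congrArg pim hEq
    rw [pim_phi he.1 hbd hxbd, pim_phi he'.1 hbd' hxbd'] at himEq
    have hgy : (fun i : Fin (q+1) => (⟨yvf q a e i.val, hbd i⟩ : Fin n))
        = fun i : Fin (q+1) => (⟨yvf q a e' i.val, hbd' i⟩ : Fin n) := by
      refine mono_image_eq ?_ ?_ himEq
      · intro i j hij
        rw [Fin.lt_def]
        exact yvf_strict he.1 hij (Nat.lt_succ_iff.1 j.isLt)
      · intro i j hij
        rw [Fin.lt_def]
        exact yvf_strict he'.1 hij (Nat.lt_succ_iff.1 j.isLt)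
    have hyv : ∀ i : Fin (q+1), yvf q a e i.val = yvf q a e' i.val := fun i =>
      congrArg Fin.val (congrFun hgy i)
    -- recover e
    have heEq : e = e' := by
      funext i
      have h1 := hyv ⟨i.val, Nat.lt_succ_of_lt i.isLt⟩
      have h2 := hyv ⟨i.val + 1, Nat.succ_lt_succ i.isLt⟩
      simp only at h1 h2
      have h3 : yvf q a e (i.val+1) = yvf q a e i.val + en q e i.val := yvf_succ
      have h4 : yvf q a e' (i.val+1) = yvf q a e' i.val + en q e' i.val := yvf_succ
      have h5 : en q e i.val = e i := by simp [en, i.isLt]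
      have h6 : en q e' i.val = e' i := by simp [en, i.isLt]
      omega
    have hcEq : c = c' := by
      funext j
      by_cases hj : j.val < q
      · have h1 := hxv ⟨j.val, Nat.lt_succ_of_lt hj⟩
        have h2 := hxv ⟨j.val + 1, Nat.succ_lt_succ hj⟩
        simp only at h1 h2
        have h3 : xvf q a e c (j.val+1) = xvf q a e c j.val + (en q e j.val + cnf q c j.val) :=
          xvf_succ
        have h4 : xvf q a e' c' (j.val+1)
            = xvf q a e' c' j.val + (en q e' j.val + cnf q c' j.val) := xvf_succ
        have h5 : cnf q c j.val = c j := by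
          simp only [cnf, hj, dif_pos, Fin.eta]
        have h6 : cnf q c' j.val = c' j := by
          simp only [cnf, hj, dif_pos, Fin.eta]
        have hen : en q e j.val = en q e' j.val := by rw [heEq]
        omega
      · have hjl : j = Fin.last q := Fin.ext (by have := j.isLt; simp [Fin.val_last]; omega)
        have h1 := hxv 0
        have h2 : xvf q a e c 0 = a + c (Fin.last q) := xvf_zero
        have h3 : xvf q a e' c' 0 = a + c' (Fin.last q) := xvf_zero
        rw [hjl]
        simp only [Fin.val_zero] at h1
        omega
    subst heEq
    subst hcEq
    rfl
  · -- surjectivity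
    rintro ⟨f, hf1, hf2, hf3, hf4, hmin, hmax, hdmax, hh⟩
    obtain ⟨ox, oy, hoxm, hoym, hkey, hoy0, hoylast, hoxlast, hpdom⟩ :=
      struct hf1 hf3 hf4 hmin hmax hdmax hh
    set a := kminus.val with ha
    set e : Fin q → ℕ := fun i =>
      (oy ⟨i.val+1, Nat.succ_lt_succ i.isLt⟩).val - (oy ⟨i.val, Nat.lt_succ_of_lt i.isLt⟩).val
      with hedef
    set c : Fin (q+1) → ℕ := fun j =>
      if h : j.val < q then
        ((ox ⟨j.val+1, Nat.succ_lt_succ h⟩).val - (ox ⟨j.val, Nat.lt_succ_of_lt h⟩).val)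
          - ((oy ⟨j.val+1, Nat.succ_lt_succ h⟩).val - (oy ⟨j.val, Nat.lt_succ_of_lt h⟩).val)
      else (ox 0).val - kminus.val
      with hcdef
    have hoyM : Monotone (fun i : Fin (q+1) => (oy i).val) := fun i j hij =>
      Fin.le_def.1 (hoym.monotone hij)
    have hoxM : Monotone (fun i : Fin (q+1) => (ox i).val) := fun i j hij =>
      Fin.le_def.1 (hoxm.monotone hij)
    have hgap : ∀ t (ht : t < q),
        (oy ⟨t+1, Nat.succ_lt_succ ht⟩).val - (oy ⟨t, Nat.lt_succ_of_lt ht⟩).val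
          ≤ (ox ⟨t+1, Nat.succ_lt_succ ht⟩).val - (ox ⟨t, Nat.lt_succ_of_lt ht⟩).val := by
      intro t ht
      have habs := hf2 (ox ⟨t, Nat.lt_succ_of_lt ht⟩) (ox ⟨t+1, Nat.succ_lt_succ ht⟩) _ _
        (hkey _) (hkey _)
      have hlt : (⟨t, Nat.lt_succ_of_lt ht⟩ : Fin (q+1)) < ⟨t+1, Nat.succ_lt_succ ht⟩ :=
        Fin.mk_lt_mk.2 (Nat.lt_succ_self t)
      have h1 : (oy ⟨t, Nat.lt_succ_of_lt ht⟩).val ≤ (oy ⟨t+1, Nat.succ_lt_succ ht⟩).val :=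
        Fin.le_def.1 (hoym hlt).le
      have h2 : (ox ⟨t, Nat.lt_succ_of_lt ht⟩).val ≤ (ox ⟨t+1, Nat.succ_lt_succ ht⟩).val :=
        Fin.le_def.1 (hoxm hlt).le
      have := abs_helper2 h1 h2 habs
      omega
    have hepos : ∀ i, 1 ≤ e i := by
      intro i
      have hlt : (⟨i.val, Nat.lt_succ_of_lt i.isLt⟩ : Fin (q+1))
          < ⟨i.val+1, Nat.succ_lt_succ i.isLt⟩ := Fin.mk_lt_mk.2 (Nat.lt_succ_self _)
      have := Fin.lt_def.1 (hoym hlt)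
      simp only [hedef]
      omega
    have hoy0v : (oy 0).val = a := congrArg Fin.val hoy0
    have hoylastv : (oy (Fin.last q)).val = kplus.val := congrArg Fin.val hoylast
    have hoxlastv : (ox (Fin.last q)).val = lplus.val := congrArg Fin.val hoxlast
    have hdecr0 : a ≤ (ox 0).val := by
      have := Fin.le_def.1 (hf4 (ox 0) (oy 0) (hkey 0))
      omega
    have hlastmk : (⟨q, Nat.lt_succ_of_le le_rfl⟩ : Fin (q+1)) = Fin.last q := rfl
    -- telescoping for e
    have hteley : ∀ j (hj : j ≤ q), ∑ t ∈ Finset.range j, en q e t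
        = (oy ⟨j, Nat.lt_succ_of_le hj⟩).val - (oy 0).val :=
      tele q (fun i => (oy i).val) hoyM (en q e)
        (fun t ht => by simp only [en, ht, dif_pos, hedef])
    have htelex : ∀ j (hj : j ≤ q), ∑ t ∈ Finset.range j, (if ht : t < q then
          (ox ⟨t+1, Nat.succ_lt_succ ht⟩).val - (ox ⟨t, Nat.lt_succ_of_lt ht⟩).val else 0)
        = (ox ⟨j, Nat.lt_succ_of_le hj⟩).val - (ox 0).val :=
      tele q (fun i => (ox i).val) hoxM
        (fun t => if ht : t < q then
          (ox ⟨t+1, Nat.succ_lt_succ ht⟩).val - (ox ⟨t, Nat.lt_succ_of_lt ht⟩).val else 0)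
        (fun t ht => by simp only [ht, dif_pos])
    have hsume : ∑ i, e i = kplus.val - kminus.val := by
      rw [sum_fin_eq_sum_range' q e]
      have h1 := hteley q le_rfl
      rw [hlastmk] at h1
      have h2 : ∑ t ∈ Finset.range q, en q e t
          = ∑ t ∈ Finset.range q, (if h : t < q then e ⟨t, h⟩ else 0) := rfl
      rw [← h2, h1, hoylastv, hoy0v]
    have hsumoy : ∑ t ∈ Finset.range q, en q e t = kplus.val - a := by
      have h1 := hteley q le_rfl
      rw [hlastmk] at h1
      rw [h1, hoylastv, hoy0v]
    have hsumox : ∑ t ∈ Finset.range q, (if ht : t < q then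
        (ox ⟨t+1, Nat.succ_lt_succ ht⟩).val - (ox ⟨t, Nat.lt_succ_of_lt ht⟩).val else 0)
        = lplus.val - (ox 0).val := by
      have h1 := htelex q le_rfl
      rw [hlastmk] at h1
      rw [h1, hoxlastv]
    have hox0le : (ox 0).val ≤ lplus.val := by
      have := hoxM (Fin.zero_le (Fin.last q))
      simp only at this
      omega
    have hyxlast : kplus.val - a ≤ lplus.val - (ox 0).val := by
      have habs := hf2 (ox 0) (ox (Fin.last q)) _ _ (hkey 0) (hkey (Fin.last q))
      have h1 : (oy 0).val ≤ (oy (Fin.last q)).val := hoyM (Fin.zero_le _)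
      have h2 : (ox 0).val ≤ (ox (Fin.last q)).val := hoxM (Fin.zero_le _)
      have := abs_helper2 h1 h2 habs
      omega
    have hsumc : ∑ j, c j = lplus.val - kplus.val := by
      rw [Fin.sum_univ_castSucc (f := c)]
      have hclast : c (Fin.last q) = (ox 0).val - a := by
        simp only [hcdef, Fin.val_last]
        rw [dif_neg (lt_irrefl q)]
      have hterm : ∀ j : Fin q, c j.castSucc + e j
          = (if ht : (j.val : ℕ) < q then
              (ox ⟨j.val+1, Nat.succ_lt_succ ht⟩).val - (ox ⟨j.val, Nat.lt_succ_of_lt ht⟩).val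
            else 0) := by
        intro j
        have hjq : (j.castSucc).val < q := j.isLt
        simp only [hcdef, hedef, hjq, dif_pos, j.isLt, Fin.coe_castSucc]
        have := hgap j.val j.isLt
        omega
      have hsum1 : ∑ j : Fin q, (c j.castSucc + e j)
          = ∑ j : Fin q, (if ht : (j.val : ℕ) < q then
              (ox ⟨j.val+1, Nat.succ_lt_succ ht⟩).val - (ox ⟨j.val, Nat.lt_succ_of_lt ht⟩).val
            else 0) := Finset.sum_congr rfl fun j _ => hterm j
      rw [Finset.sum_add_distrib] at hsum1
      have hsum2 : ∑ j : Fin q, (if ht : (j.val : ℕ) < q then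
              (ox ⟨j.val+1, Nat.succ_lt_succ ht⟩).val - (ox ⟨j.val, Nat.lt_succ_of_lt ht⟩).val
            else 0)
          = lplus.val - (ox 0).val := by
        rw [sum_fin_eq_sum_range' q, ← hsumox]
        refine Finset.sum_congr rfl fun t ht => ?_
        rw [Finset.mem_range] at ht
        simp only [ht, dif_pos]
      rw [hsum2] at hsum1
      have hse : ∑ j : Fin q, e j = kplus.val - a := hsume
      omega
    -- the values of yvf and xvf
    have hyv : ∀ j (hj : j ≤ q), yvf q a e j = (oy ⟨j, Nat.lt_succ_of_le hj⟩).val := by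
      intro j hj
      rw [yvf, hteley j hj]
      have h1 : (oy 0).val ≤ (oy ⟨j, Nat.lt_succ_of_le hj⟩).val := hoyM (Fin.zero_le _)
      omega
    have hxv : ∀ j (hj : j ≤ q), xvf q a e c j = (ox ⟨j, Nat.lt_succ_of_le hj⟩).val := by
      intro j hj
      rw [xvf]
      have hclast : c (Fin.last q) = (ox 0).val - a := by
        simp only [hcdef, Fin.val_last]
        rw [dif_neg (lt_irrefl q)]
      have hsum3 : ∑ t ∈ Finset.range j, (en q e t + cnf q c t)
          = ∑ t ∈ Finset.range j, (if ht : t < q then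
              (ox ⟨t+1, Nat.succ_lt_succ ht⟩).val - (ox ⟨t, Nat.lt_succ_of_lt ht⟩).val
            else 0) := by
        refine Finset.sum_congr rfl fun t ht => ?_
        rw [Finset.mem_range] at ht
        have htq : t < q := lt_of_lt_of_le ht hj
        simp only [en, cnf, htq, dif_pos, hcdef, hedef]
        have := hgap t htq
        omega
      rw [hsum3, htelex j hj, hclast]
      have h1 : (ox 0).val ≤ (ox ⟨j, Nat.lt_succ_of_le hj⟩).val := hoxM (Fin.zero_le _)
      omega
    have hbd : ∀ i : Fin (q+1), yvf q a e i.val < n := by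
      intro i
      rw [hyv i.val (Nat.lt_succ_iff.1 i.isLt)]
      exact (oy _).isLt
    have hPhi : Phi n q a e c = f := by
      funext z
      rcases hfz : f z with _ | w
      · refine (phi_none_iff hbd z).2 ?_
        intro i hi
        rw [hxv i.val (Nat.lt_succ_iff.1 i.isLt)] at hi
        have hieq : (⟨i.val, Nat.lt_succ_of_le (Nat.lt_succ_iff.1 i.isLt)⟩ : Fin (q+1)) = i :=
          Fin.ext rfl
        rw [hieq] at hi
        have hzmem : z ∈ pdom f := by
          rw [hpdom, Finset.mem_image]
          exact ⟨i, Finset.mem_univ _, Fin.ext hi⟩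
        obtain ⟨w, hw⟩ := mem_pdom_iff.1 hzmem
        rw [hfz] at hw
        cases hw
      · have hzmem : z ∈ pdom f := mem_pdom_iff.2 ⟨w, hfz⟩
        rw [hpdom, Finset.mem_image] at hzmem
        obtain ⟨i, _, rfl⟩ := hzmem
        have hw : w = oy i := by
          have := (hkey i).symm.trans hfz
          exact (Option.some.inj this).symm
        refine (phi_some_iff hepos hbd _ _).2 ⟨i, ?_, ?_⟩
        · rw [hxv i.val (Nat.lt_succ_iff.1 i.isLt)]
        · rw [hyv i.val (Nat.lt_succ_iff.1 i.isLt), hw]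
    exact ⟨⟨⟨c, hsumc⟩, ⟨e, hepos, hsume⟩⟩, Subtype.ext hPhi⟩

end MainCard

section Final

lemma constraints {n q : ℕ} {f : Fin n → Option (Fin n)} {kminus kplus lplus : Fin n}
    (hf : PInj f ∧ Contr f ∧ OrdPres f ∧ OrdDecr f ∧
        (pim f).min = (kminus : WithTop (Fin n)) ∧
        (pim f).max = (kplus : WithBot (Fin n)) ∧
        (pdom f).max = (lplus : WithBot (Fin n)) ∧
        pheight f = q + 1) :
    kminus.val + q ≤ kplus.val ∧ kplus.val ≤ lplus.val := by
  obtain ⟨hf1, hf2, hf3, hf4, hmin, hmax, hdmax, hh⟩ := hf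
  obtain ⟨ox, oy, hoxm, hoym, hkey, hoy0, hoylast, hoxlast, hpdom⟩ :=
    struct hf1 hf3 hf4 hmin hmax hdmax hh
  constructor
  · have := strictMono_last_ge hoym
    rw [hoy0, hoylast] at this
    exact this
  · have h1 : oy (Fin.last q) ≤ ox (Fin.last q) := hf4 _ _ (hkey (Fin.last q))
    rw [hoy0, hoylast, hoxlast] at *
    exact Fin.le_def.1 h1

/-- The number of elements of `ODCI_n` with prescribed left waist `k⁻`, right waist
`k⁺`, right shoulder `l⁺` and height `p ≥ 2` equals
`C(l⁺-k⁺+p-1, p-1)·C(k⁺-k⁻-1, p-2)`. -/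
theorem ODCI_count_waists_shoulder (n p : ℕ) (hn : 1 ≤ n) (hp : 2 ≤ p)
    (kminus kplus lplus : Fin n) :
    Nat.card {f : Fin n → Option (Fin n) //
        PInj f ∧ Contr f ∧ OrdPres f ∧ OrdDecr f ∧
        (pim f).min = (kminus : WithTop (Fin n)) ∧
        (pim f).max = (kplus : WithBot (Fin n)) ∧
        (pdom f).max = (lplus : WithBot (Fin n)) ∧
        pheight f = p} =
      ichoose ((lplus.val : ℤ) - (kplus.val : ℤ) + (p : ℤ) - 1) ((p : ℤ) - 1) *
      ichoose ((kplus.val : ℤ) - (kminus.val : ℤ) - 1) ((p : ℤ) - 2) := by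
  obtain ⟨q, rfl⟩ : ∃ q, p = q + 1 := ⟨p - 1, by omega⟩
  have hq : 1 ≤ q := by omega
  by_cases hcond : kminus.val + q ≤ kplus.val ∧ kplus.val ≤ lplus.val
  · obtain ⟨hab, hbl⟩ := hcond
    rw [main_card kminus kplus lplus hq hab hbl, Nat.card_prod,
      card_tuple_sum (q+1) (lplus.val - kplus.val),
      card_tuple_pos_sum q (kplus.val - kminus.val) hq (by omega)]
    have h1 : ichoose ((lplus.val : ℤ) - (kplus.val : ℤ) + (q+1 : ℕ) - 1) ((q+1 : ℕ) - 1)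
        = (q + 1 + (lplus.val - kplus.val) - 1).choose (lplus.val - kplus.val) := by
      rw [ichoose, if_pos (by constructor <;> [omega; omega])]
      have e1 : ((lplus.val : ℤ) - (kplus.val : ℤ) + (q+1 : ℕ) - 1).toNat
          = (lplus.val - kplus.val) + q := by omega
      have e2 : (((q+1 : ℕ) : ℤ) - 1).toNat = q := by omega
      rw [e1, e2]
      have e3 : q + 1 + (lplus.val - kplus.val) - 1 = (lplus.val - kplus.val) + q := by omega
      rw [e3, Nat.add_comm (lplus.val - kplus.val) q, Nat.choose_symm_add]
    have h2 : ichoose ((kplus.val : ℤ) - (kminus.val : ℤ) - 1) ((q+1 : ℕ) - 2)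
        = (kplus.val - kminus.val - 1).choose (q - 1) := by
      rw [ichoose, if_pos (by constructor <;> [omega; omega])]
      have e1 : ((kplus.val : ℤ) - (kminus.val : ℤ) - 1).toNat
          = kplus.val - kminus.val - 1 := by omega
      have e2 : (((q+1 : ℕ) : ℤ) - 2).toNat = q - 1 := by omega
      rw [e1, e2]
    rw [h1, h2]
  · have hEmpty : IsEmpty {f : Fin n → Option (Fin n) //
        PInj f ∧ Contr f ∧ OrdPres f ∧ OrdDecr f ∧
        (pim f).min = (kminus : WithTop (Fin n)) ∧
        (pim f).max = (kplus : WithBot (Fin n)) ∧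
        (pdom f).max = (lplus : WithBot (Fin n)) ∧
        pheight f = q + 1} := ⟨fun x => hcond (constraints x.2)⟩
    rw [Nat.card_of_isEmpty]
    rcases not_and_or.1 hcond with h | h
    · have : ichoose ((kplus.val : ℤ) - (kminus.val : ℤ) - 1) ((q+1 : ℕ) - 2) = 0 := by
        rw [ichoose, if_neg]
        rintro ⟨h1, h2⟩
        omega
      rw [this, Nat.mul_zero]
    · have : ichoose ((lplus.val : ℤ) - (kplus.val : ℤ) + (q+1 : ℕ) - 1) ((q+1 : ℕ) - 1) = 0 := by
        rw [ichoose, if_neg]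
        rintro ⟨h1, h2⟩
        omega
      rw [this, Nat.zero_mul]

end Final
end

section
/- Let F(n;p) denote the number of elements of ODCI_n of height p. Then for every p ≥ 0, F(n;p) = C(n+p, 2p). -/
/-- Cardinality of strictly monotone maps `Fin k → Fin m`. -/
lemma card_strictMono_fin (m k : ℕ) :
    Nat.card {c : Fin k → Fin m // StrictMono c} = m.choose k := by
  have e : {c : Fin k → Fin m // StrictMono c} ≃ {s : Finset (Fin m) // s.card = k} := by
    refine
      { toFun := fun c => ⟨Finset.image c.1 Finset.univ, by
          rw [Finset.card_image_of_injective _ c.2.injective, Finset.card_univ,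
            Fintype.card_fin]⟩
        invFun := fun s => ⟨s.1.orderEmbOfFin s.2, (s.1.orderEmbOfFin s.2).strictMono⟩
        left_inv := ?_, right_inv := ?_ }
    · rintro ⟨c, hc⟩
      apply Subtype.ext
      exact (Finset.orderEmbOfFin_unique _ (fun x => Finset.mem_image_of_mem _ (Finset.mem_univ x)) hc).symm
    · rintro ⟨s, hs⟩
      apply Subtype.ext
      have : ↑(Finset.image (s.orderEmbOfFin hs) Finset.univ) = (s : Set (Fin m)) := by
        rw [Finset.coe_image, Finset.coe_univ, Set.image_univ, Finset.range_orderEmbOfFin]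
      exact_mod_cast this
  rw [Nat.card_congr e, Nat.card_eq_fintype_card, Fintype.card_finset_len, Fintype.card_fin]

/-- A "ℕ-valued with junk zero" encoding of strictly monotone bounded sequences. -/
def Tgood (n p : ℕ) : Type :=
  {c : ℕ → ℕ // (∀ a b, a < b → b < 2*p → c a < c b) ∧ (∀ j, j < 2*p → c j < n + p) ∧
    (∀ j, 2*p ≤ j → c j = 0)}

lemma card_Tgood (n p : ℕ) : Nat.card (Tgood n p) = (n + p).choose (2*p) := by
  have e : Tgood n p ≃ {c : Fin (2*p) → Fin (n+p) // StrictMono c} := by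
    refine
      { toFun := fun c => ⟨fun j => ⟨c.1 j.val, c.2.2.1 j.val j.isLt⟩, fun a b hab => by
          simpa [Fin.lt_def] using c.2.1 a.val b.val hab b.isLt⟩
        invFun := fun d => ⟨fun j => if h : j < 2*p then (d.1 ⟨j, h⟩).val else 0, ?_, ?_, ?_⟩
        left_inv := ?_, right_inv := ?_ }
    · intro a b hab hb
      dsimp only
      rw [dif_pos (hab.trans hb), dif_pos hb]
      exact d.2 (by simpa [Fin.lt_def] using hab)
    · intro j hj
      dsimp only
      rw [dif_pos hj]
      exact (d.1 ⟨j, hj⟩).isLt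
    · intro j hj
      dsimp only
      rw [dif_neg (by omega)]
    · rintro ⟨c, h1, h2, h3⟩
      apply Subtype.ext
      funext j
      by_cases h : j < 2*p
      · simp [dif_pos h]
      · simp [dif_neg h, h3 j (le_of_not_gt h)]
    · rintro ⟨d, hd⟩
      apply Subtype.ext
      funext j
      simp [dif_pos j.isLt]
  rw [Nat.card_congr e, card_strictMono_fin]

/-- Gap lemma: a strictly monotone sequence grows at least linearly. -/
lemma smono_gap {k : ℕ} {c : ℕ → ℕ} (h : ∀ a b, a < b → b < k → c a < c b) :
    ∀ a b, a ≤ b → b < k → c a + (b - a) ≤ c b := by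
  intro a b
  induction b with
  | zero =>
    intro hab _
    obtain rfl := Nat.le_zero.mp hab
    omega
  | succ b ih =>
    intro hab hbk
    rcases Nat.eq_or_lt_of_le hab with h1 | h1
    · subst h1; omega
    · have h2 : c a + (b - a) ≤ c b := ih (by omega) (by omega)
      have h3 : c b < c (b+1) := h b (b+1) (by omega) hbk
      omega


def Ugood (n p : ℕ) : Type :=
  {xy : (ℕ → ℕ) × (ℕ → ℕ) //
    (∀ i j, i < j → j < p → xy.1 i < xy.1 j) ∧
    (∀ i j, i < j → j < p → xy.2 i < xy.2 j) ∧
    (∀ i, i < p → xy.2 i ≤ xy.1 i) ∧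
    (∀ i j, i ≤ j → j < p → xy.1 i + xy.2 j ≤ xy.1 j + xy.2 i) ∧
    (∀ i, i < p → xy.1 i < n) ∧
    (∀ i, p ≤ i → xy.1 i = 0) ∧ (∀ i, p ≤ i → xy.2 i = 0)}

def UtoT (n p : ℕ) (x y : ℕ → ℕ) : ℕ → ℕ := fun j =>
  if j < p then y j
  else if j < 2*p then n + (j - p) - (x (p - 1 - (j - p)) - y (p - 1 - (j - p)))
  else 0

def TtoUx (n p : ℕ) (c : ℕ → ℕ) : ℕ → ℕ := fun i =>
  if i < p then c i + (n + (p - 1 - i) - c (2*p - 1 - i)) else 0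

def TtoUy (p : ℕ) (c : ℕ → ℕ) : ℕ → ℕ := fun i => if i < p then c i else 0

section UT
variable {n p : ℕ}

lemma ymono {y : ℕ → ℕ} (hy : ∀ i j, i < j → j < p → y i < y j) :
    ∀ i j, i ≤ j → j < p → y i ≤ y j := by
  intro i j hij hj
  rcases Nat.eq_or_lt_of_le hij with h | h
  · subst h; exact le_rfl
  · exact (hy i j h hj).le

def equivUT (n p : ℕ) : Ugood n p ≃ Tgood n p where
  toFun u := by
    obtain ⟨⟨x, y⟩, hx, hy, hyx, hg, hxn, hx0, hy0⟩ := u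
    dsimp only at hx hy hyx hg hxn hx0 hy0
    refine ⟨UtoT n p x y, ?_, ?_, ?_⟩
    · intro a b hab hb
      simp only [UtoT]
      by_cases hbp : b < p
      · rw [if_pos (by omega), if_pos hbp]
        exact hy a b hab hbp
      · by_cases hap : a < p
        · rw [if_pos hap, if_neg hbp, if_pos hb]
          have h1 : y a ≤ y (p - 1) := ymono hy a (p-1) (by omega) (by omega)
          have h2 : x (p - 1 - (b - p)) + y (p - 1) ≤ x (p - 1) + y (p - 1 - (b - p)) :=
            hg _ _ (by omega) (by omega)
          have h3 : y (p - 1) ≤ x (p - 1) := hyx _ (by omega)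
          have h4 : y (p - 1 - (b - p)) ≤ x (p - 1 - (b - p)) := hyx _ (by omega)
          have h5 : x (p - 1) < n := hxn _ (by omega)
          omega
        · rw [if_neg hap, if_pos (by omega), if_neg hbp, if_pos hb]
          have h1 : x (p - 1 - (b - p)) < x (p - 1 - (a - p)) := hx _ _ (by omega) (by omega)
          have h2 : x (p - 1 - (b - p)) + y (p - 1 - (a - p)) ≤
              x (p - 1 - (a - p)) + y (p - 1 - (b - p)) := hg _ _ (by omega) (by omega)
          have h3 : y (p - 1 - (a - p)) ≤ x (p - 1 - (a - p)) := hyx _ (by omega)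
          have h4 : y (p - 1 - (b - p)) ≤ x (p - 1 - (b - p)) := hyx _ (by omega)
          have h5 : x (p - 1 - (a - p)) < n := hxn _ (by omega)
          omega
    · intro j hj
      simp only [UtoT]
      by_cases hjp : j < p
      · rw [if_pos hjp]
        have := hyx j hjp
        have := hxn j hjp
        omega
      · rw [if_neg hjp, if_pos hj]
        omega
    · intro j hj
      simp only [UtoT]
      rw [if_neg (by omega), if_neg (by omega)]
  invFun c := by
    obtain ⟨c, hc, hcb, hc0⟩ := c
    have key : ∀ j, j < 2*p → c j + (2*p - 1 - j) < n + p := by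
      intro j hj
      have h1 := smono_gap hc j (2*p - 1) (by omega) (by omega)
      have h2 := hcb (2*p - 1) (by omega)
      omega
    refine ⟨⟨TtoUx n p c, TtoUy p c⟩, ?_, ?_, ?_, ?_, ?_, ?_, ?_⟩
    · intro i j hij hj
      dsimp only
      simp only [TtoUx]
      rw [if_pos (by omega), if_pos hj]
      have h1 := smono_gap hc i j hij.le (by omega)
      have h2 := smono_gap hc (2*p - 1 - j) (2*p - 1 - i) (by omega) (by omega)
      have h3 := key (2*p - 1 - i) (by omega)
      have h4 := key (2*p - 1 - j) (by omega)
      omega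
    · intro i j hij hj
      dsimp only
      simp only [TtoUy]
      rw [if_pos (by omega), if_pos hj]
      exact hc i j hij (by omega)
    · intro i hi
      dsimp only
      simp only [TtoUx, TtoUy]
      rw [if_pos hi, if_pos hi]
      omega
    · intro i j hij hj
      dsimp only
      simp only [TtoUx, TtoUy]
      have h1 := smono_gap hc (2*p - 1 - j) (2*p - 1 - i) (by omega) (by omega)
      have h3 := key (2*p - 1 - i) (by omega)
      have h4 := key (2*p - 1 - j) (by omega)
      split_ifs <;> omega
    · intro i hi
      dsimp only
      simp only [TtoUx]
      rw [if_pos hi]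
      have h1 := smono_gap hc i (2*p - 1 - i) (by omega) (by omega)
      have h3 := key (2*p - 1 - i) (by omega)
      omega
    · intro i hi
      dsimp only
      simp only [TtoUx]
      rw [if_neg (by omega)]
    · intro i hi
      dsimp only
      simp only [TtoUy]
      rw [if_neg (by omega)]
  left_inv := by
    rintro ⟨⟨x, y⟩, hx, hy, hyx, hg, hxn, hx0, hy0⟩
    dsimp only at hx hy hyx hg hxn hx0 hy0
    apply Subtype.ext
    dsimp only
    refine Prod.ext ?_ ?_
    · funext i
      show TtoUx n p (UtoT n p x y) i = x i
      simp only [TtoUx, UtoT]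
      by_cases hi : i < p
      · rw [if_pos hi, if_pos hi, if_neg (show ¬(2*p - 1 - i < p) by omega),
          if_pos (show 2*p - 1 - i < 2*p by omega),
          show p - 1 - (2*p - 1 - i - p) = i from by omega]
        have := hyx i hi
        have := hxn i hi
        omega
      · rw [if_neg hi]
        exact (hx0 i (by omega)).symm
    · funext i
      show TtoUy p (UtoT n p x y) i = y i
      simp only [TtoUy, UtoT]
      by_cases hi : i < p
      · rw [if_pos hi, if_pos hi]
      · rw [if_neg hi]
        exact (hy0 i (by omega)).symm
  right_inv := by
    rintro ⟨c, hc, hcb, hc0⟩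
    have key : ∀ j, j < 2*p → c j + (2*p - 1 - j) < n + p := by
      intro j hj
      have h1 := smono_gap hc j (2*p - 1) (by omega) (by omega)
      have h2 := hcb (2*p - 1) (by omega)
      omega
    apply Subtype.ext
    dsimp only
    funext j
    show UtoT n p (TtoUx n p c) (TtoUy p c) j = c j
    simp only [UtoT, TtoUx, TtoUy]
    by_cases hjp : j < p
    · rw [if_pos hjp, if_pos hjp]
    · by_cases hj2 : j < 2*p
      · rw [if_neg hjp, if_pos hj2, if_pos (show p - 1 - (j - p) < p by omega),
          if_pos (show p - 1 - (j - p) < p by omega),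
          show 2*p - 1 - (p - 1 - (j - p)) = j from by omega,
          show p - 1 - (p - 1 - (j - p)) = j - p from by omega]
        have h3 := key j hj2
        omega
      · rw [if_neg hjp, if_neg hj2]
        exact (hc0 j (by omega)).symm


/-! ### from pairs to partial maps -/

noncomputable def mkfun (n p : ℕ) (x y : ℕ → ℕ) (hb : ∀ i, i < p → y i < n) : Fin n → Option (Fin n) :=
  fun z => if h : ∃ i, i < p ∧ x i = z.val then
    some ⟨y (Classical.choose h), hb _ (Classical.choose_spec h).1⟩ else none

lemma mkfun_some_iff {n p : ℕ} {x y : ℕ → ℕ} {hb : ∀ i, i < p → y i < n} {z a : Fin n}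
    (h : mkfun n p x y hb z = some a) : ∃ i, i < p ∧ x i = z.val ∧ y i = a.val := by
  unfold mkfun at h
  by_cases h' : ∃ i, i < p ∧ x i = z.val
  · rw [dif_pos h'] at h
    obtain ⟨hi, hxi⟩ := Classical.choose_spec h'
    refine ⟨Classical.choose h', hi, hxi, ?_⟩
    have := Option.some.inj h
    rw [← this]
  · rw [dif_neg h'] at h
    cases h

lemma mkfun_none {n p : ℕ} {x y : ℕ → ℕ} {hb : ∀ i, i < p → y i < n} {z : Fin n}
    (h : ¬ ∃ i, i < p ∧ x i = z.val) : mkfun n p x y hb z = none :=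
  dif_neg h

lemma mkfun_eq_some {n p : ℕ} {x y : ℕ → ℕ} {hb : ∀ i, i < p → y i < n}
    (hx : ∀ i j, i < j → j < p → x i < x j) {z : Fin n} {i : ℕ} (hi : i < p)
    (hxi : x i = z.val) : mkfun n p x y hb z = some ⟨y i, hb i hi⟩ := by
  have h' : ∃ i, i < p ∧ x i = z.val := ⟨i, hi, hxi⟩
  unfold mkfun
  rw [dif_pos h']
  obtain ⟨hj, hxj⟩ := Classical.choose_spec h'
  have hchoose : Classical.choose h' = i := by
    by_contra hne
    rcases Nat.lt_or_ge (Classical.choose h') i with h1 | h1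
    · have := hx _ _ h1 hi; omega
    · have : i < Classical.choose h' := by omega
      have := hx _ _ this hj; omega
  congr 1
  exact Fin.ext (congrArg y hchoose)

/-! ### from partial maps to pairs -/

lemma isSome_of_mem_pdom {n : ℕ} {f : Fin n → Option (Fin n)} {z : Fin n}
    (hz : z ∈ pdom f) : (f z).isSome := (Finset.mem_filter.mp hz).2

lemma mem_pdom_of_isSome {n : ℕ} {f : Fin n → Option (Fin n)} {z : Fin n}
    (hz : (f z).isSome) : z ∈ pdom f := Finset.mem_filter.mpr ⟨Finset.mem_univ _, hz⟩

lemma pdom_card_eq {n : ℕ} {f : Fin n → Option (Fin n)} (hinj : PInj f) :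
    (pdom f).card = pheight f := by
  apply Finset.card_bij (fun z hz => (f z).get (isSome_of_mem_pdom hz))
  · intro z hz
    refine Finset.mem_filter.mpr ⟨Finset.mem_univ _, z, ?_⟩
    exact (Option.some_get _).symm
  · intro z1 h1 z2 h2 heq
    apply hinj z1 z2 ((f z1).get (isSome_of_mem_pdom h1))
    · exact (Option.some_get _).symm
    · rw [heq]; exact (Option.some_get _).symm
  · intro b hb
    obtain ⟨z, hz⟩ := (Finset.mem_filter.mp hb).2
    have hzs : (f z).isSome := by rw [hz]; rfl
    refine ⟨z, mem_pdom_of_isSome hzs, ?_⟩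
    simp [hz]

def SUx (n p : ℕ) (f : Fin n → Option (Fin n)) (hD : (pdom f).card = p) : ℕ → ℕ :=
  fun i => if h : i < p then ((pdom f).orderEmbOfFin hD ⟨i, h⟩ : Fin n).val else 0

def SUy (n p : ℕ) (f : Fin n → Option (Fin n)) (hD : (pdom f).card = p) : ℕ → ℕ :=
  fun i => if h : i < p then
    ((f ((pdom f).orderEmbOfFin hD ⟨i, h⟩)).get
      (isSome_of_mem_pdom (Finset.orderEmbOfFin_mem _ hD _))).val
  else 0

lemma SUy_val {n p : ℕ} {f : Fin n → Option (Fin n)} {hD : (pdom f).card = p}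
    {i : ℕ} (h : i < p) {z a : Fin n}
    (hez : (pdom f).orderEmbOfFin hD ⟨i, h⟩ = z) (hfz : f z = some a) :
    SUy n p f hD i = a.val := by
  unfold SUy
  rw [dif_pos h]
  simp only [hez, hfz, Option.get_some]

lemma nmono {p : ℕ} {y : ℕ → ℕ} (hy : ∀ i j, i < j → j < p → y i < y j) :
    ∀ i j, i ≤ j → j < p → y i ≤ y j := by
  intro i j hij hj
  rcases Nat.eq_or_lt_of_le hij with h | h
  · subst h; exact le_rfl
  · exact (hy i j h hj).le

section SUlemmas

variable {n p : ℕ} {f : Fin n → Option (Fin n)} (hD : (pdom f).card = p)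

lemma SUx_strict : ∀ i j, i < j → j < p → SUx n p f hD i < SUx n p f hD j := by
  intro i j hij hj
  have hi : i < p := lt_trans hij hj
  unfold SUx
  rw [dif_pos hi, dif_pos hj]
  exact ((pdom f).orderEmbOfFin hD).strictMono (show (⟨i, hi⟩ : Fin p) < ⟨j, hj⟩ from hij)

lemma SU_fapp {i : ℕ} (hi : i < p) :
    f ((pdom f).orderEmbOfFin hD ⟨i, hi⟩) =
      some ((f ((pdom f).orderEmbOfFin hD ⟨i, hi⟩)).get
        (isSome_of_mem_pdom (Finset.orderEmbOfFin_mem _ hD _))) :=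
  (Option.some_get _).symm

lemma SUy_strict (h1 : PInj f) (h3 : OrdPres f) :
    ∀ i j, i < j → j < p → SUy n p f hD i < SUy n p f hD j := by
  intro i j hij hj
  have hi : i < p := lt_trans hij hj
  unfold SUy
  rw [dif_pos hi, dif_pos hj]
  have hlt : ((pdom f).orderEmbOfFin hD) ⟨i, hi⟩ < ((pdom f).orderEmbOfFin hD) ⟨j, hj⟩ :=
    ((pdom f).orderEmbOfFin hD).strictMono (show (⟨i, hi⟩ : Fin p) < ⟨j, hj⟩ from hij)
  have hab := h3 _ _ _ _ (SU_fapp hD hi) (SU_fapp hD hj) hlt.le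
  have hne : ((f (((pdom f).orderEmbOfFin hD) ⟨i, hi⟩)).get
        (isSome_of_mem_pdom (Finset.orderEmbOfFin_mem _ hD _))) ≠
      ((f (((pdom f).orderEmbOfFin hD) ⟨j, hj⟩)).get
        (isSome_of_mem_pdom (Finset.orderEmbOfFin_mem _ hD _))) := by
    intro he
    have := h1 _ _ _ (SU_fapp hD hi) (he ▸ (SU_fapp hD hj))
    rw [this] at hlt
    exact lt_irrefl _ hlt
  exact Fin.lt_def.mp (lt_of_le_of_ne hab hne)

lemma SUyx (h4 : OrdDecr f) : ∀ i, i < p → SUy n p f hD i ≤ SUx n p f hD i := by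
  intro i hi
  unfold SUx SUy
  rw [dif_pos hi, dif_pos hi]
  exact Fin.le_def.mp (h4 _ _ (SU_fapp hD hi))

lemma SUcontr (h2 : Contr f) (h3 : OrdPres f) :
    ∀ i j, i ≤ j → j < p →
      SUx n p f hD i + SUy n p f hD j ≤ SUx n p f hD j + SUy n p f hD i := by
  intro i j hij hj
  rcases Nat.eq_or_lt_of_le hij with h | h
  · subst h; omega
  have hi : i < p := lt_trans h hj
  unfold SUx SUy
  rw [dif_pos hi, dif_pos hj, dif_pos hj, dif_pos hi]
  have hlt : ((pdom f).orderEmbOfFin hD) ⟨i, hi⟩ < ((pdom f).orderEmbOfFin hD) ⟨j, hj⟩ :=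
    ((pdom f).orderEmbOfFin hD).strictMono (show (⟨i, hi⟩ : Fin p) < ⟨j, hj⟩ from h)
  have hab := Fin.le_def.mp (h3 _ _ _ _ (SU_fapp hD hi) (SU_fapp hD hj) hlt.le)
  have hcontr := h2 _ _ _ _ (SU_fapp hD hj) (SU_fapp hD hi)
  have hlt' := Fin.lt_def.mp hlt
  rcases abs_cases ((((f (((pdom f).orderEmbOfFin hD) ⟨j, hj⟩)).get
        (isSome_of_mem_pdom (Finset.orderEmbOfFin_mem _ hD _))).val : ℤ) -
      (((f (((pdom f).orderEmbOfFin hD) ⟨i, hi⟩)).get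
        (isSome_of_mem_pdom (Finset.orderEmbOfFin_mem _ hD _))).val : ℤ)) with
    ⟨ha1, ha2⟩ | ⟨ha1, ha2⟩ <;>
  rcases abs_cases (((((pdom f).orderEmbOfFin hD) ⟨j, hj⟩).val : ℤ) -
      ((((pdom f).orderEmbOfFin hD) ⟨i, hi⟩).val : ℤ)) with ⟨hb1, hb2⟩ | ⟨hb1, hb2⟩ <;>
  rw [ha1, hb1] at hcontr <;> omega

lemma SUx_lt : ∀ i, i < p → SUx n p f hD i < n := by
  intro i hi
  unfold SUx
  rw [dif_pos hi]
  exact (((pdom f).orderEmbOfFin hD) ⟨i, hi⟩).isLt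

lemma SUx_junk : ∀ i, p ≤ i → SUx n p f hD i = 0 := by
  intro i hi; unfold SUx; rw [dif_neg (by omega)]

lemma SUy_junk : ∀ i, p ≤ i → SUy n p f hD i = 0 := by
  intro i hi; unfold SUy; rw [dif_neg (by omega)]

end SUlemmas

section mkfunlemmas

variable {n p : ℕ} {x y : ℕ → ℕ}

lemma emb_mkfun (hx : ∀ i j, i < j → j < p → x i < x j) (hxn : ∀ i, i < p → x i < n)
    {hb : ∀ i, i < p → y i < n} (hD : (pdom (mkfun n p x y hb)).card = p) :
    (fun i : Fin p => (⟨x i.val, hxn _ i.isLt⟩ : Fin n)) =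
      (pdom (mkfun n p x y hb)).orderEmbOfFin hD := by
  apply Finset.orderEmbOfFin_unique
  · intro i
    apply mem_pdom_of_isSome
    rw [mkfun_eq_some hx i.isLt rfl]
    rfl
  · intro a b hab
    exact Fin.mk_lt_mk.mpr (hx _ _ (Fin.lt_def.mp hab) b.isLt)

lemma SUx_mkfun (hx : ∀ i j, i < j → j < p → x i < x j) (hxn : ∀ i, i < p → x i < n)
    (hx0 : ∀ i, p ≤ i → x i = 0)
    {hb : ∀ i, i < p → y i < n} (hD : (pdom (mkfun n p x y hb)).card = p) :
    SUx n p (mkfun n p x y hb) hD = x := by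
  funext i
  by_cases hi : i < p
  · unfold SUx
    rw [dif_pos hi, ← emb_mkfun hx hxn hD]
  · unfold SUx
    rw [dif_neg hi]
    exact (hx0 i (by omega)).symm

lemma SUy_mkfun (hx : ∀ i j, i < j → j < p → x i < x j) (hxn : ∀ i, i < p → x i < n)
    (hy0 : ∀ i, p ≤ i → y i = 0)
    {hb : ∀ i, i < p → y i < n} (hD : (pdom (mkfun n p x y hb)).card = p) :
    SUy n p (mkfun n p x y hb) hD = y := by
  funext i
  by_cases hi : i < p
  · unfold SUy
    rw [dif_pos hi]
    have he : (pdom (mkfun n p x y hb)).orderEmbOfFin hD ⟨i, hi⟩ =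
        ⟨x i, hxn i hi⟩ := by rw [← emb_mkfun hx hxn hD]
    have hf : mkfun n p x y hb ⟨x i, hxn i hi⟩ = some ⟨y i, hb i hi⟩ :=
      mkfun_eq_some hx hi rfl
    simp only [he, hf, Option.get_some]
  · unfold SUy
    rw [dif_neg hi]
    exact (hy0 i (by omega)).symm

lemma pdom_mkfun (hx : ∀ i j, i < j → j < p → x i < x j) (hxn : ∀ i, i < p → x i < n)
    {hb : ∀ i, i < p → y i < n} :
    pdom (mkfun n p x y hb) =
      Finset.image (fun i : Fin p => (⟨x i.val, hxn _ i.isLt⟩ : Fin n)) Finset.univ := by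
  ext z
  simp only [pdom, Finset.mem_filter, Finset.mem_univ, true_and, Finset.mem_image]
  constructor
  · intro hz
    by_cases h' : ∃ i, i < p ∧ x i = z.val
    · obtain ⟨i, hi, hxi⟩ := h'
      exact ⟨⟨i, hi⟩, Fin.ext hxi⟩
    · rw [show mkfun n p x y hb z = none from dif_neg h'] at hz
      cases hz
  · rintro ⟨i, hi⟩
    rw [← hi, mkfun_eq_some hx i.isLt rfl]
    rfl

lemma pdom_mkfun_card (hx : ∀ i j, i < j → j < p → x i < x j) (hxn : ∀ i, i < p → x i < n)
    {hb : ∀ i, i < p → y i < n} : (pdom (mkfun n p x y hb)).card = p := by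
  rw [pdom_mkfun hx hxn, Finset.card_image_of_injective, Finset.card_univ, Fintype.card_fin]
  intro i1 i2 he
  have hvv : x i1.val = x i2.val := congrArg Fin.val he
  apply Fin.ext
  by_contra hne
  rcases Nat.lt_or_ge i1.val i2.val with h | h
  · have := hx _ _ h i2.isLt; omega
  · have h' : i2.val < i1.val := by omega
    have := hx _ _ h' i1.isLt; omega

end mkfunlemmas

noncomputable def equivSU (n p : ℕ) :
    {f : Fin n → Option (Fin n) //
        PInj f ∧ Contr f ∧ OrdPres f ∧ OrdDecr f ∧ pheight f = p} ≃ Ugood n p where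
  toFun s :=
    ⟨(SUx n p s.1 ((pdom_card_eq s.2.1).trans s.2.2.2.2.2),
      SUy n p s.1 ((pdom_card_eq s.2.1).trans s.2.2.2.2.2)),
      SUx_strict _, SUy_strict _ s.2.1 s.2.2.2.1, SUyx _ s.2.2.2.2.1,
      SUcontr _ s.2.2.1 s.2.2.2.1, SUx_lt _, SUx_junk _, SUy_junk _⟩
  invFun u := by
    obtain ⟨⟨x, y⟩, hx, hy, hyx, hg, hxn, hx0, hy0⟩ := u
    dsimp only at hx hy hyx hg hxn hx0 hy0
    have hb : ∀ i, i < p → y i < n := fun i hi => lt_of_le_of_lt (hyx i hi) (hxn i hi)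
    refine ⟨mkfun n p x y hb, ?_, ?_, ?_, ?_, ?_⟩
    · -- PInj
      intro z1 z2 a hz1 hz2
      obtain ⟨i1, hi1, hxi1, hyi1⟩ := mkfun_some_iff hz1
      obtain ⟨i2, hi2, hxi2, hyi2⟩ := mkfun_some_iff hz2
      have : i1 = i2 := by
        by_contra hne
        rcases Nat.lt_or_ge i1 i2 with h | h
        · have := hy _ _ h hi2; omega
        · have h' : i2 < i1 := by omega
          have := hy _ _ h' hi1; omega
      subst this
      apply Fin.ext
      omega
    · -- Contr
      intro z1 z2 a b hz1 hz2
      obtain ⟨i1, hi1, hxi1, hyi1⟩ := mkfun_some_iff hz1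
      obtain ⟨i2, hi2, hxi2, hyi2⟩ := mkfun_some_iff hz2
      rcases Nat.le_total i1 i2 with h | h
      · have hxm := nmono hx i1 i2 h hi2
        have hym := nmono hy i1 i2 h hi2
        have hgg := hg i1 i2 h hi2
        rcases abs_cases ((a.val : ℤ) - (b.val : ℤ)) with ⟨ha1, ha2⟩ | ⟨ha1, ha2⟩ <;>
          rcases abs_cases ((z1.val : ℤ) - (z2.val : ℤ)) with ⟨hb1, hb2⟩ | ⟨hb1, hb2⟩ <;>
          rw [ha1, hb1] <;> omega
      · have hxm := nmono hx i2 i1 h hi1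
        have hym := nmono hy i2 i1 h hi1
        have hgg := hg i2 i1 h hi1
        rcases abs_cases ((a.val : ℤ) - (b.val : ℤ)) with ⟨ha1, ha2⟩ | ⟨ha1, ha2⟩ <;>
          rcases abs_cases ((z1.val : ℤ) - (z2.val : ℤ)) with ⟨hb1, hb2⟩ | ⟨hb1, hb2⟩ <;>
          rw [ha1, hb1] <;> omega
    · -- OrdPres
      intro z1 z2 a b hz1 hz2 hle
      obtain ⟨i1, hi1, hxi1, hyi1⟩ := mkfun_some_iff hz1
      obtain ⟨i2, hi2, hxi2, hyi2⟩ := mkfun_some_iff hz2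
      have hle' : z1.val ≤ z2.val := Fin.le_def.mp hle
      have h12 : i1 ≤ i2 := by
        by_contra h'
        have := hx i2 i1 (by omega) hi1
        omega
      have := nmono hy i1 i2 h12 hi2
      exact Fin.le_def.mpr (by omega)
    · -- OrdDecr
      intro z a hz
      obtain ⟨i, hi, hxi, hyi⟩ := mkfun_some_iff hz
      have := hyx i hi
      exact Fin.le_def.mpr (by omega)
    · -- pheight
      show pheight (mkfun n p x y hb) = p
      unfold pheight
      have him : pim (mkfun n p x y hb) =
          Finset.image (fun i : Fin p => (⟨y i.val, hb _ i.isLt⟩ : Fin n)) Finset.univ := by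
        ext b
        simp only [pim, Finset.mem_filter, Finset.mem_univ, true_and, Finset.mem_image]
        constructor
        · rintro ⟨z, hz⟩
          obtain ⟨i, hi, hxi, hyi⟩ := mkfun_some_iff hz
          exact ⟨⟨i, hi⟩, Fin.ext hyi⟩
        · rintro ⟨i, hi⟩
          refine ⟨⟨x i.val, hxn _ i.isLt⟩, ?_⟩
          rw [mkfun_eq_some hx i.isLt rfl, ← hi]
      rw [him, Finset.card_image_of_injective _ ?_, Finset.card_univ, Fintype.card_fin]
      intro i1 i2 he
      have hvv : y i1.val = y i2.val := congrArg Fin.val he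
      apply Fin.ext
      by_contra hne
      rcases Nat.lt_or_ge i1.val i2.val with h | h
      · have := hy _ _ h i2.isLt; omega
      · have h' : i2.val < i1.val := by omega
        have := hy _ _ h' i1.isLt; omega
  left_inv := by
    rintro ⟨f, h1, h2, h3, h4, h5⟩
    apply Subtype.ext
    have hD : (pdom f).card = p := (pdom_card_eq h1).trans h5
    show mkfun n p (SUx n p f hD) (SUy n p f hD)
      (fun i hi => lt_of_le_of_lt (SUyx hD h4 i hi) (SUx_lt hD i hi)) = f
    funext z
    cases hfz : f z with
    | none =>
      apply mkfun_none
      rintro ⟨i, hi, hxi⟩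
      unfold SUx at hxi
      rw [dif_pos hi] at hxi
      have heq : (pdom f).orderEmbOfFin hD ⟨i, hi⟩ = z := Fin.ext hxi
      have hzs := isSome_of_mem_pdom (heq ▸ Finset.orderEmbOfFin_mem (pdom f) hD ⟨i, hi⟩)
      rw [hfz] at hzs
      cases hzs
    | some a =>
      have hzmem : z ∈ pdom f := mem_pdom_of_isSome (by rw [hfz]; rfl)
      have hrange : z ∈ Set.range ((pdom f).orderEmbOfFin hD) := by
        rw [Finset.range_orderEmbOfFin]
        exact_mod_cast hzmem
      obtain ⟨i0, hi0⟩ := hrange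
      have hxi : SUx n p f hD i0.val = z.val := by
        unfold SUx
        rw [dif_pos i0.isLt, Fin.eta, hi0]
      rw [mkfun_eq_some (SUx_strict hD) i0.isLt hxi]
      congr 1
      apply Fin.ext
      show SUy n p f hD i0.val = a.val
      exact SUy_val i0.isLt (by rw [Fin.eta]; exact hi0) hfz
  right_inv := by
    rintro ⟨⟨x, y⟩, hx, hy, hyx, hg, hxn, hx0, hy0⟩
    dsimp only at hx hy hyx hg hxn hx0 hy0
    apply Subtype.ext
    have hb' : ∀ i, i < p → y i < n := fun i hi => lt_of_le_of_lt (hyx i hi) (hxn i hi)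
    show (SUx n p (mkfun n p x y hb') (pdom_mkfun_card hx hxn),
        SUy n p (mkfun n p x y hb') (pdom_mkfun_card hx hxn)) = (x, y)
    rw [SUx_mkfun hx hxn hx0, SUy_mkfun hx hxn hy0]

/-- The number of elements of `ODCI_n` of height `p` equals `C(n+p, 2p)`. -/
theorem ODCI_count_of_height (n p : ℕ) :
    Nat.card {f : Fin n → Option (Fin n) //
        PInj f ∧ Contr f ∧ OrdPres f ∧ OrdDecr f ∧ pheight f = p} =
      (n + p).choose (2 * p) := by
  rw [Nat.card_congr (equivSU n p), Nat.card_congr (equivUT n p), card_Tgood]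
end UT
end
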